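/- arXiv:1508.06253 — 6 statements merged into one kernel-verified Lean document; each statement's English description precedes it below -/
import Mathlib

section
/- Let σ : [0,1] → (0,∞) be a left-continuous step function, let J(s) = ∫₀ˢ σ²(r) dr, and let Ĵ denote the concave hull of J on [0,1] (the pointwise infimum of all concave functions on [0,1] dominating J). Then there exists a unique non-increasing left-continuous step function σ̄ : (0,1] → (0,∞) such that Ĵ(s) = ∫₀ˢ σ̄²(r) dr for all s ∈ (0,1]. -/
open MeasureTheory Set

noncomputable section

/-- A left-continuous step function on `(a, b]`: there is a finite partition
`a = t₀ < t₁ < ... < tₙ = b` such that `f` is constant on each `(tᵢ₋₁, tᵢ]`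
(equal to its value at the right endpoint). -/
def IsLCStep (f : ℝ → ℝ) (a b : ℝ) : Prop :=
  ∃ (n : ℕ) (t : Fin (n + 1) → ℝ), StrictMono t ∧ t 0 = a ∧ t (Fin.last n) = b ∧
    ∀ i : Fin n, ∀ x ∈ Set.Ioc (t i.castSucc) (t i.succ), f x = f (t i.succ)

/-- locate the piece containing s, ℕ-indexed -/
lemma exists_piece_nat (x : ℕ → ℝ) (M : ℕ) (hx : ∀ i, i ≤ M → ∀ j, j ≤ M → i < j → x i < x j)
    {s : ℝ} (h1 : x 0 < s) (h2 : s ≤ x M) :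
    ∃ j, j < M ∧ x j < s ∧ s ≤ x (j + 1) := by
  have hM : 0 < M := by
    by_contra h
    push_neg at h
    interval_cases M
    exact absurd (lt_of_lt_of_le h1 h2) (lt_irrefl _)
  set F : Finset ℕ := (Finset.range M).filter (fun j => x j < s) with hF
  have h0F : 0 ∈ F := by simp [hF, hM, h1]
  obtain ⟨j, hjF, hjmax⟩ := F.exists_max_image id ⟨0, h0F⟩
  simp only [hF, Finset.mem_filter, Finset.mem_range] at hjF
  refine ⟨j, hjF.1, hjF.2, ?_⟩
  by_contra h
  push_neg at h
  have hj1 : j + 1 < M ∨ j + 1 = M := by omega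
  rcases hj1 with hj1 | hj1
  · have hmem : j + 1 ∈ F := by simp [hF, hj1, h]
    have := hjmax _ hmem
    simp at this
  · rw [hj1] at h
    linarith

lemma integral_eq_const (f : ℝ → ℝ) {a b c : ℝ} (hab : a ≤ b)
    (h : ∀ x ∈ Set.Ioc a b, f x = c) : ∫ x in a..b, f x = c * (b - a) := by
  rw [intervalIntegral.integral_of_le hab,
    MeasureTheory.setIntegral_congr_fun measurableSet_Ioc (fun x hx => h x hx)]
  rw [MeasureTheory.setIntegral_const, measureReal_def, Real.volume_Ioc, smul_eq_mul,
    ENNReal.toReal_ofReal (sub_nonneg.mpr hab)]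
  ring

lemma exists_piece_fin {n : ℕ} (t : Fin (n + 1) → ℝ) (ht : StrictMono t) {s : ℝ}
    (h1 : t 0 < s) (h2 : s ≤ t (Fin.last n)) :
    ∃ i : Fin n, t i.castSucc < s ∧ s ≤ t i.succ := by
  set x : ℕ → ℝ := fun j => t ⟨min j n, by omega⟩ with hx
  have hxt : ∀ j : Fin (n+1), x j.1 = t j := by
    intro j; simp only [hx]; congr 1; ext; simp [Nat.min_eq_left (Nat.lt_succ_iff.mp j.2)]
  have hmono : ∀ i, i ≤ n → ∀ j, j ≤ n → i < j → x i < x j := by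
    intro i hi j hj hij
    exact ht (by simp only [Fin.mk_lt_mk]; omega)
  have h1' : x 0 < s := by have := hxt 0; simp only [Fin.val_zero] at this; rw [this]; exact h1
  have h2' : s ≤ x n := by rw [show x n = t (Fin.last n) from hxt (Fin.last n)]; exact h2
  obtain ⟨j, hj, hjs, hjs'⟩ := exists_piece_nat x n hmono h1' h2'
  refine ⟨⟨j, hj⟩, ?_, ?_⟩
  · rw [← hxt]; exact hjs
  · rw [← hxt]; exact hjs'

/-- A function constant on the pieces of a partition is integrable. -/
lemma integrableOn_pieces {n : ℕ} (t : Fin (n + 1) → ℝ) (ht : StrictMono t) (f : ℝ → ℝ)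
    (hf : ∀ i : Fin n, ∀ x ∈ Set.Ioc (t i.castSucc) (t i.succ), f x = f (t i.succ)) :
    IntegrableOn f (Set.Ioc (t 0) (t (Fin.last n))) := by
  have hsub : Set.Ioc (t 0) (t (Fin.last n)) ⊆ ⋃ i : Fin n, Set.Ioc (t i.castSucc) (t i.succ) := by
    intro s hs
    obtain ⟨i, h1, h2⟩ := exists_piece_fin t ht hs.1 hs.2
    exact Set.mem_iUnion.mpr ⟨i, h1, h2⟩
  refine MeasureTheory.IntegrableOn.mono_set ?_ hsub
  refine MeasureTheory.integrableOn_finite_iUnion.mpr (fun i => ?_)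
  have : IntegrableOn (fun _ => f (t i.succ)) (Set.Ioc (t i.castSucc) (t i.succ)) := by
    apply (integrableOn_const_iff).mpr
    right; rw [Real.volume_Ioc]; exact ENNReal.ofReal_lt_top
  exact this.congr_fun (fun x hx => (hf i x hx).symm) measurableSet_Ioc

lemma affine_nonneg {p q a b u : ℝ} (hau : a ≤ u) (hub : u ≤ b)
    (ha : 0 ≤ p + q * a) (hb : 0 ≤ p + q * b) : 0 ≤ p + q * u := by
  rcases le_or_gt 0 q with hq | hq
  · nlinarith
  · nlinarith


section Hull
variable (M : ℕ) (x y : ℕ → ℝ)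

/-- slope of chord -/
def slp (a b : ℕ) : ℝ := (y b - y a) / (x b - x a)

def argset (a : ℕ) : Finset ℕ :=
  (Finset.Ioc a M).filter (fun b => ∀ j ∈ Finset.Ioc a M, slp x y a j ≤ slp x y a b)

lemma argset_nonempty {a : ℕ} (h : a < M) : (argset M x y a).Nonempty := by
  obtain ⟨b, hb, hmax⟩ := (Finset.Ioc a M).exists_max_image (slp x y a)
    ⟨M, Finset.mem_Ioc.mpr ⟨h, le_rfl⟩⟩
  exact ⟨b, Finset.mem_filter.mpr ⟨hb, hmax⟩⟩

def nxt (a : ℕ) : ℕ :=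
  if h : a < M then (argset M x y a).max' (argset_nonempty M x y h) else M

lemma nxt_mem {a : ℕ} (h : a < M) : nxt M x y a ∈ argset M x y a := by
  rw [nxt, dif_pos h]; exact Finset.max'_mem _ _

lemma nxt_gt {a : ℕ} (h : a < M) : a < nxt M x y a := by
  have := nxt_mem M x y h
  rw [argset, Finset.mem_filter, Finset.mem_Ioc] at this
  exact this.1.1

lemma nxt_le (a : ℕ) : nxt M x y a ≤ M := by
  by_cases h : a < M
  · have := nxt_mem M x y h
    rw [argset, Finset.mem_filter, Finset.mem_Ioc] at this
    exact this.1.2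
  · rw [nxt, dif_neg h]

lemma nxt_max {a : ℕ} (h : a < M) {j : ℕ} (hj1 : a < j) (hj2 : j ≤ M) :
    slp x y a j ≤ slp x y a (nxt M x y a) := by
  have := nxt_mem M x y h
  rw [argset, Finset.mem_filter] at this
  exact this.2 j (Finset.mem_Ioc.mpr ⟨hj1, hj2⟩)

/-- the chain of contact indices -/
def ch : ℕ → ℕ := fun k => Nat.rec 0 (fun _ p => nxt M x y p) k

@[simp] lemma ch_zero : ch M x y 0 = 0 := rfl
lemma ch_succ (k : ℕ) : ch M x y (k + 1) = nxt M x y (ch M x y k) := rfl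

lemma ch_le (hM : 0 < M) (k : ℕ) : ch M x y k ≤ M := by
  induction k with
  | zero => simpa using hM.le
  | succ k ih => rw [ch_succ]; exact nxt_le M x y _

lemma ch_reaches : ∃ k, ch M x y k = M := by
  rcases Nat.eq_zero_or_pos M with h | hM
  · exact ⟨0, by simp [h]⟩
  have key : ∀ k, k ≤ ch M x y k ∨ ch M x y k = M := by
    intro k
    induction k with
    | zero => left; simp
    | succ k ih =>
      rcases ih with ih | ih
      · by_cases h : ch M x y k < M
        · left; rw [ch_succ]; have := nxt_gt M x y h; omega
        · right
          have := ch_le M x y hM k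
          have hEq : ch M x y k = M := by omega
          rw [ch_succ, hEq, nxt, dif_neg (lt_irrefl M)]
      · right; rw [ch_succ, ih, nxt, dif_neg (lt_irrefl M)]
    
  rcases key M with h | h
  · exact ⟨M, le_antisymm (ch_le M x y hM M) h⟩
  · exact ⟨M, h⟩

/-- number of hull pieces -/
def KK : ℕ := Nat.find (ch_reaches M x y)

lemma ch_KK : ch M x y (KK M x y) = M := Nat.find_spec (ch_reaches M x y)

lemma ch_lt_M (hM : 0 < M) {k : ℕ} (hk : k < KK M x y) : ch M x y k < M := by
  have h1 := Nat.find_min (ch_reaches M x y) hk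
  have h2 := ch_le M x y hM k
  omega

lemma KK_pos (hM : 0 < M) : 0 < KK M x y := by
  rcases Nat.eq_zero_or_pos (KK M x y) with h | h
  · have := ch_KK M x y; rw [h] at this; simp at this; omega
  · exact h

lemma ch_lt_succ (hM : 0 < M) {k : ℕ} (hk : k < KK M x y) :
    ch M x y k < ch M x y (k + 1) := by
  rw [ch_succ]; exact nxt_gt M x y (ch_lt_M M x y hM hk)

lemma ch_strict (hM : 0 < M) {k k' : ℕ} (hkk : k < k') (hk' : k' ≤ KK M x y) :
    ch M x y k < ch M x y k' := by
  induction k' with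
  | zero => omega
  | succ k' ih =>
    rcases Nat.lt_or_ge k k' with h | h
    · exact lt_trans (ih h (by omega)) (ch_lt_succ M x y hM (by omega))
    · have : k = k' := by omega
      subst this
      exact ch_lt_succ M x y hM (by omega)

lemma ch_mono (hM : 0 < M) {k k' : ℕ} (hkk : k ≤ k') (hk' : k' ≤ KK M x y) :
    ch M x y k ≤ ch M x y k' := by
  rcases Nat.lt_or_ge k k' with h | h
  · exact (ch_strict M x y hM h hk').le
  · have : k = k' := by omega
    simp [this]

section Slopes
variable (M : ℕ) (x y : ℕ → ℝ)

lemma xlt (hxs : ∀ i, i < M → x i < x (i + 1)) {a b : ℕ} (hab : a < b) (hb : b ≤ M) :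
    x a < x b := by
  induction b with
  | zero => omega
  | succ b ih =>
    rcases Nat.lt_or_ge a b with h | h
    · exact lt_trans (ih h (by omega)) (hxs b (by omega))
    · have : a = b := by omega
      subst this
      exact hxs a (by omega)

lemma xle (hxs : ∀ i, i < M → x i < x (i + 1)) {a b : ℕ} (hab : a ≤ b) (hb : b ≤ M) :
    x a ≤ x b := by
  rcases Nat.lt_or_ge a b with h | h
  · exact (xlt M x hxs h hb).le
  · have : a = b := by omega
    simp [this]

lemma slp_nxt_eq (hxs : ∀ i, i < M → x i < x (i + 1)) {a : ℕ} (h : a < M) :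
    y (nxt M x y a) = y a + slp x y a (nxt M x y a) * (x (nxt M x y a) - x a) := by
  have hgt := nxt_gt M x y h
  have hle := nxt_le M x y a
  have hx : x a < x (nxt M x y a) := xlt M x hxs hgt hle
  rw [slp, div_mul_cancel₀ _ (by linarith)]
  ring

lemma dominate (hxs : ∀ i, i < M → x i < x (i + 1)) {a : ℕ} (h : a < M) {j : ℕ}
    (hj1 : a ≤ j) (hj2 : j ≤ M) :
    y j ≤ y a + slp x y a (nxt M x y a) * (x j - x a) := by
  rcases Nat.lt_or_ge a j with hj | hj
  · have hx : x a < x j := xlt M x hxs hj hj2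
    have hs := nxt_max M x y h hj hj2
    rw [slp, div_le_iff₀ (by linarith)] at hs
    linarith
  · have : j = a := by omega
    subst this
    simp

lemma slp_nxt_pos (hxs : ∀ i, i < M → x i < x (i + 1)) (hys : ∀ i, i < M → y i < y (i + 1))
    {a : ℕ} (h : a < M) : 0 < slp x y a (nxt M x y a) := by
  have h1 : 0 < slp x y a (a + 1) := by
    rw [slp]
    apply div_pos <;> [skip; skip] <;>
      simp only [sub_pos] <;> [exact hys a h; exact hxs a h]
  exact lt_of_lt_of_le h1 (nxt_max M x y h (by omega) (by omega))

lemma slp_anti_step (hxs : ∀ i, i < M → x i < x (i + 1)) {a : ℕ} (ha : a < M)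
    (hb : nxt M x y a < M) :
    slp x y (nxt M x y a) (nxt M x y (nxt M x y a)) ≤ slp x y a (nxt M x y a) := by
  set b := nxt M x y a with hbdef
  set c := nxt M x y b with hcdef
  have hab : a < b := nxt_gt M x y ha
  have hbc : b < c := nxt_gt M x y hb
  have hcM : c ≤ M := nxt_le M x y b
  have hyc : y c ≤ y a + slp x y a b * (x c - x a) := dominate M x y hxs ha (by omega) hcM
  have hyb : y b = y a + slp x y a b * (x b - x a) := slp_nxt_eq M x y hxs ha
  have hxbc : x b < x c := xlt M x hxs hbc hcM
  rw [slp, div_le_iff₀ (by linarith)]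
  linarith

/-- slopes of the hull pieces -/
def sl (k : ℕ) : ℝ := slp x y (ch M x y k) (ch M x y (k + 1))

lemma sl_pos (hM : 0 < M) (hxs : ∀ i, i < M → x i < x (i + 1))
    (hys : ∀ i, i < M → y i < y (i + 1)) {k : ℕ} (hk : k < KK M x y) : 0 < sl M x y k :=
  slp_nxt_pos M x y hxs hys (ch_lt_M M x y hM hk)

lemma sl_anti (hM : 0 < M) (hxs : ∀ i, i < M → x i < x (i + 1))
    {k k' : ℕ} (hkk : k ≤ k') (hk' : k' < KK M x y) : sl M x y k' ≤ sl M x y k := by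
  induction k' with
  | zero => have : k = 0 := by omega
            simp [this]
  | succ k' ih =>
    rcases Nat.lt_or_ge k (k' + 1) with h | h
    · refine le_trans ?_ (ih (by omega) (by omega))
      exact slp_anti_step M x y hxs (ch_lt_M M x y hM (by omega)) (ch_lt_M M x y hM hk')
    · have : k = k' + 1 := by omega
      simp [this]

lemma sl_node (hM : 0 < M) (hxs : ∀ i, i < M → x i < x (i + 1)) {k : ℕ} (hk : k < KK M x y) :
    y (ch M x y (k + 1)) = y (ch M x y k) + sl M x y k * (x (ch M x y (k + 1)) - x (ch M x y k)) := by
  rw [sl, ch_succ]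
  exact slp_nxt_eq M x y hxs (ch_lt_M M x y hM hk)

/-- piece index of a point -/
def pc (s : ℝ) : ℕ :=
  Nat.find (⟨KK M x y, Or.inr (by omega)⟩ : ∃ k, s ≤ x (ch M x y (k + 1)) ∨ KK M x y ≤ k + 1)

lemma pc_lt (hM : 0 < M) (s : ℝ) : pc M x y s < KK M x y := by
  have hK := KK_pos M x y hM
  have h : pc M x y s ≤ KK M x y - 1 :=
    Nat.find_min' _ (Or.inr (by omega) :
      s ≤ x (ch M x y (KK M x y - 1 + 1)) ∨ KK M x y ≤ KK M x y - 1 + 1)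
  omega

lemma pc_eq (hM : 0 < M) (hxs : ∀ i, i < M → x i < x (i + 1)) {k : ℕ} (hk : k < KK M x y)
    {s : ℝ} (hs : x (ch M x y k) < s) (hs' : s ≤ x (ch M x y (k + 1))) : pc M x y s = k := by
  rw [pc, Nat.find_eq_iff]
  refine ⟨Or.inl hs', fun j hj => ?_⟩
  push_neg
  constructor
  · have hle : x (ch M x y (j + 1)) ≤ x (ch M x y k) :=
      xle M x hxs (ch_mono M x y hM (by omega) hk.le) (ch_le M x y hM k)
    linarith
  · omega

lemma pc_mono {s s' : ℝ} (hss : s ≤ s') : pc M x y s ≤ pc M x y s' := by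
  rw [pc]
  apply Nat.find_le
  have := Nat.find_spec (⟨KK M x y, Or.inr (by omega)⟩ :
    ∃ k, s' ≤ x (ch M x y (k + 1)) ∨ KK M x y ≤ k + 1)
  rcases this with h | h
  · exact Or.inl (le_trans hss h)
  · exact Or.inr h

/-- the effective volatility -/
def σb (s : ℝ) : ℝ := Real.sqrt (sl M x y (pc M x y s))

lemma σb_sq (hM : 0 < M) (hxs : ∀ i, i < M → x i < x (i + 1))
    (hys : ∀ i, i < M → y i < y (i + 1)) (s : ℝ) :
    σb M x y s ^ 2 = sl M x y (pc M x y s) :=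
  Real.sq_sqrt (sl_pos M x y hM hxs hys (pc_lt M x y hM s)).le

lemma σb_sq_anti (hM : 0 < M) (hxs : ∀ i, i < M → x i < x (i + 1))
    (hys : ∀ i, i < M → y i < y (i + 1)) {s s' : ℝ} (hss : s ≤ s') :
    σb M x y s' ^ 2 ≤ σb M x y s ^ 2 := by
  rw [σb_sq M x y hM hxs hys, σb_sq M x y hM hxs hys]
  exact sl_anti M x y hM hxs (pc_mono M x y hss) (pc_lt M x y hM s')

lemma σb_anti (hM : 0 < M) (hxs : ∀ i, i < M → x i < x (i + 1)) {s s' : ℝ} (hss : s ≤ s') :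
    σb M x y s' ≤ σb M x y s :=
  Real.sqrt_le_sqrt (sl_anti M x y hM hxs (pc_mono M x y hss) (pc_lt M x y hM s'))

lemma σb_pos (hM : 0 < M) (hxs : ∀ i, i < M → x i < x (i + 1))
    (hys : ∀ i, i < M → y i < y (i + 1)) (s : ℝ) : 0 < σb M x y s :=
  Real.sqrt_pos.mpr (sl_pos M x y hM hxs hys (pc_lt M x y hM s))

end Slopes
section GFun
variable (M : ℕ) (x y : ℕ → ℝ)
variable (hM : 0 < M) (hxs : ∀ i, i < M → x i < x (i + 1))
  (hys : ∀ i, i < M → y i < y (i + 1)) (hx0 : x 0 = 0) (hxM : x M = 1)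
include hM hxs hys hx0 hxM

/-- partition points of the hull -/
def tf : Fin (KK M x y + 1) → ℝ := fun k => x (ch M x y k.1)

lemma tf_strict : StrictMono (tf M x y) := by
  intro a b hab
  exact xlt M x hxs (ch_strict M x y hM hab (Nat.lt_succ_iff.mp b.2))
    (ch_le M x y hM _)

lemma tf_zero : tf M x y 0 = 0 := by simp [tf, hx0]

lemma tf_last : tf M x y (Fin.last (KK M x y)) = 1 := by
  simp [tf, Fin.last, ch_KK, hxM]

lemma σb_const_piece {k : ℕ} (hk : k < KK M x y) {r : ℝ}
    (hr : r ∈ Set.Ioc (x (ch M x y k)) (x (ch M x y (k + 1)))) :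
    σb M x y r = Real.sqrt (sl M x y k) := by
  rw [σb, pc_eq M x y hM hxs hk hr.1 hr.2]

lemma isLCStep_σb : IsLCStep (σb M x y) 0 1 := by
  refine ⟨KK M x y, tf M x y, tf_strict M x y hM hxs hys hx0 hxM, tf_zero M x y hM hxs hys hx0 hxM,
    tf_last M x y hM hxs hys hx0 hxM, fun i r hr => ?_⟩
  have hi : i.1 < KK M x y := i.2
  have h1 : (tf M x y i.castSucc) = x (ch M x y i.1) := rfl
  have h2 : (tf M x y i.succ) = x (ch M x y (i.1 + 1)) := rfl
  rw [h1, h2] at hr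
  rw [h2, σb_const_piece M x y hM hxs hys hx0 hxM hi hr,
    σb_const_piece M x y hM hxs hys hx0 hxM hi
      (⟨xlt M x hxs (ch_lt_succ M x y hM hi) (ch_le M x y hM _), le_rfl⟩ :
        x (ch M x y (i.1 + 1)) ∈ Set.Ioc (x (ch M x y i.1)) (x (ch M x y (i.1 + 1))))]

lemma integrableOn_σb_sq :
    IntegrableOn (fun r => σb M x y r ^ 2) (Set.Ioc (0:ℝ) 1) := by
  obtain ⟨n, t, ht, h0, h1, hc⟩ := isLCStep_σb M x y hM hxs hys hx0 hxM
  have := integrableOn_pieces t ht (fun r => σb M x y r ^ 2)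
    (fun i r hr => by rw [hc i r hr])
  rwa [h0, h1] at this

lemma iiσ {u v : ℝ} (h0 : 0 ≤ u) (huv : u ≤ v) (hv : v ≤ 1) :
    IntervalIntegrable (fun r => σb M x y r ^ 2) volume u v := by
  rw [intervalIntegrable_iff_integrableOn_Ioc_of_le huv]
  exact (integrableOn_σb_sq M x y hM hxs hys hx0 hxM).mono_set
    (Set.Ioc_subset_Ioc h0 hv)

/-- the candidate concave hull -/
def Gf : ℝ → ℝ := fun s => ∫ r in (0:ℝ)..s, σb M x y r ^ 2

lemma x_ch_nonneg (k : ℕ) : 0 ≤ x (ch M x y k) := by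
  rw [← hx0]
  rcases Nat.eq_zero_or_pos (ch M x y k) with h | h
  · simp [h]
  · exact (xlt M x hxs h (ch_le M x y hM k)).le

lemma x_ch_le_one (k : ℕ) : x (ch M x y k) ≤ 1 := by
  rw [← hxM]
  exact xle M x hxs (ch_le M x y hM k) le_rfl

lemma G_piece' {k : ℕ} (hk : k < KK M x y) {s : ℝ} (hs : x (ch M x y k) ≤ s)
    (hs' : s ≤ x (ch M x y (k + 1))) :
    Gf M x y s = Gf M x y (x (ch M x y k)) + sl M x y k * (s - x (ch M x y k)) := by
  have h0 : (0:ℝ) ≤ x (ch M x y k) := x_ch_nonneg M x y hM hxs hys hx0 hxM k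
  have h1 : s ≤ 1 := le_trans hs' (x_ch_le_one M x y hM hxs hys hx0 hxM (k+1))
  have hadd := intervalIntegral.integral_add_adjacent_intervals
    (iiσ M x y hM hxs hys hx0 hxM le_rfl h0 (by linarith))
    (iiσ M x y hM hxs hys hx0 hxM h0 hs h1)
  have hconst : ∫ r in (x (ch M x y k))..s, σb M x y r ^ 2 = sl M x y k * (s - x (ch M x y k)) := by
    apply integral_eq_const _ hs
    intro r hr
    rw [σb_sq M x y hM hxs hys, pc_eq M x y hM hxs hk hr.1 (le_trans hr.2 hs')]
  rw [Gf, Gf, ← hadd, hconst]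

lemma G_node (hy0 : y 0 = 0) :
    ∀ k, k ≤ KK M x y → Gf M x y (x (ch M x y k)) = y (ch M x y k) := by
  intro k
  induction k with
  | zero =>
    intro _
    show Gf M x y (x (ch M x y 0)) = y (ch M x y 0)
    rw [ch_zero, hx0, hy0, Gf, intervalIntegral.integral_same]
  | succ k ih =>
    intro hk
    have hk' : k < KK M x y := by omega
    have := G_piece' M x y hM hxs hys hx0 hxM hk'
      (xlt M x hxs (ch_lt_succ M x y hM hk') (ch_le M x y hM _)).le le_rfl
    rw [this, ih hk'.le, sl_node M x y hM hxs hk']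

lemma G_concave : ConcaveOn ℝ (Set.Icc (0:ℝ) 1) (Gf M x y) := by
  apply concaveOn_of_slope_anti_adjacent (convex_Icc 0 1)
  intro u v w hu hw huv hvw
  have h0u : (0:ℝ) ≤ u := hu.1
  have hw1 : w ≤ 1 := hw.2
  have hsplit1 := intervalIntegral.integral_add_adjacent_intervals
    (iiσ M x y hM hxs hys hx0 hxM le_rfl (by linarith) (by linarith))
    (iiσ M x y hM hxs hys hx0 hxM (by linarith) hvw.le hw1)
  have hsplit2 := intervalIntegral.integral_add_adjacent_intervals
    (iiσ M x y hM hxs hys hx0 hxM le_rfl h0u (by linarith))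
    (iiσ M x y hM hxs hys hx0 hxM h0u huv.le (by linarith))
  have key1 : Gf M x y w - Gf M x y v ≤ σb M x y v ^ 2 * (w - v) := by
    have hle : ∫ r in v..w, σb M x y r ^ 2 ≤ ∫ _ in v..w, σb M x y v ^ 2 := by
      apply intervalIntegral.integral_mono_on hvw.le
        (iiσ M x y hM hxs hys hx0 hxM (by linarith) hvw.le hw1)
        intervalIntegrable_const
      intro r hr
      exact σb_sq_anti M x y hM hxs hys hr.1
    rw [intervalIntegral.integral_const, smul_eq_mul] at hle
    have : Gf M x y w - Gf M x y v = ∫ r in v..w, σb M x y r ^ 2 := by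
      rw [Gf, Gf, ← hsplit1]; ring
    rw [this]; linarith [hle]
  have key2 : σb M x y v ^ 2 * (v - u) ≤ Gf M x y v - Gf M x y u := by
    have hle : ∫ _ in u..v, σb M x y v ^ 2 ≤ ∫ r in u..v, σb M x y r ^ 2 := by
      apply intervalIntegral.integral_mono_on huv.le intervalIntegrable_const
        (iiσ M x y hM hxs hys hx0 hxM h0u huv.le (by linarith))
      intro r hr
      exact σb_sq_anti M x y hM hxs hys hr.2
    rw [intervalIntegral.integral_const, smul_eq_mul] at hle
    have : Gf M x y v - Gf M x y u = ∫ r in u..v, σb M x y r ^ 2 := by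
      rw [Gf, Gf, ← hsplit2]; ring
    rw [this]; linarith [hle]
  rw [div_le_div_iff₀ (by linarith) (by linarith)]
  nlinarith [mul_le_mul_of_nonneg_right key1 (by linarith : (0:ℝ) ≤ v - u),
    mul_le_mul_of_nonneg_right key2 (by linarith : (0:ℝ) ≤ w - v)]

lemma hull_piece {s : ℝ} (hs0 : 0 < s) (hs1 : s ≤ 1) :
    ∃ k, k < KK M x y ∧ x (ch M x y k) < s ∧ s ≤ x (ch M x y (k + 1)) := by
  apply exists_piece_nat (fun k => x (ch M x y k)) (KK M x y)
  · intro i hi j hj hij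
    exact xlt M x hxs (ch_strict M x y hM hij hj) (ch_le M x y hM j)
  · simpa [hx0] using hs0
  · simpa [ch_KK, hxM] using hs1

lemma G_dom (hy0 : y 0 = 0) (J : ℝ → ℝ) (hJ0 : J 0 = 0)
    (hyJ : ∀ i, i ≤ M → y i = J (x i))
    (hJlin : ∀ j, j < M → ∀ t ∈ Set.Ioc (x j) (x (j + 1)),
      J t = y j + slp x y j (j + 1) * (t - x j)) :
    ∀ t ∈ Set.Icc (0:ℝ) 1, J t ≤ Gf M x y t := by
  intro t ht
  rcases eq_or_lt_of_le ht.1 with h0 | h0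
  · rw [← h0, hJ0]
    have : Gf M x y 0 = 0 := by rw [Gf, intervalIntegral.integral_same]
    rw [this]
  obtain ⟨k, hk, hks, hks'⟩ := hull_piece M x y hM hxs hys hx0 hxM h0 ht.2
  obtain ⟨j, hjM, hj1, hj2⟩ := exists_piece_nat x M
    (fun i hi j' hj' hij => xlt M x hxs hij hj')
    (by rw [hx0]; exact h0) (by rw [hxM]; exact ht.2)
  -- ch k ≤ j
  have hchkj : ch M x y k ≤ j := by
    by_contra hcon
    push_neg at hcon
    have : x (j + 1) ≤ x (ch M x y k) := xle M x hxs (by omega) (ch_le M x y hM k)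
    linarith
  have hsl : sl M x y k = slp x y (ch M x y k) (nxt M x y (ch M x y k)) := by
    rw [sl, ch_succ]
  have hchM : ch M x y k < M := ch_lt_M M x y hM hk
  have E1 : y j ≤ y (ch M x y k) + sl M x y k * (x j - x (ch M x y k)) := by
    rw [hsl]; exact dominate M x y hxs hchM hchkj (by omega)
  have E2 : y (j + 1) ≤ y (ch M x y k) + sl M x y k * (x (j + 1) - x (ch M x y k)) := by
    rw [hsl]; exact dominate M x y hxs hchM (by omega) (by omega)
  have hxj : x j < x (j + 1) := hxs j hjM
  have yj1 : y (j + 1) = y j + slp x y j (j + 1) * (x (j + 1) - x j) := by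
    rw [slp, div_mul_cancel₀ _ (by linarith)]; ring
  have hJt : J t = y j + slp x y j (j + 1) * (t - x j) := hJlin j hjM t ⟨hj1, hj2⟩
  set q := slp x y j (j + 1) with hq
  set c := sl M x y k with hc
  have haff : 0 ≤ (y (ch M x y k) - c * x (ch M x y k) - y j + q * x j) + (c - q) * t := by
    apply affine_nonneg (le_of_lt hj1) hj2
    · nlinarith [E1]
    · nlinarith [E2, yj1]
  have hGt : Gf M x y t = y (ch M x y k) + c * (t - x (ch M x y k)) := by
    rw [G_piece' M x y hM hxs hys hx0 hxM hk hks.le hks',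
      G_node M x y hM hxs hys hx0 hxM hy0 k hk.le]
  rw [hGt, hJt]
  nlinarith [haff]

lemma G_least (hy0 : y 0 = 0) (J : ℝ → ℝ)
    (hyJ : ∀ i, i ≤ M → y i = J (x i))
    {g : ℝ → ℝ} (hg : ConcaveOn ℝ (Set.Icc (0:ℝ) 1) g)
    (hdom : ∀ t ∈ Set.Icc (0:ℝ) 1, J t ≤ g t)
    {s : ℝ} (hs : s ∈ Set.Ioc (0:ℝ) 1) : Gf M x y s ≤ g s := by
  obtain ⟨k, hk, hks, hks'⟩ := hull_piece M x y hM hxs hys hx0 hxM hs.1 hs.2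
  set u := x (ch M x y k) with hu
  set w := x (ch M x y (k + 1)) with hw
  have huw : u < w := lt_of_lt_of_le hks hks'
  have hwu : (0:ℝ) < w - u := by linarith
  set a := (w - s) / (w - u) with ha
  set b := (s - u) / (w - u) with hb
  have ha0 : 0 ≤ a := div_nonneg (by linarith) hwu.le
  have hb0 : 0 ≤ b := div_nonneg (by linarith) hwu.le
  have hab : a + b = 1 := by
    rw [ha, hb, ← add_div, show w - s + (s - u) = w - u by ring, div_self hwu.ne']
  have humem : u ∈ Set.Icc (0:ℝ) 1 :=
    ⟨x_ch_nonneg M x y hM hxs hys hx0 hxM k, x_ch_le_one M x y hM hxs hys hx0 hxM k⟩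
  have hwmem : w ∈ Set.Icc (0:ℝ) 1 :=
    ⟨x_ch_nonneg M x y hM hxs hys hx0 hxM (k+1), x_ch_le_one M x y hM hxs hys hx0 hxM (k+1)⟩
  have hcomb := hg.2 humem hwmem ha0 hb0 hab
  have hpt : a • u + b • w = s := by
    simp only [smul_eq_mul, ha, hb]
    field_simp
    ring
  rw [hpt] at hcomb
  have hgu : y (ch M x y k) ≤ g u := by
    rw [hyJ _ (ch_le M x y hM k)]; exact hdom u humem
  have hgw : y (ch M x y (k + 1)) ≤ g w := by
    rw [hyJ _ (ch_le M x y hM (k+1))]; exact hdom w hwmem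
  have hyw : y (ch M x y (k + 1)) = y (ch M x y k) + sl M x y k * (w - u) :=
    sl_node M x y hM hxs hk
  have hGs : Gf M x y s = y (ch M x y k) + sl M x y k * (s - u) := by
    rw [G_piece' M x y hM hxs hys hx0 hxM hk hks.le hks',
      G_node M x y hM hxs hys hx0 hxM hy0 k hk.le]
  have hcvx : Gf M x y s = a * y (ch M x y k) + b * y (ch M x y (k + 1)) := by
    rw [hGs, hyw, ha, hb]
    field_simp
    ring
  have : a * y (ch M x y k) + b * y (ch M x y (k + 1)) ≤ a * g u + b * g w := by
    have := mul_le_mul_of_nonneg_left hgu ha0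
    have := mul_le_mul_of_nonneg_left hgw hb0
    linarith
  simp only [smul_eq_mul] at hcomb
  linarith [hcvx ▸ this, hcomb]

end GFun

section Uniq

lemma integrableOn_sq_of_isLCStep {f : ℝ → ℝ} (hf : IsLCStep f 0 1) :
    IntegrableOn (fun r => f r ^ 2) (Set.Ioc (0:ℝ) 1) := by
  obtain ⟨n, t, ht, h0, h1, hc⟩ := hf
  have := integrableOn_pieces t ht (fun r => f r ^ 2)
    (fun i r hr => by rw [hc i r hr])
  rwa [h0, h1] at this

lemma lcstep_loc {f : ℝ → ℝ} (hf : IsLCStep f 0 1) {s : ℝ} (hs : s ∈ Set.Ioc (0:ℝ) 1) :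
    ∃ a, 0 ≤ a ∧ a < s ∧ ∀ r ∈ Set.Ioc a s, f r = f s := by
  obtain ⟨n, t, ht, h0, h1, hc⟩ := hf
  obtain ⟨i, hi1, hi2⟩ := exists_piece_fin t ht (h0 ▸ hs.1) (h1 ▸ hs.2)
  refine ⟨t i.castSucc, by rw [← h0]; exact ht.monotone (Fin.zero_le _), hi1, ?_⟩
  intro r hr
  rw [hc i r ⟨hr.1, le_trans hr.2 hi2⟩, hc i s ⟨hi1, hi2⟩]

lemma uniq_step {F τ ρ : ℝ → ℝ} (hτ : IsLCStep τ 0 1) (hρ : IsLCStep ρ 0 1)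
    (hτn : ∀ s ∈ Set.Ioc (0:ℝ) 1, 0 ≤ τ s) (hρn : ∀ s ∈ Set.Ioc (0:ℝ) 1, 0 ≤ ρ s)
    (hτF : ∀ s ∈ Set.Ioc (0:ℝ) 1, F s = ∫ r in (0:ℝ)..s, τ r ^ 2)
    (hρF : ∀ s ∈ Set.Ioc (0:ℝ) 1, F s = ∫ r in (0:ℝ)..s, ρ r ^ 2) :
    ∀ s ∈ Set.Ioc (0:ℝ) 1, τ s = ρ s := by
  intro s hs
  obtain ⟨a1, ha10, ha1s, ha1c⟩ := lcstep_loc hτ hs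
  obtain ⟨a2, ha20, ha2s, ha2c⟩ := lcstep_loc hρ hs
  set a := max a1 a2 with hadef
  have ha0 : 0 ≤ a := le_max_left a1 a2 |>.trans' ha10
  have has : a < s := max_lt ha1s ha2s
  set m := (a + s) / 2 with hm
  have hm0 : 0 < m := by
    have : 0 < s := hs.1
    simp only [hm]; linarith
  have hms : m < s := by simp only [hm]; linarith
  have ham : a < m := by simp only [hm]; linarith
  have hm1 : m ≤ 1 := le_trans hms.le hs.2
  have hmem : m ∈ Set.Ioc (0:ℝ) 1 := ⟨hm0, hm1⟩
  have key : ∀ (f : ℝ → ℝ), IsLCStep f 0 1 →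
      (∀ r ∈ Set.Ioc a s, f r = f s) →
      (∫ r in (0:ℝ)..s, f r ^ 2) - (∫ r in (0:ℝ)..m, f r ^ 2) = f s ^ 2 * (s - m) := by
    intro f hf hfc
    have hint := integrableOn_sq_of_isLCStep hf
    have ii1 : IntervalIntegrable (fun r => f r ^ 2) volume 0 m := by
      rw [intervalIntegrable_iff_integrableOn_Ioc_of_le hm0.le]
      exact hint.mono_set (Set.Ioc_subset_Ioc le_rfl hm1)
    have ii2 : IntervalIntegrable (fun r => f r ^ 2) volume m s := by
      rw [intervalIntegrable_iff_integrableOn_Ioc_of_le hms.le]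
      exact hint.mono_set (Set.Ioc_subset_Ioc hm0.le hs.2)
    have hadd := intervalIntegral.integral_add_adjacent_intervals ii1 ii2
    have hconst : ∫ r in m..s, f r ^ 2 = f s ^ 2 * (s - m) := by
      apply integral_eq_const _ hms.le
      intro r hr
      rw [hfc r ⟨lt_of_le_of_lt (le_of_lt ham) hr.1, hr.2⟩]
    rw [← hadd, hconst]; ring
  have hτkey := key τ hτ (fun r hr => ha1c r ⟨lt_of_le_of_lt (le_max_left a1 a2) hr.1, hr.2⟩)
  have hρkey := key ρ hρ (fun r hr => ha2c r ⟨lt_of_le_of_lt (le_max_right a1 a2) hr.1, hr.2⟩)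
  rw [← hτF s hs, ← hτF m hmem] at hτkey
  rw [← hρF s hs, ← hρF m hmem] at hρkey
  have hsq : τ s ^ 2 = ρ s ^ 2 := by
    have hsm : (0:ℝ) < s - m := by linarith
    have := hτkey.symm.trans hρkey
    exact mul_right_cancel₀ (by linarith) this
  have h1 := hτn s hs
  have h2 := hρn s hs
  nlinarith [hsq, h1, h2]

end Uniq
end Hull

/-- Existence and uniqueness of the effective variance `σ̄`: for a positive
left-continuous step function `σ` with `J(s) = ∫₀ˢ σ²`, and `Ĵ` the concave hull of `J`
on `[0,1]`, there is a unique non-increasing positive left-continuous step function `σ̄`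
on `(0,1]` with `Ĵ(s) = ∫₀ˢ σ̄²(r) dr` for all `s ∈ (0,1]`. -/
theorem stmt_2
    (M : ℕ) (hM : 0 < M)
    (lam : Fin (M + 1) → ℝ) (hlam : StrictMono lam) (hlam0 : lam 0 = 0)
    (hlam1 : lam (Fin.last M) = 1)
    (σv : Fin M → ℝ) (hσv : ∀ i, 0 < σv i)
    (σ : ℝ → ℝ) (hσ0 : σ 0 = σv ⟨0, hM⟩)
    (hσdef : ∀ i : Fin M, ∀ s ∈ Set.Ioc (lam i.castSucc) (lam i.succ), σ s = σv i)
    (J : ℝ → ℝ) (hJ : ∀ s, J s = ∫ r in (0:ℝ)..s, (σ r) ^ 2)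
    (hatJ : ℝ → ℝ)
    (hhatJ : ∀ s ∈ Set.Icc (0:ℝ) 1, hatJ s =
      sInf {y : ℝ | ∃ g : ℝ → ℝ, ConcaveOn ℝ (Set.Icc 0 1) g ∧
        (∀ t ∈ Set.Icc (0:ℝ) 1, J t ≤ g t) ∧ y = g s}) :
    ∃ σbar : ℝ → ℝ,
      (IsLCStep σbar 0 1 ∧ AntitoneOn σbar (Set.Ioc 0 1) ∧
        (∀ s ∈ Set.Ioc (0:ℝ) 1, 0 < σbar s) ∧
        (∀ s ∈ Set.Ioc (0:ℝ) 1, hatJ s = ∫ r in (0:ℝ)..s, (σbar r) ^ 2)) ∧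
      ∀ τ : ℝ → ℝ,
        (IsLCStep τ 0 1 ∧ AntitoneOn τ (Set.Ioc 0 1) ∧
          (∀ s ∈ Set.Ioc (0:ℝ) 1, 0 < τ s) ∧
          (∀ s ∈ Set.Ioc (0:ℝ) 1, hatJ s = ∫ r in (0:ℝ)..s, (τ r) ^ 2)) →
        ∀ s ∈ Set.Ioc (0:ℝ) 1, τ s = σbar s := by
  classical
  set x : ℕ → ℝ := fun i => lam ⟨min i M, Nat.lt_succ_of_le (min_le_right i M)⟩ with hxdef
  set y : ℕ → ℝ := fun i => J (x i) with hydef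
  have xeq : ∀ (i : ℕ) (h : i ≤ M), x i = lam ⟨i, Nat.lt_succ_of_le h⟩ := by
    intro i h
    simp only [hxdef]
    congr 1
    simp only [Fin.mk.injEq]
    omega
  have hxs : ∀ i, i < M → x i < x (i + 1) := by
    intro i hi
    rw [xeq i hi.le, xeq (i + 1) hi]
    exact hlam (Fin.mk_lt_mk.mpr (by omega))
  have hx0 : x 0 = 0 := by
    rw [xeq 0 (Nat.zero_le M), ← hlam0]
    congr 1
  have hxM : x M = 1 := by
    rw [xeq M le_rfl, ← hlam1]
    congr 1
  have hJ0 : J 0 = 0 := by rw [hJ 0, intervalIntegral.integral_same]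
  have hy0 : y 0 = 0 := by
    show J (x 0) = 0
    rw [hx0, hJ0]
  have hyJ : ∀ i, i ≤ M → y i = J (x i) := fun i _ => rfl
  -- integrability of σ²
  have hσint : IntegrableOn (fun r => σ r ^ 2) (Set.Ioc (0:ℝ) 1) := by
    have hp := integrableOn_pieces (fun i : Fin (M + 1) => lam i) hlam (fun r => σ r ^ 2) ?_
    · rwa [hlam0, hlam1] at hp
    · intro i r hr
      rw [hσdef i r hr, hσdef i (lam i.succ) ⟨hlam (Fin.castSucc_lt_succ (i := i)), le_rfl⟩]
  -- J is piecewise linear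
  have hJlin0 : ∀ (j : ℕ) (hj : j < M), ∀ t ∈ Set.Ioc (x j) (x (j + 1)),
      J t = y j + σv ⟨j, hj⟩ ^ 2 * (t - x j) := by
    intro j hj t ht
    have e1 : x j = lam ((⟨j, hj⟩ : Fin M).castSucc) := by
      rw [xeq j hj.le]
      congr 1
    have e2 : x (j + 1) = lam ((⟨j, hj⟩ : Fin M).succ) := by
      rw [xeq (j + 1) hj]
      congr 1
    have h0xj : 0 ≤ x j := by
      rw [← hx0]
      rcases Nat.eq_zero_or_pos j with h | h
      · simp [h]
      · exact (xlt M x hxs h hj.le).le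
    have ht1 : t ≤ 1 := by
      rw [← hxM]
      exact le_trans ht.2 (xle M x hxs hj le_rfl)
    have ii1 : IntervalIntegrable (fun r => σ r ^ 2) volume 0 (x j) := by
      rw [intervalIntegrable_iff_integrableOn_Ioc_of_le h0xj]
      exact hσint.mono_set (Set.Ioc_subset_Ioc le_rfl (by linarith [ht.1, ht.2]))
    have ii2 : IntervalIntegrable (fun r => σ r ^ 2) volume (x j) t := by
      rw [intervalIntegrable_iff_integrableOn_Ioc_of_le (le_of_lt ht.1)]
      exact hσint.mono_set (Set.Ioc_subset_Ioc h0xj ht1)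
    have hadd := intervalIntegral.integral_add_adjacent_intervals ii1 ii2
    have hconst : ∫ r in (x j)..t, σ r ^ 2 = σv ⟨j, hj⟩ ^ 2 * (t - x j) := by
      apply integral_eq_const _ (le_of_lt ht.1)
      intro r hr
      rw [hσdef ⟨j, hj⟩ r ⟨e1 ▸ hr.1, le_trans hr.2 (e2 ▸ ht.2)⟩]
    rw [hJ t, ← hadd, hconst]
    have : (∫ r in (0:ℝ)..(x j), σ r ^ 2) = y j := by rw [hyJ j hj.le, hJ (x j)]
    rw [this]
  have hys : ∀ j, j < M → y j < y (j + 1) := by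
    intro j hj
    have h := hJlin0 j hj (x (j + 1)) ⟨hxs j hj, le_rfl⟩
    have : y (j + 1) = J (x (j + 1)) := rfl
    rw [this, h]
    nlinarith [mul_pos (pow_pos (hσv ⟨j, hj⟩) 2) (sub_pos.mpr (hxs j hj))]
  have hJlin : ∀ j, j < M → ∀ t ∈ Set.Ioc (x j) (x (j + 1)),
      J t = y j + slp x y j (j + 1) * (t - x j) := by
    intro j hj t ht
    have hslp : slp x y j (j + 1) = σv ⟨j, hj⟩ ^ 2 := by
      have hd := hJlin0 j hj (x (j + 1)) ⟨hxs j hj, le_rfl⟩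
      have hy1 : y (j + 1) = J (x (j + 1)) := rfl
      have hnum : y (j + 1) - y j = σv ⟨j, hj⟩ ^ 2 * (x (j + 1) - x j) := by
        rw [hy1, hd]; ring
      rw [slp, hnum, mul_div_assoc, div_self (by linarith [hxs j hj] : x (j + 1) - x j ≠ 0), mul_one]
    rw [hslp]
    exact hJlin0 j hj t ht
  -- main equality
  have hmain : ∀ s ∈ Set.Ioc (0:ℝ) 1, hatJ s = ∫ r in (0:ℝ)..s, σb M x y r ^ 2 := by
    intro s hs
    rw [hhatJ s ⟨hs.1.le, hs.2⟩]
    have hGmem : Gf M x y s ∈ {v : ℝ | ∃ g : ℝ → ℝ, ConcaveOn ℝ (Set.Icc 0 1) g ∧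
        (∀ t ∈ Set.Icc (0:ℝ) 1, J t ≤ g t) ∧ v = g s} :=
      ⟨Gf M x y, G_concave M x y hM hxs hys hx0 hxM,
        G_dom M x y hM hxs hys hx0 hxM hy0 J hJ0 hyJ hJlin, rfl⟩
    have hbdd : BddBelow {v : ℝ | ∃ g : ℝ → ℝ, ConcaveOn ℝ (Set.Icc 0 1) g ∧
        (∀ t ∈ Set.Icc (0:ℝ) 1, J t ≤ g t) ∧ v = g s} := by
      refine ⟨J s, ?_⟩
      rintro v ⟨g, hg, hd, rfl⟩
      exact hd s ⟨hs.1.le, hs.2⟩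
    have heq : sInf {v : ℝ | ∃ g : ℝ → ℝ, ConcaveOn ℝ (Set.Icc 0 1) g ∧
        (∀ t ∈ Set.Icc (0:ℝ) 1, J t ≤ g t) ∧ v = g s} = Gf M x y s := by
      apply le_antisymm (csInf_le hbdd hGmem)
      apply le_csInf ⟨_, hGmem⟩
      rintro v ⟨g, hg, hd, rfl⟩
      exact G_least M x y hM hxs hys hx0 hxM hy0 J hyJ hg hd hs
    exact heq
  refine ⟨σb M x y, ⟨isLCStep_σb M x y hM hxs hys hx0 hxM, ?_, ?_, hmain⟩, ?_⟩
  · intro s _ s' _ hss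
    exact σb_anti M x y hM hxs hss
  · intro s _
    exact σb_pos M x y hM hxs hys s
  · rintro τ ⟨hτstep, hτanti, hτpos, hτint⟩
    exact uniq_step hτstep (isLCStep_σb M x y hM hxs hys hx0 hxM)
      (fun s hs => (hτpos s hs).le)
      (fun s _ => (σb_pos M x y hM hxs hys s).le)
      hτint hmain

end
end

section
/- With σ, σ̄ as in the concavification construction, for all t ∈ (0,1] one has ∫₀ᵗ σ²(s)/σ̄²(s) ds ≤ t. -/
open MeasureTheory Set

lemma exists_block' {n : ℕ} (f : Fin (n+1) → ℝ) (hf : StrictMono f) (hf0 : f 0 = 0)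
    (x : ℝ) (hx0 : 0 < x) (hx1 : x ≤ f (Fin.last n)) :
    ∃ j : Fin n, f j.castSucc < x ∧ x ≤ f j.succ := by
  classical
  set S := Finset.univ.filter (fun k : Fin (n+1) => f k < x) with hS
  have h0S : (0 : Fin (n+1)) ∈ S := by simp [hS, hf0, hx0]
  set k := S.max' ⟨0, h0S⟩ with hk
  have hkS : k ∈ S := S.max'_mem _
  have hfk : f k < x := by simpa [hS] using hkS
  have hklt : (k : ℕ) < n := by
    rcases lt_or_eq_of_le (Nat.lt_succ_iff.mp k.isLt) with h | h
    · exact h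
    · exfalso
      have : k = Fin.last n := Fin.ext h
      rw [this] at hfk; linarith
  refine ⟨⟨k.val, hklt⟩, ?_, ?_⟩
  · have : (⟨k.val, hklt⟩ : Fin n).castSucc = k := by ext; simp
    rw [this]; exact hfk
  · by_contra h
    push_neg at h
    have hmem : ((⟨k.val, hklt⟩ : Fin n).succ : Fin (n+1)) ∈ S := by
      simp [hS]; exact h
    have := S.le_max' _ hmem
    rw [← hk] at this
    simp [Fin.le_def] at this

lemma aux_sum (g : ℝ → ℝ) (F : ℕ → ℝ) (c : ℕ → ℝ) (N : ℕ)
    (hint : ∀ k < N, IntervalIntegrable g MeasureTheory.volume (F k) (F (k+1)))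
    (hval : ∀ k < N, (∫ s in (F k)..(F (k+1)), g s) = c k) :
    IntervalIntegrable g MeasureTheory.volume (F 0) (F N) ∧
      (∫ s in (F 0)..(F N), g s) = ∑ k ∈ Finset.range N, c k := by
  induction N with
  | zero => simp
  | succ N ih =>
    obtain ⟨h1, h2⟩ := ih (fun k hk => hint k (hk.trans N.lt_succ_self))
      (fun k hk => hval k (hk.trans N.lt_succ_self))
    have h3 := hint N N.lt_succ_self
    refine ⟨h1.trans h3, ?_⟩
    rw [← intervalIntegral.integral_add_adjacent_intervals h1 h3, h2,
      hval N N.lt_succ_self, Finset.sum_range_succ]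

/-- With σ a positive step function and σ̄ the non-increasing effective variance from the
concavification construction, for all t ∈ (0,1] one has ∫₀ᵗ σ²(s)/σ̄²(s) ds ≤ t. -/
theorem stmt_3
    (M m : ℕ) (hM : 0 < M) (hm : 0 < m)
    (lam : Fin (M + 1) → ℝ) (hlam : StrictMono lam) (hlam0 : lam 0 = 0)
    (hlam1 : lam (Fin.last M) = 1)
    (σv : Fin M → ℝ) (hσv : ∀ i, 0 < σv i)
    (σ : ℝ → ℝ) (hσ0 : σ 0 = σv ⟨0, hM⟩)
    (hσdef : ∀ i : Fin M, ∀ s ∈ Set.Ioc (lam i.castSucc) (lam i.succ), σ s = σv i)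
    (lamb : Fin (m + 1) → ℝ) (hlambmono : StrictMono lamb) (hlamb0 : lamb 0 = 0)
    (hlamb1 : lamb (Fin.last m) = 1)
    (sbv : Fin m → ℝ) (hsbv : ∀ j, 0 < sbv j) (hsbvdec : StrictAnti sbv)
    (σbar : ℝ → ℝ) (hσbar0 : σbar 0 = sbv ⟨0, hm⟩)
    (hσbardef : ∀ j : Fin m, ∀ s ∈ Set.Ioc (lamb j.castSucc) (lamb j.succ), σbar s = sbv j)
    (hsubgrid : ∀ j : Fin (m + 1), ∃ i : Fin (M + 1), lamb j = lam i)
    (hdom : ∀ t ∈ Set.Icc (0:ℝ) 1,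
      (∫ r in (0:ℝ)..t, (σ r) ^ 2) ≤ ∫ r in (0:ℝ)..t, (σbar r) ^ 2)
    (hblock : ∀ j : Fin m, (∫ s in (lamb j.castSucc)..(lamb j.succ), (σ s) ^ 2)
      = (sbv j) ^ 2 * (lamb j.succ - lamb j.castSucc)) :
    ∀ t ∈ Set.Ioc (0:ℝ) 1, (∫ s in (0:ℝ)..t, (σ s) ^ 2 / (σbar s) ^ 2) ≤ t := by
  classical
  intro t ht
  -- basic bounds for grid points
  have hlb01 : ∀ k : Fin (m+1), 0 ≤ lamb k ∧ lamb k ≤ 1 := by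
    intro k
    constructor
    · rw [← hlamb0]; exact hlambmono.monotone (Fin.zero_le k)
    · rw [← hlamb1]; exact hlambmono.monotone (Fin.le_last k)
  -- global integrability of σ² on (0,1]
  have hIσ : IntegrableOn (fun s => σ s ^ 2) (Ioc (0:ℝ) 1) := by
    have hcover : Ioc (0:ℝ) 1 ⊆ ⋃ i : Fin M, Ioc (lam i.castSucc) (lam i.succ) := by
      intro x hx
      obtain ⟨i, h1, h2⟩ := exists_block' lam hlam hlam0 x hx.1 (hlam1 ▸ hx.2)
      exact mem_iUnion.2 ⟨i, h1, h2⟩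
    refine IntegrableOn.mono_set ?_ hcover
    rw [integrableOn_finite_iUnion]
    intro i
    have hEq : EqOn (fun s => σ s ^ 2) (fun _ => σv i ^ 2)
        (Ioc (lam i.castSucc) (lam i.succ)) := fun s hs => by
      simp only; rw [hσdef i s hs]
    rw [integrableOn_congr_fun hEq measurableSet_Ioc]
    exact integrableOn_const measure_Ioc_lt_top.ne
  have hIIσ : ∀ a b : ℝ, 0 ≤ a → b ≤ 1 → a ≤ b →
      IntervalIntegrable (fun s => σ s ^ 2) volume a b := by
    intro a b ha hb hab
    rw [intervalIntegrable_iff_integrableOn_Ioc_of_le hab]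
    exact hIσ.mono_set (Ioc_subset_Ioc ha hb)
  -- find the block containing t
  obtain ⟨j, hjt1, hjt2⟩ := exists_block' lamb hlambmono hlamb0 t ht.1 (hlamb1 ▸ ht.2)
  set a := lamb j.castSucc with ha
  have h0a : 0 ≤ a := (hlb01 j.castSucc).1
  have ha1 : a ≤ 1 := (hlb01 j.castSucc).2
  have ht1 : t ≤ 1 := ht.2
  -- extension of lamb to ℕ
  set F : ℕ → ℝ := fun k => lamb ⟨min k m, Nat.lt_succ_of_le (min_le_right _ _)⟩ with hF
  have hF0 : F 0 = 0 := by
    simp only [hF]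
    rw [show (⟨min 0 m, Nat.lt_succ_of_le (min_le_right _ _)⟩ : Fin (m+1)) = 0 from Fin.ext (by simp)]
    exact hlamb0
  have hFcs : ∀ k (hk : k < m), F k = lamb (⟨k, hk⟩ : Fin m).castSucc := by
    intro k hk
    apply congrArg lamb
    ext
    simp [Nat.min_eq_left hk.le]
  have hFsucc : ∀ k (hk : k < m), F (k+1) = lamb (⟨k, hk⟩ : Fin m).succ := by
    intro k hk
    apply congrArg lamb
    ext
    simp [Nat.min_eq_left hk]
  -- per-block facts
  have hblockfacts : ∀ K : Fin m,
      IntervalIntegrable (fun s => σ s ^ 2 / σbar s ^ 2) volume (lamb K.castSucc) (lamb K.succ) ∧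
      (∫ s in (lamb K.castSucc)..(lamb K.succ), σ s ^ 2 / σbar s ^ 2)
        = lamb K.succ - lamb K.castSucc ∧
      IntervalIntegrable (fun s => σbar s ^ 2) volume (lamb K.castSucc) (lamb K.succ) ∧
      (∫ s in (lamb K.castSucc)..(lamb K.succ), σbar s ^ 2)
        = sbv K ^ 2 * (lamb K.succ - lamb K.castSucc) := by
    intro K
    have hlt : lamb K.castSucc < lamb K.succ := hlambmono Fin.castSucc_lt_succ
    have hsne : (sbv K) ^ 2 ≠ 0 := pow_ne_zero _ (hsbv K).ne'
    have hEqr : EqOn (fun s => σ s ^ 2 / σbar s ^ 2) (fun s => σ s ^ 2 * ((sbv K) ^ 2)⁻¹)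
        (Ioc (lamb K.castSucc) (lamb K.succ)) := fun s hs => by
      simp only; rw [hσbardef K s hs, div_eq_mul_inv]
    have hEqb : EqOn (fun s => σbar s ^ 2) (fun _ => sbv K ^ 2)
        (Ioc (lamb K.castSucc) (lamb K.succ)) := fun s hs => by
      simp only; rw [hσbardef K s hs]
    have hintσ : IntervalIntegrable (fun s => σ s ^ 2) volume (lamb K.castSucc) (lamb K.succ) :=
      hIIσ _ _ (hlb01 _).1 (hlb01 _).2 hlt.le
    have hintmul : IntervalIntegrable (fun s => σ s ^ 2 * ((sbv K) ^ 2)⁻¹) volume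
        (lamb K.castSucc) (lamb K.succ) := hintσ.mul_const _
    refine ⟨?_, ?_, ?_, ?_⟩
    · rw [intervalIntegrable_iff_integrableOn_Ioc_of_le hlt.le]
      rw [integrableOn_congr_fun hEqr measurableSet_Ioc]
      rw [← intervalIntegrable_iff_integrableOn_Ioc_of_le hlt.le]
      exact hintmul
    · rw [intervalIntegral.integral_of_le hlt.le,
        setIntegral_congr_fun measurableSet_Ioc hEqr,
        ← intervalIntegral.integral_of_le hlt.le,
        intervalIntegral.integral_mul_const, hblock K]
      field_simp
      exact mul_div_cancel_left₀ _ (hsbv K).ne'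
    · rw [intervalIntegrable_iff_integrableOn_Ioc_of_le hlt.le]
      rw [integrableOn_congr_fun hEqb measurableSet_Ioc]
      exact integrableOn_const measure_Ioc_lt_top.ne
    · rw [intervalIntegral.integral_of_le hlt.le,
        setIntegral_congr_fun measurableSet_Ioc hEqb]
      rw [setIntegral_const, Real.volume_real_Ioc_of_le hlt.le, smul_eq_mul]
      ring
  -- sums up to a = lamb j.castSucc
  set n := (j : ℕ) with hn
  have hnm : n < m := j.isLt
  have hFn : F n = a := by rw [hFcs n hnm]
  have hkm : ∀ k, k < n → k < m := fun k hk => hk.trans hnm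
  -- ratio up to a
  obtain ⟨hratInt, hratVal⟩ := aux_sum (fun s => σ s ^ 2 / σbar s ^ 2) F
    (fun k => F (k+1) - F k) n
    (fun k hk => by
      rw [hFcs k (hkm k hk), hFsucc k (hkm k hk)]
      exact (hblockfacts ⟨k, hkm k hk⟩).1)
    (fun k hk => by
      rw [hFcs k (hkm k hk), hFsucc k (hkm k hk)]
      have := (hblockfacts ⟨k, hkm k hk⟩).2.1
      rw [this, ← hFsucc k (hkm k hk), ← hFcs k (hkm k hk)])
  rw [hF0, hFn] at hratInt hratVal
  rw [Finset.sum_range_sub, hF0] at hratVal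
  -- σ² up to a and σ̄² up to a
  set c : ℕ → ℝ := fun k => if h : k < m then sbv ⟨k, h⟩ ^ 2 * (F (k+1) - F k) else 0 with hc
  obtain ⟨hσInt, hσVal⟩ := aux_sum (fun s => σ s ^ 2) F c n
    (fun k hk => by
      rw [hFcs k (hkm k hk), hFsucc k (hkm k hk)]
      exact hIIσ _ _ (hlb01 _).1 (hlb01 _).2 (hlambmono Fin.castSucc_lt_succ).le)
    (fun k hk => by
      rw [hFcs k (hkm k hk), hFsucc k (hkm k hk), hblock ⟨k, hkm k hk⟩]
      simp only [hc, dif_pos (hkm k hk), hFsucc k (hkm k hk), hFcs k (hkm k hk)])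
  obtain ⟨hbInt, hbVal⟩ := aux_sum (fun s => σbar s ^ 2) F c n
    (fun k hk => by
      rw [hFcs k (hkm k hk), hFsucc k (hkm k hk)]
      exact (hblockfacts ⟨k, hkm k hk⟩).2.2.1)
    (fun k hk => by
      rw [hFcs k (hkm k hk), hFsucc k (hkm k hk)]
      rw [(hblockfacts ⟨k, hkm k hk⟩).2.2.2]
      simp only [hc, dif_pos (hkm k hk), hFsucc k (hkm k hk), hFcs k (hkm k hk)])
  rw [hF0, hFn] at hσInt hσVal hbInt hbVal
  -- facts on (a, t]
  have hIocsub : Ioc a t ⊆ Ioc (lamb j.castSucc) (lamb j.succ) := Ioc_subset_Ioc le_rfl hjt2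
  have hsne : (sbv j) ^ 2 ≠ 0 := pow_ne_zero _ (hsbv j).ne'
  have hspos : (0:ℝ) < (sbv j) ^ 2 := pow_pos (hsbv j) 2
  have hEqr : EqOn (fun s => σ s ^ 2 / σbar s ^ 2) (fun s => σ s ^ 2 * ((sbv j) ^ 2)⁻¹)
      (Ioc a t) := fun s hs => by
    simp only; rw [hσbardef j s (hIocsub hs), div_eq_mul_inv]
  have hEqb : EqOn (fun s => σbar s ^ 2) (fun _ => sbv j ^ 2) (Ioc a t) := fun s hs => by
    simp only; rw [hσbardef j s (hIocsub hs)]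
  have hintσat : IntervalIntegrable (fun s => σ s ^ 2) volume a t :=
    hIIσ a t h0a ht1 hjt1.le
  have hratIntat : IntervalIntegrable (fun s => σ s ^ 2 / σbar s ^ 2) volume a t := by
    rw [intervalIntegrable_iff_integrableOn_Ioc_of_le hjt1.le]
    rw [integrableOn_congr_fun hEqr measurableSet_Ioc]
    rw [← intervalIntegrable_iff_integrableOn_Ioc_of_le hjt1.le]
    exact hintσat.mul_const _
  have hbIntat : IntervalIntegrable (fun s => σbar s ^ 2) volume a t := by
    rw [intervalIntegrable_iff_integrableOn_Ioc_of_le hjt1.le]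
    rw [integrableOn_congr_fun hEqb measurableSet_Ioc]
    exact integrableOn_const measure_Ioc_lt_top.ne
  -- key inequality: ∫_a^t σ² ≤ sbv j² (t - a)
  have hbValat : (∫ s in a..t, σbar s ^ 2) = sbv j ^ 2 * (t - a) := by
    rw [intervalIntegral.integral_of_le hjt1.le,
      setIntegral_congr_fun measurableSet_Ioc hEqb]
    rw [setIntegral_const, Real.volume_real_Ioc_of_le hjt1.le, smul_eq_mul]
    ring
  have hsplitσ : (∫ s in (0:ℝ)..a, σ s ^ 2) + (∫ s in a..t, σ s ^ 2)
      = ∫ s in (0:ℝ)..t, σ s ^ 2 :=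
    intervalIntegral.integral_add_adjacent_intervals hσInt hintσat
  have hsplitb : (∫ s in (0:ℝ)..a, σbar s ^ 2) + (∫ s in a..t, σbar s ^ 2)
      = ∫ s in (0:ℝ)..t, σbar s ^ 2 :=
    intervalIntegral.integral_add_adjacent_intervals hbInt hbIntat
  have hdomt := hdom t ⟨ht.1.le, ht1⟩
  have hkey : (∫ s in a..t, σ s ^ 2) ≤ sbv j ^ 2 * (t - a) := by
    have : (∫ s in (0:ℝ)..a, σ s ^ 2) = ∫ s in (0:ℝ)..a, σbar s ^ 2 := by
      rw [hσVal, hbVal]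
    linarith
  -- value of ratio on (a,t]
  have hratValat : (∫ s in a..t, σ s ^ 2 / σbar s ^ 2)
      = (∫ s in a..t, σ s ^ 2) * ((sbv j) ^ 2)⁻¹ := by
    rw [intervalIntegral.integral_of_le hjt1.le,
      setIntegral_congr_fun measurableSet_Ioc hEqr,
      ← intervalIntegral.integral_of_le hjt1.le,
      intervalIntegral.integral_mul_const]
  -- combine
  have hsplitr : (∫ s in (0:ℝ)..a, σ s ^ 2 / σbar s ^ 2)
      + (∫ s in a..t, σ s ^ 2 / σbar s ^ 2)
      = ∫ s in (0:ℝ)..t, σ s ^ 2 / σbar s ^ 2 :=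
    intervalIntegral.integral_add_adjacent_intervals hratInt hratIntat
  rw [← hsplitr, hratVal, hratValat]
  have : (∫ s in a..t, σ s ^ 2) * ((sbv j) ^ 2)⁻¹ ≤ t - a := by
    calc (∫ s in a..t, σ s ^ 2) * ((sbv j) ^ 2)⁻¹
        ≤ (sbv j ^ 2 * (t - a)) * ((sbv j) ^ 2)⁻¹ :=
          mul_le_mul_of_nonneg_right hkey (inv_nonneg.2 hspos.le)
      _ = t - a := by field_simp; exact mul_div_cancel_left₀ _ (hsbv j).ne'
  linarith
end

section
/- Consider maximizing f(x₁,…,x_M) = Σᵢ₌₁^M xᵢ over x ∈ ℝ^M subject to the constraints Σᵢ₌₁^k (∇λᵢ − xᵢ²/(σᵢ²∇λᵢ)) ≥ 0 for all 1 ≤ k ≤ M, where ∇λᵢ = λᵢ − λᵢ₋₁ > 0 and σᵢ > 0. Then there is a unique global maximizer, given by xᵢ* = ∫_{λᵢ₋₁}^{λᵢ} σ²(s)/σ̄(s) ds, and the maximum value is γ* = ∫₀¹ σ²(s)/σ̄(s) ds. -/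
open MeasureTheory Set

private lemma aux_const {f : ℝ → ℝ} {a b v : ℝ} (hab : a ≤ b)
    (h : Set.EqOn f (fun _ => v) (Set.Ioc a b)) :
    IntervalIntegrable f volume a b ∧ ∫ s in a..b, f s = v * (b - a) := by
  have hint : IntegrableOn f (Set.Ioc a b) volume := by
    refine (integrableOn_const ?_).congr_fun (fun x hx => (h hx).symm) measurableSet_Ioc
    simp [Real.volume_Ioc]
  constructor
  · exact (intervalIntegrable_iff_integrableOn_Ioc_of_le hab).2 hint
  · rw [intervalIntegral.integral_of_le hab, setIntegral_congr_fun measurableSet_Ioc h,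
      setIntegral_const, Real.volume_real_Ioc_of_le hab, smul_eq_mul,
      mul_comm]

private lemma aux_tele (f : ℝ → ℝ) (Λ : ℕ → ℝ) (V : ℕ → ℝ) (N : ℕ)
    (hmono : ∀ n, n < N → Λ n ≤ Λ (n+1))
    (h : ∀ n, n < N → Set.EqOn f (fun _ => V n) (Set.Ioc (Λ n) (Λ (n+1)))) :
    ∀ k, k ≤ N → IntervalIntegrable f volume (Λ 0) (Λ k) ∧
      (∫ s in (Λ 0)..(Λ k), f s) = ∑ n ∈ Finset.range k, V n * (Λ (n+1) - Λ n) := by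
  intro k
  induction k with
  | zero => intro _; simp
  | succ k ih =>
    intro hk
    obtain ⟨ih1, ih2⟩ := ih (by omega)
    obtain ⟨h1, h2⟩ := aux_const (hmono k (by omega)) (h k (by omega))
    refine ⟨ih1.trans h1, ?_⟩
    rw [← intervalIntegral.integral_add_adjacent_intervals ih1 h1,
      Finset.sum_range_succ, ih2, h2]

private lemma aux_sum_Iic {M : ℕ} (k : Fin M) (g : Fin M → ℝ) (gN : ℕ → ℝ)
    (hg : ∀ i : Fin M, g i = gN i.val) :
    ∑ i ∈ Finset.Iic k, g i = ∑ n ∈ Finset.range (k.val+1), gN n := by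
  have himg : Finset.range (k.val+1) = (Finset.Iic k).image Fin.val := by
    ext n
    simp only [Finset.mem_range, Finset.mem_image, Finset.mem_Iic]
    constructor
    · intro hn
      exact ⟨⟨n, lt_of_lt_of_le hn k.isLt⟩, by simpa [Fin.le_def] using Nat.lt_succ_iff.1 hn, rfl⟩
    · rintro ⟨i, hi, rfl⟩
      exact Nat.lt_succ_of_le (Fin.le_def.1 hi)
  rw [himg, Finset.sum_image (fun a _ b _ hab => Fin.val_injective hab)]
  exact Finset.sum_congr rfl fun i _ => hg i

private lemma aux_sum_univ {M : ℕ} (g : Fin M → ℝ) (gN : ℕ → ℝ)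
    (hg : ∀ i : Fin M, g i = gN i.val) :
    ∑ i, g i = ∑ n ∈ Finset.range M, gN n := by
  rw [← Fin.sum_univ_eq_sum_range]
  exact Finset.sum_congr rfl fun i _ => hg i

private lemma aux_byparts (w d : ℕ → ℝ) (N : ℕ) :
    ∑ n ∈ Finset.range N, w n * d n =
      w (N-1) * (∑ n ∈ Finset.range N, d n)
        - ∑ n ∈ Finset.range (N-1), ((w (n+1) - w n) * ∑ i ∈ Finset.range (n+1), d i) := by
  simpa [smul_eq_mul] using Finset.sum_range_by_parts w d N

/-- Optimal path for the maximum (KKT): maximizing Σᵢ xᵢ under the cumulative constraints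
Σᵢ≤k (∇λᵢ − xᵢ²/(σᵢ²∇λᵢ)) ≥ 0 has the unique maximizer xᵢ* = ∫_{λᵢ₋₁}^{λᵢ} σ²/σ̄ ds, with
maximum value γ* = ∫₀¹ σ²/σ̄ ds. -/
theorem stmt_5
    (M m : ℕ) (hM : 0 < M) (hm : 0 < m)
    (lam : Fin (M + 1) → ℝ) (hlam : StrictMono lam) (hlam0 : lam 0 = 0)
    (hlam1 : lam (Fin.last M) = 1)
    (σv : Fin M → ℝ) (hσv : ∀ i, 0 < σv i)
    (σ : ℝ → ℝ) (hσ0 : σ 0 = σv ⟨0, hM⟩)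
    (hσdef : ∀ i : Fin M, ∀ s ∈ Set.Ioc (lam i.castSucc) (lam i.succ), σ s = σv i)
    (lamb : Fin (m + 1) → ℝ) (hlambmono : StrictMono lamb) (hlamb0 : lamb 0 = 0)
    (hlamb1 : lamb (Fin.last m) = 1)
    (sbv : Fin m → ℝ) (hsbv : ∀ j, 0 < sbv j) (hsbvdec : StrictAnti sbv)
    (σbar : ℝ → ℝ) (hσbar0 : σbar 0 = sbv ⟨0, hm⟩)
    (hσbardef : ∀ j : Fin m, ∀ s ∈ Set.Ioc (lamb j.castSucc) (lamb j.succ), σbar s = sbv j)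
    (hsubgrid : ∀ j : Fin (m + 1), ∃ i : Fin (M + 1), lamb j = lam i)
    (hdom : ∀ t ∈ Set.Icc (0:ℝ) 1,
      (∫ r in (0:ℝ)..t, (σ r) ^ 2) ≤ ∫ r in (0:ℝ)..t, (σbar r) ^ 2)
    (hblock : ∀ j : Fin m, (∫ s in (lamb j.castSucc)..(lamb j.succ), (σ s) ^ 2)
      = (sbv j) ^ 2 * (lamb j.succ - lamb j.castSucc))
    (xstar : Fin M → ℝ)
    (hxstar : ∀ i : Fin M,
      xstar i = ∫ s in (lam i.castSucc)..(lam i.succ), (σ s) ^ 2 / σbar s) :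
    (∀ k : Fin M, 0 ≤ ∑ i ∈ Finset.Iic k, ((lam i.succ - lam i.castSucc) -
        (xstar i) ^ 2 / ((σv i) ^ 2 * (lam i.succ - lam i.castSucc)))) ∧
    (∀ x : Fin M → ℝ,
      (∀ k : Fin M, 0 ≤ ∑ i ∈ Finset.Iic k, ((lam i.succ - lam i.castSucc) -
          (x i) ^ 2 / ((σv i) ^ 2 * (lam i.succ - lam i.castSucc)))) →
      ∑ i, x i ≤ ∑ i, xstar i) ∧
    (∀ x : Fin M → ℝ,
      (∀ k : Fin M, 0 ≤ ∑ i ∈ Finset.Iic k, ((lam i.succ - lam i.castSucc) -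
          (x i) ^ 2 / ((σv i) ^ 2 * (lam i.succ - lam i.castSucc)))) →
      (∑ i, x i) = ∑ i, xstar i → x = xstar) ∧
    (∑ i, xstar i) = ∫ s in (0:ℝ)..1, (σ s) ^ 2 / σbar s := by
  classical
  have hlamle : ∀ i : Fin M, lam i.castSucc < lam i.succ :=
    fun i => hlam (Fin.castSucc_lt_succ (i := i))
  -- construct the coarse-block assignment J
  have hJex : ∀ i : Fin M, ∃ j : Fin m,
      lamb j.castSucc ≤ lam i.castSucc ∧ lam i.succ ≤ lamb j.succ := by
    intro i
    have h0s : lamb 0 ≤ lam i.castSucc := by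
      rw [hlamb0, ← hlam0]; exact hlam.monotone (Fin.zero_le _)
    set s : Finset (Fin (m+1)) := Finset.univ.filter (fun j => lamb j ≤ lam i.castSucc) with hs
    have hne : s.Nonempty := ⟨0, by simp [hs, h0s]⟩
    set j0 : Fin (m+1) := s.max' hne with hj0
    have hj0mem : lamb j0 ≤ lam i.castSucc := by
      have := s.max'_mem hne; simpa [hs] using this
    have hj0m : j0.val < m := by
      by_contra hc
      have hj0last : j0 = Fin.last m := by
        ext; simpa using Nat.le_antisymm (Nat.lt_succ_iff.1 j0.isLt) (Nat.le_of_not_lt hc)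
      have h1 : lam i.succ ≤ 1 := by rw [← hlam1]; exact hlam.monotone (Fin.le_last _)
      rw [hj0last, hlamb1] at hj0mem
      linarith [hlamle i]
    have hcs : (⟨j0.val, hj0m⟩ : Fin m).castSucc = j0 := by ext; simp
    refine ⟨⟨j0.val, hj0m⟩, by rw [hcs]; exact hj0mem, ?_⟩
    have hnot : ¬ lamb (⟨j0.val, hj0m⟩ : Fin m).succ ≤ lam i.castSucc := by
      intro hle
      have hmem : (⟨j0.val, hj0m⟩ : Fin m).succ ∈ s := by
        simp only [hs, Finset.mem_filter, Finset.mem_univ, true_and]; exact hle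
      have hle2 := s.le_max' _ hmem
      rw [← hj0] at hle2
      have : j0.val + 1 ≤ j0.val := by simpa [Fin.le_def] using hle2
      omega
    push_neg at hnot
    obtain ⟨i', hi'⟩ := hsubgrid (⟨j0.val, hj0m⟩ : Fin m).succ
    rw [hi'] at hnot ⊢
    exact hlam.monotone (Fin.castSucc_lt_iff_succ_le.1 (hlam.lt_iff_lt.1 hnot))
  choose J hJa hJc using hJex
  have hJb : ∀ i : Fin M, lam i.castSucc < lamb (J i).succ :=
    fun i => lt_of_lt_of_le (hlamle i) (hJc i)
  have hJmono : Monotone J := by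
    intro i i' hii'
    have h1 : lamb (J i).castSucc < lamb (J i').succ :=
      lt_of_le_of_lt (le_trans (hJa i)
        (hlam.monotone (Fin.castSucc_le_castSucc_iff.2 hii'))) (hJb i')
    exact Fin.castSucc_lt_succ_iff.1 (hlambmono.lt_iff_lt.1 h1)
  -- values of σbar on fine blocks
  have hσbarfine : ∀ i : Fin M, ∀ s ∈ Set.Ioc (lam i.castSucc) (lam i.succ), σbar s = sbv (J i) := by
    intro i s hs
    exact hσbardef (J i) s ⟨lt_of_le_of_lt (hJa i) hs.1, le_trans hs.2 (hJc i)⟩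
  have hΔpos : ∀ i : Fin M, 0 < lam i.succ - lam i.castSucc := fun i => sub_pos.2 (hlamle i)
  -- closed form of xstar
  have hxs : ∀ i : Fin M, xstar i = (σv i)^2 / sbv (J i) * (lam i.succ - lam i.castSucc) := by
    intro i
    rw [hxstar i]
    exact (aux_const (le_of_lt (hlamle i)) (fun s hs => by
      simp only [hσdef i s hs, hσbarfine i s hs])).2
  -- ℕ-indexed data
  set ΛN : ℕ → ℝ := fun n => if h : n < M + 1 then lam ⟨n, h⟩ else 1 with hΛNdef
  have hΛv : ∀ (n : ℕ) (h : n < M + 1), ΛN n = lam ⟨n, h⟩ := fun n h => by rw [hΛNdef]; exact dif_pos h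
  have hΛ0 : ΛN 0 = 0 := by rw [hΛv 0 (by omega)]; exact hlam0
  have hΛM : ΛN M = 1 := by rw [hΛv M (by omega)]; exact hlam1
  have hΛcs : ∀ i : Fin M, ΛN i.val = lam i.castSucc := by
    intro i
    rw [hΛv i.val (by omega)]
    congr 1
  have hΛsc : ∀ i : Fin M, ΛN (i.val+1) = lam i.succ := by
    intro i
    rw [hΛv (i.val+1) (by omega)]
    congr 1
  set vσ : ℕ → ℝ := fun n => if h : n < M then σv ⟨n, h⟩ else 1 with hvσdef
  set vc : ℕ → ℝ := fun n => if h : n < M then sbv (J ⟨n, h⟩) else 1 with hvcdef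
  set xsN : ℕ → ℝ := fun n => if h : n < M then xstar ⟨n, h⟩ else 0 with hxsNdef
  have hvσv : ∀ i : Fin M, vσ i.val = σv i := fun i => by simp [hvσdef, i.isLt]
  have hvcv : ∀ i : Fin M, vc i.val = sbv (J i) := fun i => by simp [hvcdef, i.isLt]
  have hxsv : ∀ i : Fin M, xsN i.val = xstar i := fun i => by simp [hxsNdef, i.isLt]
  have hvσpos : ∀ n, 0 < vσ n := by
    intro n; rw [hvσdef]; dsimp only; split
    · exact hσv _
    · exact one_pos
  have hvcpos : ∀ n, 0 < vc n := by
    intro n; rw [hvcdef]; dsimp only; split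
    · exact hsbv _
    · exact one_pos
  have hDpos : ∀ n, n < M → 0 < ΛN (n+1) - ΛN n := by
    intro n h
    rw [hΛcs ⟨n, h⟩, hΛsc ⟨n, h⟩]
    exact hΔpos ⟨n, h⟩
  have hvc_anti : ∀ n, n + 1 < M → vc (n+1) ≤ vc n := by
    intro n h
    have h1 : (⟨n, by omega⟩ : Fin M) ≤ ⟨n+1, h⟩ := by simp [Fin.le_def]
    have h2 := hsbvdec.antitone (hJmono h1)
    rw [hvcv ⟨n, by omega⟩, hvcv ⟨n+1, h⟩]
    exact h2
  have hmonoΛ : ∀ n, n < M → ΛN n ≤ ΛN (n+1) := fun n h => le_of_lt (hDpos n h |> sub_pos.1)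
  -- the three step-function integral telescopes
  have hEσ : ∀ n, n < M → Set.EqOn (fun s => σ s ^ 2) (fun _ => vσ n ^ 2)
      (Set.Ioc (ΛN n) (ΛN (n+1))) := by
    intro n h s hs
    rw [hΛcs ⟨n, h⟩, hΛsc ⟨n, h⟩] at hs
    simp only [hσdef ⟨n, h⟩ s hs, hvσv ⟨n, h⟩]
  have hEσbar : ∀ n, n < M → Set.EqOn (fun s => σbar s ^ 2) (fun _ => vc n ^ 2)
      (Set.Ioc (ΛN n) (ΛN (n+1))) := by
    intro n h s hs
    rw [hΛcs ⟨n, h⟩, hΛsc ⟨n, h⟩] at hs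
    simp only [hσbarfine ⟨n, h⟩ s hs, hvcv ⟨n, h⟩]
  have hEr : ∀ n, n < M → Set.EqOn (fun s => σ s ^ 2 / σbar s) (fun _ => vσ n ^ 2 / vc n)
      (Set.Ioc (ΛN n) (ΛN (n+1))) := by
    intro n h s hs
    rw [hΛcs ⟨n, h⟩, hΛsc ⟨n, h⟩] at hs
    simp only [hσdef ⟨n, h⟩ s hs, hσbarfine ⟨n, h⟩ s hs, hvσv ⟨n, h⟩, hvcv ⟨n, h⟩]
  have A := aux_tele (fun s => σ s ^ 2) ΛN (fun n => vσ n ^ 2) M hmonoΛ hEσ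
  have B := aux_tele (fun s => σbar s ^ 2) ΛN (fun n => vc n ^ 2) M hmonoΛ hEσbar
  have C := aux_tele (fun s => σ s ^ 2 / σbar s) ΛN (fun n => vσ n ^ 2 / vc n) M hmonoΛ hEr
  rw [hΛ0] at A B C
  have hΛmem : ∀ k, k ≤ M → ΛN k ∈ Set.Icc (0:ℝ) 1 := by
    intro k hk
    rw [hΛv k (by omega)]
    constructor
    · rw [← hlam0]; exact hlam.monotone (Fin.zero_le _)
    · rw [← hlam1]; exact hlam.monotone (Fin.le_last _)
  -- integrability up to any coarse grid point
  have hint0 : ∀ j : Fin (m+1), IntervalIntegrable (fun s => σ s ^ 2) volume 0 (lamb j) ∧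
      IntervalIntegrable (fun s => σbar s ^ 2) volume 0 (lamb j) := by
    intro j
    obtain ⟨i', hi'⟩ := hsubgrid j
    have h1 := (A i'.val (by omega)).1
    have h2 := (B i'.val (by omega)).1
    rw [hΛv i'.val (by omega), Fin.eta] at h1 h2
    rw [hi']
    exact ⟨h1, h2⟩
  -- integrals of σ² and σbar² agree at coarse grid points
  have hF4 : ∀ j : Fin (m+1), (∫ s in (0:ℝ)..(lamb j), σbar s ^ 2)
      = ∫ s in (0:ℝ)..(lamb j), σ s ^ 2 := by
    have key : ∀ t : ℕ, ∀ h : t < m + 1, (∫ s in (0:ℝ)..(lamb ⟨t, h⟩), σbar s ^ 2)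
        = ∫ s in (0:ℝ)..(lamb ⟨t, h⟩), σ s ^ 2 := by
      intro t
      induction t with
      | zero =>
        intro h
        have h0 : (⟨0, h⟩ : Fin (m+1)) = 0 := rfl
        rw [h0, hlamb0]; simp
      | succ t ih =>
        intro h
        have ht : t < m + 1 := by omega
        have htm : t < m := by omega
        set jj : Fin m := ⟨t, htm⟩ with hjj
        have hcs : jj.castSucc = ⟨t, ht⟩ := rfl
        have hsc : jj.succ = ⟨t+1, h⟩ := rfl
        have hblt : lamb jj.castSucc ≤ lamb jj.succ := le_of_lt (hlambmono (Fin.castSucc_lt_succ (i := jj)))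
        obtain ⟨hib, hvb⟩ := aux_const hblt
          (fun s hs => by simp only [hσbardef jj s hs] :
            Set.EqOn (fun s => σbar s ^ 2) (fun _ => sbv jj ^ 2) _)
        have hσblk : IntervalIntegrable (fun s => σ s ^ 2) volume (lamb jj.castSucc) (lamb jj.succ) :=
          (hint0 jj.castSucc).1.symm.trans (hint0 jj.succ).1
        have e1 := intervalIntegral.integral_add_adjacent_intervals (hint0 jj.castSucc).2 hib
        have e2 := intervalIntegral.integral_add_adjacent_intervals (hint0 jj.castSucc).1 hσblk
        rw [← hsc, ← e1, ← e2, hvb, hblock jj, hcs, ih ht]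
    intro j
    have := key j.val j.isLt
    rwa [Fin.eta] at this
  -- partial sums of the dominance differences
  set dd : ℕ → ℝ := fun n => vc n ^ 2 * (ΛN (n+1) - ΛN n) - vσ n ^ 2 * (ΛN (n+1) - ΛN n) with hdddef
  have hTpartial : ∀ k, k ≤ M → ∑ n ∈ Finset.range k, dd n
      = (∫ s in (0:ℝ)..(ΛN k), σbar s ^ 2) - ∫ s in (0:ℝ)..(ΛN k), σ s ^ 2 := by
    intro k hk
    rw [hdddef]
    rw [Finset.sum_sub_distrib, ← (A k hk).2, ← (B k hk).2]
  have hTnonneg : ∀ k, k ≤ M → 0 ≤ ∑ n ∈ Finset.range k, dd n := by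
    intro k hk
    rw [hTpartial k hk]
    have := hdom _ (hΛmem k hk)
    linarith
  have hTM : ∑ n ∈ Finset.range M, dd n = 0 := by
    rw [hTpartial M le_rfl, hΛM]
    have := hF4 (Fin.last m)
    rw [hlamb1] at this
    linarith
  have hjump : ∀ n, n + 1 < M → vc (n+1) ≠ vc n →
      ∑ i ∈ Finset.range (n+1), dd i = 0 := by
    intro n hn hne
    have hn' : n < M := by omega
    have hJne : J ⟨n, hn'⟩ ≠ J ⟨n+1, hn⟩ := by
      intro hJeq
      apply hne
      rw [hvcv ⟨n+1, hn⟩, hvcv ⟨n, hn'⟩, hJeq]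
    have hJlt : J ⟨n, hn'⟩ < J ⟨n+1, hn⟩ :=
      lt_of_le_of_ne (hJmono (by simp [Fin.le_def])) hJne
    have hbd : ΛN (n+1) = lamb (J ⟨n, hn'⟩).succ := by
      have h1 : lamb (J ⟨n, hn'⟩).succ ≤ lamb (J ⟨n+1, hn⟩).castSucc :=
        hlambmono.monotone (Fin.succ_le_castSucc_iff.2 hJlt)
      have h2 : lamb (J ⟨n+1, hn⟩).castSucc ≤ lam (⟨n+1, hn⟩ : Fin M).castSucc := hJa _
      have h3 : lam (⟨n, hn'⟩ : Fin M).succ ≤ lamb (J ⟨n, hn'⟩).succ := hJc _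
      have h4 : lam (⟨n+1, hn⟩ : Fin M).castSucc = lam (⟨n, hn'⟩ : Fin M).succ := rfl
      rw [hΛsc ⟨n, hn'⟩]
      rw [h4] at h2
      linarith
    rw [hTpartial (n+1) (by omega), hbd, hF4 (J ⟨n, hn'⟩).succ, sub_self]
  -- the key identity : ∑ c·Δ = ∑ xstar
  have hxsN_eq : ∀ n, n < M → xsN n = vσ n ^ 2 / vc n * (ΛN (n+1) - ΛN n) := by
    intro n hn
    have := hxs ⟨n, hn⟩
    rw [← hxsv ⟨n, hn⟩] at this
    rw [this, hvσv ⟨n, hn⟩, hvcv ⟨n, hn⟩, hΛsc ⟨n, hn⟩, hΛcs ⟨n, hn⟩]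
  have hsum_cD_eq : ∑ n ∈ Finset.range M, vc n * (ΛN (n+1) - ΛN n)
      = ∑ n ∈ Finset.range M, xsN n := by
    have hterm : ∀ n ∈ Finset.range M, vc n * (ΛN (n+1) - ΛN n) - xsN n = (vc n)⁻¹ * dd n := by
      intro n hn
      simp only [Finset.mem_range] at hn
      rw [hxsN_eq n hn, hdddef]
      have hc := (hvcpos n).ne'
      field_simp
    have h1 : ∑ n ∈ Finset.range M, (vc n * (ΛN (n+1) - ΛN n) - xsN n) = 0 := by
      rw [Finset.sum_congr rfl hterm, aux_byparts (fun n => (vc n)⁻¹) dd M, hTM, mul_zero]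
      rw [Finset.sum_eq_zero, sub_zero]
      intro n hn
      simp only [Finset.mem_range] at hn
      by_cases hvcn : vc (n+1) = vc n
      · rw [hvcn, sub_self, zero_mul]
      · rw [hjump n (by omega) hvcn, mul_zero]
    rw [Finset.sum_sub_distrib] at h1
    linarith
  refine ⟨?_, ?_, ?_, ?_⟩
  -- Part 1 : feasibility of xstar
  · intro k
    have hper : ∀ i : Fin M, (lam i.succ - lam i.castSucc) -
        (xstar i) ^ 2 / ((σv i) ^ 2 * (lam i.succ - lam i.castSucc))
        = ((vc i.val)⁻¹) ^ 2 * dd i.val := by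
      intro i
      simp only [hdddef, hxs i, hvcv i, hvσv i, hΛsc i, hΛcs i]
      have h1 := (hsbv (J i)).ne'
      have h2 := (hσv i).ne'
      have h3 := (hΔpos i).ne'
      field_simp
    rw [aux_sum_Iic k _ (fun n => ((vc n)⁻¹) ^ 2 * dd n) hper,
      aux_byparts (fun n => ((vc n)⁻¹) ^ 2) dd (k.val+1)]
    have hz : ∑ n ∈ Finset.range (k.val+1-1),
        ((((vc (n+1))⁻¹) ^ 2 - ((vc n)⁻¹) ^ 2) * ∑ i ∈ Finset.range (n+1), dd i) = 0 := by
      apply Finset.sum_eq_zero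
      intro n hn
      simp only [Finset.mem_range] at hn
      by_cases hvcn : vc (n+1) = vc n
      · rw [hvcn, sub_self, zero_mul]
      · rw [hjump n (by omega) hvcn, mul_zero]
    rw [hz, sub_zero]
    exact mul_nonneg (by positivity) (hTnonneg (k.val+1) (by omega))
  -- Part 2 : optimality
  · intro x hx
    set xN : ℕ → ℝ := fun n => if h : n < M then x ⟨n, h⟩ else 0 with hxNdef
    have hxNv : ∀ i : Fin M, xN i.val = x i := fun i => by simp [hxNdef, i.isLt]
    set qd : ℕ → ℝ := fun n => (ΛN (n+1) - ΛN n) - xN n ^ 2 / (vσ n ^ 2 * (ΛN (n+1) - ΛN n))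
      with hqddef
    have hfeas : ∀ k, k ≤ M → 0 ≤ ∑ n ∈ Finset.range k, qd n := by
      intro k hk
      rcases Nat.eq_zero_or_pos k with rfl | hk0
      · simp
      · have hk1 : k - 1 < M := by omega
        have hxk := hx ⟨k-1, hk1⟩
        rw [aux_sum_Iic ⟨k-1, hk1⟩ _ qd ?_] at hxk
        · have hkk : k - 1 + 1 = k := by omega
          rwa [hkk] at hxk
        · intro i
          simp only [hqddef, hΛsc i, hΛcs i, hvσv i, hxNv i]
    have hAbel : 0 ≤ ∑ n ∈ Finset.range M, vc n * qd n := by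
      rw [aux_byparts vc qd M]
      have h1 : 0 ≤ vc (M-1) * ∑ n ∈ Finset.range M, qd n :=
        mul_nonneg (le_of_lt (hvcpos _)) (hfeas M le_rfl)
      have h2 : ∑ n ∈ Finset.range (M-1), ((vc (n+1) - vc n) * ∑ i ∈ Finset.range (n+1), qd i) ≤ 0 := by
        apply Finset.sum_nonpos
        intro n hn
        simp only [Finset.mem_range] at hn
        exact mul_nonpos_of_nonpos_of_nonneg (by linarith [hvc_anti n (by omega)])
          (hfeas (n+1) (by omega))
      linarith
    have hkey : ∀ n ∈ Finset.range M,
        xN n ≤ (vc n * ((ΛN (n+1) - ΛN n) - qd n) + xsN n) / 2 := by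
      intro n hn
      simp only [Finset.mem_range] at hn
      have hq : (ΛN (n+1) - ΛN n) - qd n = xN n ^ 2 / (vσ n ^ 2 * (ΛN (n+1) - ΛN n)) := by
        rw [hqddef]; ring
      have h0 : (vc n * ((ΛN (n+1) - ΛN n) - qd n) + xsN n) / 2 - xN n
          = vc n / (2 * (vσ n ^ 2 * (ΛN (n+1) - ΛN n))) * (xN n - xsN n) ^ 2 := by
        rw [hq, hxsN_eq n hn]
        have h1 := (hvcpos n).ne'
        have h2 := (hvσpos n).ne'
        have h3 := (hDpos n hn).ne'
        field_simp
        ring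
      have h4 : 0 ≤ vc n / (2 * (vσ n ^ 2 * (ΛN (n+1) - ΛN n))) * (xN n - xsN n) ^ 2 := by
        have := hvcpos n; have := hvσpos n; have := hDpos n hn
        positivity
      linarith
    calc ∑ i, x i = ∑ n ∈ Finset.range M, xN n := aux_sum_univ x xN (fun i => (hxNv i).symm)
      _ ≤ ∑ n ∈ Finset.range M, (vc n * ((ΛN (n+1) - ΛN n) - qd n) + xsN n) / 2 :=
          Finset.sum_le_sum hkey
      _ = ((∑ n ∈ Finset.range M, vc n * (ΛN (n+1) - ΛN n))
            - (∑ n ∈ Finset.range M, vc n * qd n) + ∑ n ∈ Finset.range M, xsN n) / 2 := by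
          rw [← Finset.sum_div, ← Finset.sum_sub_distrib, ← Finset.sum_add_distrib]
          congr 1
          exact Finset.sum_congr rfl fun n _ => by ring
      _ ≤ ∑ n ∈ Finset.range M, xsN n := by
          rw [hsum_cD_eq]
          linarith [hAbel]
      _ = ∑ i, xstar i := (aux_sum_univ xstar xsN (fun i => (hxsv i).symm)).symm
  -- Part 3 : uniqueness
  · intro x hx heq
    set xN : ℕ → ℝ := fun n => if h : n < M then x ⟨n, h⟩ else 0 with hxNdef
    have hxNv : ∀ i : Fin M, xN i.val = x i := fun i => by simp [hxNdef, i.isLt]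
    set qd : ℕ → ℝ := fun n => (ΛN (n+1) - ΛN n) - xN n ^ 2 / (vσ n ^ 2 * (ΛN (n+1) - ΛN n))
      with hqddef
    have hfeas : ∀ k, k ≤ M → 0 ≤ ∑ n ∈ Finset.range k, qd n := by
      intro k hk
      rcases Nat.eq_zero_or_pos k with rfl | hk0
      · simp
      · have hk1 : k - 1 < M := by omega
        have hxk := hx ⟨k-1, hk1⟩
        rw [aux_sum_Iic ⟨k-1, hk1⟩ _ qd ?_] at hxk
        · have hkk : k - 1 + 1 = k := by omega
          rwa [hkk] at hxk
        · intro i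
          simp only [hqddef, hΛsc i, hΛcs i, hvσv i, hxNv i]
    have hAbel : 0 ≤ ∑ n ∈ Finset.range M, vc n * qd n := by
      rw [aux_byparts vc qd M]
      have h1 : 0 ≤ vc (M-1) * ∑ n ∈ Finset.range M, qd n :=
        mul_nonneg (le_of_lt (hvcpos _)) (hfeas M le_rfl)
      have h2 : ∑ n ∈ Finset.range (M-1), ((vc (n+1) - vc n) * ∑ i ∈ Finset.range (n+1), qd i) ≤ 0 := by
        apply Finset.sum_nonpos
        intro n hn
        simp only [Finset.mem_range] at hn
        exact mul_nonpos_of_nonpos_of_nonneg (by linarith [hvc_anti n (by omega)])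
          (hfeas (n+1) (by omega))
      linarith
    have heqN : ∑ n ∈ Finset.range M, xN n = ∑ n ∈ Finset.range M, xsN n := by
      rw [← aux_sum_univ x xN (fun i => (hxNv i).symm),
        ← aux_sum_univ xstar xsN (fun i => (hxsv i).symm)]
      exact heq
    have h0 : ∀ n ∈ Finset.range M,
        (vc n * ((ΛN (n+1) - ΛN n) - qd n) + xsN n) / 2 - xN n
          = vc n / (2 * (vσ n ^ 2 * (ΛN (n+1) - ΛN n))) * (xN n - xsN n) ^ 2 := by
      intro n hn
      simp only [Finset.mem_range] at hn
      have hq : (ΛN (n+1) - ΛN n) - qd n = xN n ^ 2 / (vσ n ^ 2 * (ΛN (n+1) - ΛN n)) := by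
        rw [hqddef]; ring
      rw [hq, hxsN_eq n hn]
      have h1 := (hvcpos n).ne'
      have h2 := (hvσpos n).ne'
      have h3 := (hDpos n hn).ne'
      field_simp
      ring
    have e1 : ∑ n ∈ Finset.range M, (vc n * ((ΛN (n+1) - ΛN n) - qd n) + xsN n)
        = (∑ n ∈ Finset.range M, vc n * (ΛN (n+1) - ΛN n))
          - (∑ n ∈ Finset.range M, vc n * qd n) + ∑ n ∈ Finset.range M, xsN n := by
      rw [Finset.sum_add_distrib]
      congr 1
      rw [← Finset.sum_sub_distrib]
      exact Finset.sum_congr rfl fun n _ => by ring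
    have hEsum : ∑ n ∈ Finset.range M,
        (vc n / (2 * (vσ n ^ 2 * (ΛN (n+1) - ΛN n))) * (xN n - xsN n) ^ 2) ≤ 0 := by
      calc ∑ n ∈ Finset.range M,
            (vc n / (2 * (vσ n ^ 2 * (ΛN (n+1) - ΛN n))) * (xN n - xsN n) ^ 2)
          = ∑ n ∈ Finset.range M,
            ((vc n * ((ΛN (n+1) - ΛN n) - qd n) + xsN n) / 2 - xN n) :=
            Finset.sum_congr rfl fun n hn => (h0 n hn).symm
        _ = (∑ n ∈ Finset.range M, (vc n * ((ΛN (n+1) - ΛN n) - qd n) + xsN n)) / 2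
            - ∑ n ∈ Finset.range M, xN n := by
            rw [Finset.sum_sub_distrib, ← Finset.sum_div]
        _ ≤ 0 := by rw [e1, hsum_cD_eq, heqN]; linarith [hAbel]
    have hEnonneg : ∀ n ∈ Finset.range M,
        0 ≤ vc n / (2 * (vσ n ^ 2 * (ΛN (n+1) - ΛN n))) * (xN n - xsN n) ^ 2 := by
      intro n hn
      simp only [Finset.mem_range] at hn
      have := hvcpos n; have := hvσpos n; have := hDpos n hn
      positivity
    have hall := (Finset.sum_eq_zero_iff_of_nonneg hEnonneg).1
      (le_antisymm hEsum (Finset.sum_nonneg hEnonneg))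
    funext i
    have hi := hall i.val (Finset.mem_range.2 i.isLt)
    have hc : vc i.val / (2 * (vσ i.val ^ 2 * (ΛN (i.val+1) - ΛN i.val))) ≠ 0 := by
      have := hvcpos i.val; have := hvσpos i.val; have := hDpos i.val i.isLt
      positivity
    have hz : (xN i.val - xsN i.val) ^ 2 = 0 := by
      rcases mul_eq_zero.1 hi with h | h
      · exact absurd h hc
      · exact h
    have := sub_eq_zero.1 (sq_eq_zero_iff.1 hz)
    rw [hxNv i, hxsv i] at this
    exact this
  -- Part 4 : the maximal value
  · have hterm : ∀ i : Fin M, xstar i = vσ i.val ^ 2 / vc i.val * (ΛN (i.val+1) - ΛN i.val) := by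
      intro i
      rw [← hxsv i, hxsN_eq i.val i.isLt]
    rw [aux_sum_univ xstar (fun n => vσ n ^ 2 / vc n * (ΛN (n+1) - ΛN n)) hterm,
      ← (C M le_rfl).2, hΛM]
end

section
/- Fix γ with γ^{l-1} ≤ γ < γ^l for some l, where γ^l := ∫₀¹ σ²(s)/σ̄(s ∧ λ^l) ds are the critical levels. Consider maximizing f(x₁,…,x_{M-1}) = Σᵢ₌₁^{M-1}(∇λᵢ − xᵢ²/(σᵢ²∇λᵢ)) + (∇λ_M − (γ − Σᵢ xᵢ)²/(σ_M²∇λ_M)) subject to Σᵢ₌₁^k (∇λᵢ − xᵢ²/(σᵢ²∇λᵢ)) ≥ 0 for 1 ≤ k ≤ M−1. Then there is a unique global maximizer, with xᵢ* = ∫_{λᵢ₋₁}^{λᵢ} σ²/σ̄ ds when λᵢ ≤ λ^{l-1} and xᵢ* = (∫_{λᵢ₋₁}^{λᵢ} σ² ds / ∫_{λ^{l-1}}^1 σ² ds)·(γ − ∫₀^{λ^{l-1}} σ²/σ̄ ds) when λᵢ > λ^{l-1}, and the maximum value is E_γ = (1 − λ^{l-1}) − (γ − ∫₀^{λ^{l-1}}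 σ²/σ̄ ds)² / ∫_{λ^{l-1}}^1 σ² ds. -/
open MeasureTheory Set


lemma constIoc_integrable {h : ℝ → ℝ} {a b v : ℝ} (hab : a ≤ b)
    (hv : ∀ s ∈ Set.Ioc a b, h s = v) : IntervalIntegrable h volume a b := by
  rw [intervalIntegrable_iff, Set.uIoc_of_le hab]
  exact ((integrableOn_const measure_Ioc_lt_top.ne : IntegrableOn (fun _ => v) (Set.Ioc a b) volume)).congr_fun
    (fun s hs => (hv s hs).symm) measurableSet_Ioc

lemma constIoc_integral {h : ℝ → ℝ} {a b v : ℝ} (hab : a ≤ b)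
    (hv : ∀ s ∈ Set.Ioc a b, h s = v) : ∫ s in a..b, h s = v * (b - a) := by
  rw [intervalIntegral.integral_of_le hab,
    setIntegral_congr_fun measurableSet_Ioc hv, setIntegral_const, measureReal_def, Real.volume_Ioc,
    ENNReal.toReal_ofReal (by linarith), smul_eq_mul, mul_comm]

lemma chain_integrable (h : ℝ → ℝ) (L : ℕ → ℝ) (V : ℕ → ℝ) (hmono : Monotone L)
    {p q : ℕ} (hpq : p ≤ q)
    (hval : ∀ n, p ≤ n → n < q → ∀ s ∈ Set.Ioc (L n) (L (n+1)), h s = V n) :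
    IntervalIntegrable h volume (L p) (L q) := by
  induction q, hpq using Nat.le_induction with
  | base => exact IntervalIntegrable.refl
  | succ q hq ih =>
      exact (ih (fun n hn hnq s hs => hval n hn (by omega) s hs)).trans
        (constIoc_integrable (hmono (Nat.le_succ q)) (hval q hq (by omega)))

lemma chain_eq (h : ℝ → ℝ) (L : ℕ → ℝ) (V : ℕ → ℝ) (hmono : Monotone L)
    {p q : ℕ} (hpq : p ≤ q)
    (hval : ∀ n, p ≤ n → n < q → ∀ s ∈ Set.Ioc (L n) (L (n+1)), h s = V n) :
    ∫ s in (L p)..(L q), h s = ∑ n ∈ Finset.Ico p q, V n * (L (n+1) - L n) := by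
  induction q, hpq using Nat.le_induction with
  | base => simp
  | succ q hq ih =>
      have h1 : IntervalIntegrable h volume (L p) (L q) :=
        chain_integrable h L V hmono hq (fun n hn hnq s hs => hval n hn (by omega) s hs)
      have h2 : IntervalIntegrable h volume (L q) (L (q+1)) :=
        constIoc_integrable (hmono (Nat.le_succ q)) (hval q hq (by omega))
      rw [← intervalIntegral.integral_add_adjacent_intervals h1 h2,
        ih (fun n hn hnq s hs => hval n hn (by omega) s hs),
        constIoc_integral (hmono (Nat.le_succ q)) (hval q hq (by omega)),
        Finset.sum_Ico_succ_top hq]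


lemma kkt_core (K : ℕ) (γ ν : ℝ) (a c : Fin (K+1) → ℝ) (hc : ∀ i, 0 < c i)
    (xs : Fin K → ℝ) (μ : Fin K → ℝ) (hμ : ∀ k, 0 ≤ μ k)
    (hstat : ∀ i : Fin K, xs i * (1 + ∑ k ∈ Finset.Ici i, μ k) = ν * c i.castSucc)
    (hlast : γ - ∑ i, xs i = ν * c (Fin.last K))
    (hcs : ∀ k, μ k * (∑ i ∈ Finset.Iic k, (a i.castSucc - (xs i)^2 / c i.castSucc)) = 0)
    (y : Fin K → ℝ)
    (hyfeas : ∀ k, 0 ≤ ∑ i ∈ Finset.Iic k, (a i.castSucc - (y i)^2 / c i.castSucc)) :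
    ((∑ i, (a i.castSucc - (y i)^2 / c i.castSucc)) +
      (a (Fin.last K) - (γ - ∑ i, y i)^2 / c (Fin.last K))) +
    ((∑ i, (y i - xs i)^2 / c i.castSucc) + (∑ i, (y i - xs i))^2 / c (Fin.last K))
    ≤ (∑ i, (a i.castSucc - (xs i)^2 / c i.castSucc)) +
      (a (Fin.last K) - (γ - ∑ i, xs i)^2 / c (Fin.last K)) := by
  classical
  set M : Fin K → ℝ := fun i => ∑ k ∈ Finset.Ici i, μ k with hM
  have hM0 : ∀ i, 0 ≤ M i := fun i => Finset.sum_nonneg fun k _ => hμ k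
  have swap : ∀ w : Fin K → ℝ,
      ∑ k, μ k * ∑ i ∈ Finset.Iic k, w i = ∑ i, M i * w i := by
    intro w
    have e1 : ∀ k : Fin K, Finset.Iic k = Finset.univ.filter (· ≤ k) := by
      intro k; ext i; simp
    have e2 : ∀ i : Fin K, Finset.Ici i = Finset.univ.filter (i ≤ ·) := by
      intro i; ext k; simp
    calc ∑ k, μ k * ∑ i ∈ Finset.Iic k, w i
        = ∑ k, ∑ i, if i ≤ k then μ k * w i else 0 := by
          refine Finset.sum_congr rfl fun k _ => ?_
          rw [Finset.mul_sum, e1, Finset.sum_filter]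
      _ = ∑ i, ∑ k, if i ≤ k then μ k * w i else 0 := Finset.sum_comm
      _ = ∑ i, M i * w i := by
          refine Finset.sum_congr rfl fun i _ => ?_
          show (∑ k : Fin K, if i ≤ k then μ k * w i else 0)
            = (∑ k ∈ Finset.Ici i, μ k) * w i
          rw [e2, Finset.sum_mul, Finset.sum_filter]
  have key : 0 ≤ ∑ i, M i * (((xs i)^2 - (y i)^2) / c i.castSucc) := by
    have h1 : 0 ≤ ∑ k, μ k * ∑ i ∈ Finset.Iic k, (a i.castSucc - (y i)^2 / c i.castSucc) :=
      Finset.sum_nonneg fun k _ => mul_nonneg (hμ k) (hyfeas k)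
    have h2 : ∀ k : Fin K, μ k * ∑ i ∈ Finset.Iic k, (a i.castSucc - (y i)^2 / c i.castSucc)
        = μ k * ∑ i ∈ Finset.Iic k, (((xs i)^2 - (y i)^2) / c i.castSucc) := by
      intro k
      have expand : ∑ i ∈ Finset.Iic k, (a i.castSucc - (y i)^2 / c i.castSucc)
          = (∑ i ∈ Finset.Iic k, (a i.castSucc - (xs i)^2 / c i.castSucc))
            + ∑ i ∈ Finset.Iic k, (((xs i)^2 - (y i)^2) / c i.castSucc) := by
        rw [← Finset.sum_add_distrib]
        refine Finset.sum_congr rfl fun i _ => ?_; ring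
      rw [expand, mul_add, hcs k, zero_add]
    rw [Finset.sum_congr rfl (fun k _ => h2 k), swap] at h1
    exact h1
  have keyle : ∑ i, M i * (xs i * (y i - xs i) / c i.castSucc) ≤ 0 := by
    have e : ∀ i : Fin K, M i * (((xs i)^2 - (y i)^2) / c i.castSucc)
        = -2 * (M i * (xs i * (y i - xs i) / c i.castSucc))
          - M i * ((y i - xs i)^2 / c i.castSucc) := by intro i; ring
    rw [Finset.sum_congr rfl (fun i _ => e i)] at key
    have hnn : 0 ≤ ∑ i, M i * ((y i - xs i)^2 / c i.castSucc) :=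
      Finset.sum_nonneg fun i _ => mul_nonneg (hM0 i)
        (div_nonneg (sq_nonneg _) (hc i.castSucc).le)
    have := Finset.sum_sub_distrib (f := fun i : Fin K =>
      -2 * (M i * (xs i * (y i - xs i) / c i.castSucc)))
      (g := fun i : Fin K => M i * ((y i - xs i)^2 / c i.castSucc)) (s := Finset.univ)
    rw [this] at key
    have h2 := key
    have h3 : ∑ i, (-2 * (M i * (xs i * (y i - xs i) / c i.castSucc)))
        = -2 * ∑ i, M i * (xs i * (y i - xs i) / c i.castSucc) := by
      rw [← Finset.mul_sum]
    nlinarith [h2, hnn, h3]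
  -- per-index identities
  have per1 : ∑ i, ((a i.castSucc - (y i)^2 / c i.castSucc) + (y i - xs i)^2 / c i.castSucc)
      = ∑ i, ((a i.castSucc - (xs i)^2 / c i.castSucc)
          - 2 * (xs i * (y i - xs i) / c i.castSucc)) := by
    refine Finset.sum_congr rfl fun i _ => ?_
    have hcne := (hc i.castSucc).ne'
    field_simp
    ring
  have per2 : ∀ i : Fin K, xs i * (y i - xs i) / c i.castSucc
      + M i * (xs i * (y i - xs i) / c i.castSucc) = ν * (y i - xs i) := by
    intro i
    have e : xs i * (1 + M i) = ν * c i.castSucc := by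
      simp only [hM]; exact hstat i
    have hcne := (hc i.castSucc).ne'
    field_simp
    linear_combination (y i - xs i) * e
  have sum2 : (∑ i, xs i * (y i - xs i) / c i.castSucc)
      + ∑ i, M i * (xs i * (y i - xs i) / c i.castSucc) = ν * ∑ i, (y i - xs i) := by
    rw [← Finset.sum_add_distrib, Finset.mul_sum]
    exact Finset.sum_congr rfl fun i _ => per2 i
  have hlastid : (a (Fin.last K) - (γ - ∑ i, y i)^2 / c (Fin.last K))
      + (∑ i, (y i - xs i))^2 / c (Fin.last K)
      = (a (Fin.last K) - (γ - ∑ i, xs i)^2 / c (Fin.last K))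
        + 2 * ν * ∑ i, (y i - xs i) := by
    have hD : ∑ i, (y i - xs i) = (∑ i, y i) - ∑ i, xs i := Finset.sum_sub_distrib _ _
    have hcne := (hc (Fin.last K)).ne'
    rw [hD]
    field_simp
    linear_combination (2*((∑ i, y i) - ∑ i, xs i)) * hlast
  -- assemble
  have split1 : ∑ i, ((a i.castSucc - (y i)^2 / c i.castSucc) + (y i - xs i)^2 / c i.castSucc)
      = (∑ i, (a i.castSucc - (y i)^2 / c i.castSucc)) + ∑ i, (y i - xs i)^2 / c i.castSucc :=
    Finset.sum_add_distrib
  have split2 : ∑ i, ((a i.castSucc - (xs i)^2 / c i.castSucc)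
        - 2 * (xs i * (y i - xs i) / c i.castSucc))
      = (∑ i, (a i.castSucc - (xs i)^2 / c i.castSucc))
        - 2 * ∑ i, (xs i * (y i - xs i) / c i.castSucc) := by
    rw [Finset.sum_sub_distrib, Finset.mul_sum]
  linarith [per1, sum2, hlastid, keyle, split1, split2]

lemma fin_sum_Iic {K : ℕ} (w : Fin K → ℝ) (WN : ℕ → ℝ)
    (h : ∀ i : Fin K, w i = WN i.val) (k : Fin K) :
    ∑ i ∈ Finset.Iic k, w i = ∑ n ∈ Finset.range (k.val+1), WN n := by
  classical
  have e1 : Finset.Iic k = Finset.univ.filter (fun i : Fin K => i.val ≤ k.val) := by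
    ext i
    simp only [Finset.mem_Iic, Finset.mem_filter, Finset.mem_univ, true_and]
    exact Fin.le_def
  rw [e1, Finset.sum_filter]
  have e2 : ∀ i : Fin K, (if i.val ≤ k.val then w i else 0)
      = (fun n => if n ≤ k.val then WN n else 0) i.val := by
    intro i
    show (if i.val ≤ k.val then w i else 0) = (if i.val ≤ k.val then WN i.val else 0)
    rw [h i]
  rw [Finset.sum_congr rfl (fun i _ => e2 i),
    Fin.sum_univ_eq_sum_range (fun n => if n ≤ k.val then WN n else 0) K,
    ← Finset.sum_filter]
  congr 1
  ext n
  simp only [Finset.mem_filter, Finset.mem_range]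
  have := k.isLt
  omega

lemma fin_sum_Ici {K : ℕ} (w : Fin K → ℝ) (WN : ℕ → ℝ)
    (h : ∀ i : Fin K, w i = WN i.val) (k : Fin K) :
    ∑ i ∈ Finset.Ici k, w i = ∑ n ∈ Finset.Ico k.val K, WN n := by
  classical
  have e1 : Finset.Ici k = Finset.univ.filter (fun i : Fin K => k.val ≤ i.val) := by
    ext i
    simp only [Finset.mem_Ici, Finset.mem_filter, Finset.mem_univ, true_and]
    exact Fin.le_def
  rw [e1, Finset.sum_filter]
  have e2 : ∀ i : Fin K, (if k.val ≤ i.val then w i else 0)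
      = (fun n => if k.val ≤ n then WN n else 0) i.val := by
    intro i
    show (if k.val ≤ i.val then w i else 0) = (if k.val ≤ i.val then WN i.val else 0)
    rw [h i]
  rw [Finset.sum_congr rfl (fun i _ => e2 i),
    Fin.sum_univ_eq_sum_range (fun n => if k.val ≤ n then WN n else 0) K,
    ← Finset.sum_filter]
  congr 1
  ext n
  simp only [Finset.mem_filter, Finset.mem_range, Finset.mem_Ico]
  omega


set_option maxHeartbeats 4000000 in
/-- Optimal path for γ-high points (KKT): with M = K+1 scales, γ^{l-1} ≤ γ < γ^l, maximizing
f(x₁,…,x_{M-1}) = Σᵢ(∇λᵢ − xᵢ²/(σᵢ²∇λᵢ)) + (∇λ_M − (γ−Σxᵢ)²/(σ_M²∇λ_M)) under the cumulative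
constraints has a unique maximizer given by the optimal path, with maximum value
E_γ = (1 − λ^{l-1}) − (γ − ∫₀^{λ^{l-1}} σ²/σ̄)²/∫_{λ^{l-1}}^1 σ². -/
theorem stmt_6
    (K m : ℕ) (hm : 0 < m)
    (lam : Fin (K + 2) → ℝ) (hlam : StrictMono lam) (hlam0 : lam 0 = 0)
    (hlam1 : lam (Fin.last (K + 1)) = 1)
    (σv : Fin (K + 1) → ℝ) (hσv : ∀ i, 0 < σv i)
    (σ : ℝ → ℝ) (hσ0 : σ 0 = σv 0)
    (hσdef : ∀ i : Fin (K + 1), ∀ s ∈ Set.Ioc (lam i.castSucc) (lam i.succ), σ s = σv i)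
    (lamb : Fin (m + 1) → ℝ) (hlambmono : StrictMono lamb) (hlamb0 : lamb 0 = 0)
    (hlamb1 : lamb (Fin.last m) = 1)
    (sbv : Fin m → ℝ) (hsbv : ∀ j, 0 < sbv j) (hsbvdec : StrictAnti sbv)
    (σbar : ℝ → ℝ) (hσbar0 : σbar 0 = sbv ⟨0, hm⟩)
    (hσbardef : ∀ j : Fin m, ∀ s ∈ Set.Ioc (lamb j.castSucc) (lamb j.succ), σbar s = sbv j)
    (hsubgrid : ∀ j : Fin (m + 1), ∃ i : Fin (K + 2), lamb j = lam i)
    (hdom : ∀ t ∈ Set.Icc (0:ℝ) 1,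
      (∫ r in (0:ℝ)..t, (σ r) ^ 2) ≤ ∫ r in (0:ℝ)..t, (σbar r) ^ 2)
    (hblock : ∀ j : Fin m, (∫ s in (lamb j.castSucc)..(lamb j.succ), (σ s) ^ 2)
      = (sbv j) ^ 2 * (lamb j.succ - lamb j.castSucc))
    (l : Fin m) (γ : ℝ)
    (hγlow : (if l.castSucc = 0 then (0:ℝ)
      else ∫ s in (0:ℝ)..1, (σ s) ^ 2 / σbar (min s (lamb l.castSucc))) ≤ γ)
    (hγup : γ < ∫ s in (0:ℝ)..1, (σ s) ^ 2 / σbar (min s (lamb l.succ)))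
    (xstar : Fin K → ℝ)
    (hxstar : ∀ i : Fin K, xstar i =
      if lam (i.castSucc).succ ≤ lamb l.castSucc then
        ∫ s in (lam (i.castSucc).castSucc)..(lam (i.castSucc).succ), (σ s) ^ 2 / σbar s
      else
        (∫ s in (lam (i.castSucc).castSucc)..(lam (i.castSucc).succ), (σ s) ^ 2) /
          (∫ s in (lamb l.castSucc)..1, (σ s) ^ 2) *
          (γ - ∫ s in (0:ℝ)..(lamb l.castSucc), (σ s) ^ 2 / σbar s)) :
    (∀ k : Fin K, 0 ≤ ∑ i ∈ Finset.Iic k,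
        ((lam (i.castSucc).succ - lam (i.castSucc).castSucc) -
          (xstar i) ^ 2 / ((σv i.castSucc) ^ 2 *
            (lam (i.castSucc).succ - lam (i.castSucc).castSucc)))) ∧
    (∀ x : Fin K → ℝ,
      (∀ k : Fin K, 0 ≤ ∑ i ∈ Finset.Iic k,
        ((lam (i.castSucc).succ - lam (i.castSucc).castSucc) -
          (x i) ^ 2 / ((σv i.castSucc) ^ 2 *
            (lam (i.castSucc).succ - lam (i.castSucc).castSucc)))) →
      (∑ i : Fin K, ((lam (i.castSucc).succ - lam (i.castSucc).castSucc) -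
          (x i) ^ 2 / ((σv i.castSucc) ^ 2 *
            (lam (i.castSucc).succ - lam (i.castSucc).castSucc)))) +
        ((lam (Fin.last K).succ - lam (Fin.last K).castSucc) -
          (γ - ∑ i, x i) ^ 2 / ((σv (Fin.last K)) ^ 2 *
            (lam (Fin.last K).succ - lam (Fin.last K).castSucc)))
      ≤ (∑ i : Fin K, ((lam (i.castSucc).succ - lam (i.castSucc).castSucc) -
          (xstar i) ^ 2 / ((σv i.castSucc) ^ 2 *
            (lam (i.castSucc).succ - lam (i.castSucc).castSucc)))) +
        ((lam (Fin.last K).succ - lam (Fin.last K).castSucc) -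
          (γ - ∑ i, xstar i) ^ 2 / ((σv (Fin.last K)) ^ 2 *
            (lam (Fin.last K).succ - lam (Fin.last K).castSucc)))) ∧
    (∀ x : Fin K → ℝ,
      (∀ k : Fin K, 0 ≤ ∑ i ∈ Finset.Iic k,
        ((lam (i.castSucc).succ - lam (i.castSucc).castSucc) -
          (x i) ^ 2 / ((σv i.castSucc) ^ 2 *
            (lam (i.castSucc).succ - lam (i.castSucc).castSucc)))) →
      ((∑ i : Fin K, ((lam (i.castSucc).succ - lam (i.castSucc).castSucc) -
          (x i) ^ 2 / ((σv i.castSucc) ^ 2 *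
            (lam (i.castSucc).succ - lam (i.castSucc).castSucc)))) +
        ((lam (Fin.last K).succ - lam (Fin.last K).castSucc) -
          (γ - ∑ i, x i) ^ 2 / ((σv (Fin.last K)) ^ 2 *
            (lam (Fin.last K).succ - lam (Fin.last K).castSucc)))
      = (∑ i : Fin K, ((lam (i.castSucc).succ - lam (i.castSucc).castSucc) -
          (xstar i) ^ 2 / ((σv i.castSucc) ^ 2 *
            (lam (i.castSucc).succ - lam (i.castSucc).castSucc)))) +
        ((lam (Fin.last K).succ - lam (Fin.last K).castSucc) -
          (γ - ∑ i, xstar i) ^ 2 / ((σv (Fin.last K)) ^ 2 *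
            (lam (Fin.last K).succ - lam (Fin.last K).castSucc)))) →
      x = xstar) ∧
    (∑ i : Fin K, ((lam (i.castSucc).succ - lam (i.castSucc).castSucc) -
        (xstar i) ^ 2 / ((σv i.castSucc) ^ 2 *
          (lam (i.castSucc).succ - lam (i.castSucc).castSucc)))) +
      ((lam (Fin.last K).succ - lam (Fin.last K).castSucc) -
        (γ - ∑ i, xstar i) ^ 2 / ((σv (Fin.last K)) ^ 2 *
          (lam (Fin.last K).succ - lam (Fin.last K).castSucc)))
    = (1 - lamb l.castSucc) -
        (γ - ∫ s in (0:ℝ)..(lamb l.castSucc), (σ s) ^ 2 / σbar s) ^ 2 /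
          ∫ s in (lamb l.castSucc)..1, (σ s) ^ 2 := by
    classical
  -- ℕ-indexed grids
  set L : ℕ → ℝ := fun n => lam ⟨min n (K+1), by omega⟩ with hLdef
  set Lb : ℕ → ℝ := fun j => lamb ⟨min j m, by omega⟩ with hLbdef
  set sv : ℕ → ℝ := fun n => σv ⟨min n K, by omega⟩ with hsvdef
  set sb : ℕ → ℝ := fun j => sbv ⟨min j (m-1), by omega⟩ with hsbdef
  have hlamL : ∀ i : Fin (K+2), lam i = L i.val := by
    intro i; simp only [hLdef]; congr 1; ext; simp; omega
  have hLbval : ∀ j : Fin (m+1), lamb j = Lb j.val := by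
    intro j; simp only [hLbdef]; congr 1; ext; simp; omega
  have hsvval : ∀ i : Fin (K+1), σv i = sv i.val := by
    intro i; simp only [hsvdef]; congr 1; ext; simp; omega
  have hsbval : ∀ j : Fin m, sbv j = sb j.val := by
    intro j; simp only [hsbdef]; congr 1; ext; simp; omega
  have hLmono : Monotone L := by
    intro n n' h
    simp only [hLdef]
    exact hlam.monotone (by simp [Fin.mk_le_mk]; omega)
  have hLbmono : Monotone Lb := by
    intro n n' h
    simp only [hLbdef]
    exact hlambmono.monotone (by simp [Fin.mk_le_mk]; omega)
  have hLle : ∀ {p q : ℕ}, p ≤ K+1 → q ≤ K+1 → (L p ≤ L q ↔ p ≤ q) := by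
    intro p q hp hq
    simp only [hLdef]
    rw [hlam.le_iff_le]
    simp [Fin.mk_le_mk]; omega
  have hLlt : ∀ {p q : ℕ}, p ≤ K+1 → q ≤ K+1 → (L p < L q ↔ p < q) := by
    intro p q hp hq
    simp only [hLdef]
    rw [hlam.lt_iff_lt]
    simp [Fin.mk_lt_mk]; omega
  have hLinj : ∀ {p q : ℕ}, p ≤ K+1 → q ≤ K+1 → L p = L q → p = q := by
    intro p q hp hq h
    have h1 := (hLle hp hq).mp h.le
    have h2 := (hLle hq hp).mp h.ge
    omega
  have hLblt : ∀ {p q : ℕ}, p ≤ m → q ≤ m → (Lb p < Lb q ↔ p < q) := by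
    intro p q hp hq
    simp only [hLbdef]
    rw [hlambmono.lt_iff_lt]
    simp [Fin.mk_lt_mk]; omega
  have hL0 : L 0 = 0 := by
    rw [← hlam0, hlamL]; norm_num
  have hL1 : L (K+1) = 1 := by
    rw [← hlam1, hlamL]; rfl
  have hLb0 : Lb 0 = 0 := by rw [← hlamb0, hLbval]; norm_num
  have hLbm : Lb m = 1 := by
    rw [← hlamb1, hLbval]; rfl
  have hLnonneg : ∀ n, 0 ≤ L n := fun n => hL0 ▸ hLmono (Nat.zero_le n)
  -- subgrid indices
  choose NF hNF using hsubgrid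
  set N : ℕ → ℕ := fun j => (NF ⟨min j m, by omega⟩).val with hNdef
  have hNle : ∀ j, N j ≤ K+1 := fun j => by
    simp only [hNdef]; omega
  have hNL : ∀ j, j ≤ m → L (N j) = Lb j := by
    intro j hj
    have e1 : Lb j = lamb ⟨min j m, by omega⟩ := by
      simp only [hLbdef]
    rw [e1, hNF ⟨min j m, by omega⟩, hlamL]
  have hN0 : N 0 = 0 := hLinj (hNle 0) (Nat.zero_le _) (by rw [hNL 0 (Nat.zero_le _), hLb0, hL0])
  have hNm : N m = K+1 := hLinj (hNle m) (le_refl _) (by rw [hNL m (le_refl _), hLbm, hL1])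
  have hNmono : ∀ {j j' : ℕ}, j ≤ j' → j' ≤ m → N j ≤ N j' := by
    intro j j' h hj'
    rw [← hLle (hNle j) (hNle j'), hNL j (by omega), hNL j' hj']
    exact hLbmono h
  have hNlt : ∀ {j j' : ℕ}, j < j' → j' ≤ m → N j < N j' := by
    intro j j' h hj'
    rw [← hLlt (hNle j) (hNle j'), hNL j (by omega), hNL j' hj']
    exact (hLblt (by omega) hj').mpr h
  -- block assignment
  set JN : ℕ → ℕ := fun n => Nat.findGreatest (fun j => Lb j ≤ L n) (m-1) with hJdef
  have hJm : ∀ n, JN n ≤ m - 1 := fun n => by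
    simp only [hJdef]; exact Nat.findGreatest_le _
  have hJlt : ∀ n, JN n < m := fun n => by have := hJm n; omega
  have hJle : ∀ n, Lb (JN n) ≤ L n := by
    intro n; simp only [hJdef]
    exact Nat.findGreatest_spec (P := fun j => Lb j ≤ L n) (Nat.zero_le _) (show Lb 0 ≤ L n by rw [hLb0]; exact hLnonneg n)
  have hstep : ∀ n, n ≤ K → ∀ j, j ≤ m → L n < Lb j → L (n+1) ≤ Lb j := by
    intro n hn j hj hlt
    rw [← hNL j hj] at hlt ⊢
    have h1 : n < N j := (hLlt (by omega) (hNle j)).mp hlt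
    exact hLmono h1
  have hJsucc : ∀ n, n ≤ K → L (n+1) ≤ Lb (JN n + 1) := by
    intro n hn
    by_cases hcase : JN n + 1 ≤ m - 1
    · have hnp : ¬ (Lb (JN n + 1) ≤ L n) := by
        have := Nat.findGreatest_is_greatest (P := fun j => Lb j ≤ L n)
          (by simp only [hJdef] at *; omega) hcase
        simpa only [hJdef] using this
      exact hstep n hn (JN n + 1) (by omega) (lt_of_not_ge hnp)
    · have he : JN n + 1 = m := by have := hJm n; omega
      rw [he, hLbm]
      calc L (n+1) ≤ L (K+1) := hLmono (by omega)
        _ = 1 := hL1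
  have hJmono : ∀ {n n' : ℕ}, n ≤ n' → JN n ≤ JN n' := by
    intro n n' h
    have h1 : Lb (JN n) ≤ L n' := le_trans (hJle n) (hLmono h)
    simp only [hJdef] at h1 ⊢
    exact Nat.le_findGreatest (by simpa only [hJdef] using hJm n) h1
  have hJge : ∀ {j n : ℕ}, j ≤ m - 1 → Lb j ≤ L n → j ≤ JN n := by
    intro j n hj h
    simp only [hJdef]
    exact Nat.le_findGreatest hj h
  have hsbpos : ∀ j, 0 < sb j := fun j => by simp only [hsbdef]; exact hsbv _
  have hsvpos : ∀ n, 0 < sv n := fun n => by simp only [hsvdef]; exact hσv _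
  have hsbanti : ∀ {j j' : ℕ}, j ≤ j' → sb j' ≤ sb j := by
    intro j j' h
    simp only [hsbdef]
    exact (hsbvdec.antitone (by simp [Fin.mk_le_mk]; omega))
  have hσbarN : ∀ n, n ≤ K → ∀ s ∈ Set.Ioc (L n) (L (n+1)), σbar s = sb (JN n) := by
    intro n hn s hs
    have hj := hJlt n
    have e : sbv ⟨JN n, hj⟩ = sb (JN n) := hsbval ⟨JN n, hj⟩
    rw [← e]
    refine hσbardef ⟨JN n, hj⟩ s ⟨?_, ?_⟩
    · rw [hLbval]
      exact lt_of_le_of_lt (hJle n) hs.1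
    · rw [hLbval]
      exact le_trans hs.2 (hJsucc n hn)
  have hσN : ∀ n, n ≤ K → ∀ s ∈ Set.Ioc (L n) (L (n+1)), σ s = sv n := by
    intro n hn s hs
    have e : σv ⟨n, by omega⟩ = sv n := hsvval ⟨n, by omega⟩
    rw [← e]
    refine hσdef ⟨n, by omega⟩ s ⟨?_, ?_⟩
    · rw [hlamL]; exact hs.1
    · rw [hlamL]; exact hs.2

  -- block lengths and masses
  set aN : ℕ → ℝ := fun n => L (n+1) - L n with haNdef
  set cN : ℕ → ℝ := fun n => sv n ^ 2 * aN n with hcNdef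
  have haNpos : ∀ n, n ≤ K → 0 < aN n := by
    intro n hn
    have := (hLlt (p := n) (q := n+1) (by omega) (by omega)).mpr (by omega)
    simp only [haNdef]; linarith
  have haNnn : ∀ n, 0 ≤ aN n := by
    intro n
    have := hLmono (Nat.le_succ n)
    simp only [haNdef]; linarith
  have hcNpos : ∀ n, n ≤ K → 0 < cN n := by
    intro n hn
    simp only [hcNdef]
    exact mul_pos (pow_pos (hsvpos n) 2) (haNpos n hn)
  have hcNnn : ∀ n, 0 ≤ cN n := by
    intro n
    simp only [hcNdef]
    exact mul_nonneg (sq_nonneg _) (haNnn n)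
  have tele : ∀ p q, p ≤ q → ∑ n ∈ Finset.Ico p q, aN n = L q - L p := by
    intro p q hpq
    have h1 : ∀ r, ∑ n ∈ Finset.range r, aN n = L r - L 0 := by
      intro r
      simp only [haNdef]
      exact Finset.sum_range_sub L r
    rw [Finset.sum_Ico_eq_sub _ hpq, h1, h1]; ring
  -- chain computations
  have chainC : ∀ p q, p ≤ q → q ≤ K+1 →
      ∫ s in (L p)..(L q), (σ s)^2 = ∑ n ∈ Finset.Ico p q, cN n := by
    intro p q hpq hq
    rw [chain_eq (fun s => (σ s)^2) L (fun n => sv n ^ 2) hLmono hpq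
      (fun n hpn hnq s hs => by show (σ s)^2 = sv n ^ 2; rw [hσN n (by omega) s hs])]
  have chainCsb : ∀ p q, p ≤ q → q ≤ K+1 →
      ∫ s in (L p)..(L q), (σ s)^2 / σbar s = ∑ n ∈ Finset.Ico p q, cN n / sb (JN n) := by
    intro p q hpq hq
    rw [chain_eq (fun s => (σ s)^2 / σbar s) L (fun n => sv n ^ 2 / sb (JN n)) hLmono hpq
      (fun n hpn hnq s hs => by
        show (σ s)^2 / σbar s = sv n ^ 2 / sb (JN n)
        rw [hσN n (by omega) s hs, hσbarN n (by omega) s hs])]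
    refine Finset.sum_congr rfl fun n _ => ?_
    simp only [hcNdef, haNdef]; ring
  have chainCsb2 : ∀ p q, p ≤ q → q ≤ K+1 →
      ∫ s in (L p)..(L q), (σ s)^2 / (σbar s)^2
        = ∑ n ∈ Finset.Ico p q, cN n / sb (JN n) ^ 2 := by
    intro p q hpq hq
    rw [chain_eq (fun s => (σ s)^2 / (σbar s)^2) L (fun n => sv n ^ 2 / sb (JN n) ^ 2) hLmono hpq
      (fun n hpn hnq s hs => by
        show (σ s)^2 / (σbar s)^2 = sv n ^ 2 / sb (JN n) ^ 2
        rw [hσN n (by omega) s hs, hσbarN n (by omega) s hs])]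
    refine Finset.sum_congr rfl fun n _ => ?_
    simp only [hcNdef, haNdef]; ring
  have chainSb2 : ∀ p q, p ≤ q → q ≤ K+1 →
      ∫ s in (L p)..(L q), (σbar s)^2 = ∑ n ∈ Finset.Ico p q, sb (JN n) ^ 2 * aN n := by
    intro p q hpq hq
    rw [chain_eq (fun s => (σbar s)^2) L (fun n => sb (JN n) ^ 2) hLmono hpq
      (fun n hpn hnq s hs => by show (σbar s)^2 = sb (JN n) ^ 2; rw [hσbarN n (by omega) s hs])]
  -- σ̄-blocks decompose into σ-blocks
  have blockJ : ∀ j, j < m → ∀ n, N j ≤ n → n < N (j+1) → JN n = j := by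
    intro j hj n h1 h2
    have hnK : n ≤ K := by have := hNle (j+1); omega
    have hge : j ≤ JN n := hJge (by omega)
      (by rw [← hNL j (by omega)]; exact hLmono h1)
    by_contra hne
    have hgt : j + 1 ≤ JN n := by omega
    have c1 : Lb (j+1) ≤ Lb (JN n) := hLbmono hgt
    have c2 : Lb (JN n) ≤ L n := hJle n
    have c3 : L (n+1) ≤ Lb (j+1) := by
      rw [← hNL (j+1) (by omega)]
      exact hLmono h2
    have c4 : L n < L (n+1) := by have := haNpos n hnK; simp only [haNdef] at this; linarith
    linarith
  have blockSum : ∀ j, j < m → ∑ n ∈ Finset.Ico (N j) (N (j+1)), cN n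
      = sb j ^ 2 * (Lb (j+1) - Lb j) := by
    intro j hj
    have hNN : N j ≤ N (j+1) := hNmono (by omega) (by omega)
    have := chainC (N j) (N (j+1)) hNN (hNle _)
    rw [hNL j (by omega), hNL (j+1) (by omega)] at this
    rw [← this]
    have e1 : lamb ((⟨j, hj⟩ : Fin m).castSucc) = Lb j := hLbval _
    have e2 : lamb ((⟨j, hj⟩ : Fin m).succ) = Lb (j+1) := hLbval _
    have e3 : sbv (⟨j, hj⟩ : Fin m) = sb j := hsbval _
    have := hblock ⟨j, hj⟩
    rw [e1, e2, e3] at this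
    exact this
  have blockA : ∀ j, j < m → ∑ n ∈ Finset.Ico (N j) (N (j+1)), aN n = Lb (j+1) - Lb j := by
    intro j hj
    rw [tele _ _ (hNmono (by omega) (by omega)), hNL j (by omega), hNL (j+1) (by omega)]
  -- kink identities
  have kink : ∀ j, j ≤ m →
      (∑ n ∈ Finset.range (N j), cN n = ∑ n ∈ Finset.range (N j), sb (JN n) ^ 2 * aN n) ∧
      (∑ n ∈ Finset.range (N j), cN n / sb (JN n) ^ 2 = Lb j) := by
    intro j
    induction j with
    | zero => intro _; rw [hN0, hLb0]; simp
    | succ j ih =>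
      intro hj1
      have hj : j < m := by omega
      obtain ⟨ih1, ih2⟩ := ih (by omega)
      have hNN : N j ≤ N (j+1) := hNmono (by omega) (by omega)
      have split : ∀ f : ℕ → ℝ, ∑ n ∈ Finset.range (N (j+1)), f n
          = (∑ n ∈ Finset.range (N j), f n) + ∑ n ∈ Finset.Ico (N j) (N (j+1)), f n := by
        intro f
        simp only [Finset.range_eq_Ico]
        rw [← Finset.sum_Ico_consecutive f (Nat.zero_le _) hNN]
      have hcongr1 : ∑ n ∈ Finset.Ico (N j) (N (j+1)), sb (JN n) ^ 2 * aN n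
          = ∑ n ∈ Finset.Ico (N j) (N (j+1)), sb j ^ 2 * aN n := by
        refine Finset.sum_congr rfl fun n hn => ?_
        rw [blockJ j hj n (Finset.mem_Ico.mp hn).1 (Finset.mem_Ico.mp hn).2]
      have hcongr2 : ∑ n ∈ Finset.Ico (N j) (N (j+1)), cN n / sb (JN n) ^ 2
          = ∑ n ∈ Finset.Ico (N j) (N (j+1)), cN n / sb j ^ 2 := by
        refine Finset.sum_congr rfl fun n hn => ?_
        rw [blockJ j hj n (Finset.mem_Ico.mp hn).1 (Finset.mem_Ico.mp hn).2]
      constructor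
      · rw [split, split, ih1, hcongr1, ← Finset.mul_sum, blockA j hj, blockSum j hj]
      · rw [split, ih2, hcongr2, ← Finset.sum_div, blockSum j hj]
        have hsbne : sb j ≠ 0 := (hsbpos j).ne'
        field_simp
        ring
  -- domination in sum form
  have hdomSum : ∀ q, q ≤ K+1 → ∑ n ∈ Finset.range q, cN n
      ≤ ∑ n ∈ Finset.range q, sb (JN n) ^ 2 * aN n := by
    intro q hq
    have h1 := hdom (L q) ⟨hLnonneg q, by rw [← hL1]; exact hLmono (by omega)⟩
    rw [← hL0] at h1
    rw [chainC 0 q (by omega) hq, chainSb2 0 q (by omega) hq] at h1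
    rw [Finset.range_eq_Ico]
    exact h1

  -- the kink index
  set n₀ : ℕ := N l.val with hn0def
  have hlm : l.val < m := l.isLt
  have hn0K : n₀ ≤ K := by
    have := hNlt (show l.val < m from hlm) (le_refl m)
    rw [hNm] at this; omega
  have hLbl : lamb l.castSucc = Lb l.val := hLbval l.castSucc
  have hLn0 : L n₀ = Lb l.val := hNL l.val (by omega)
  have hlowiff : ∀ i : Fin K, (lam (i.castSucc).succ ≤ lamb l.castSucc ↔ i.val < n₀) := by
    intro i
    rw [hlamL, hLbl, ← hLn0]
    have hv : (((i.castSucc).succ : Fin (K+2)) : ℕ) = i.val + 1 := rfl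
    rw [hv, hLle (by omega) (by omega : n₀ ≤ K+1)]
    omega
  set A : ℝ := ∑ n ∈ Finset.range n₀, cN n / sb (JN n) with hAdef
  set C : ℝ := ∑ n ∈ Finset.Ico n₀ (K+1), cN n with hCdef
  have hAint : ∫ s in (0:ℝ)..(lamb l.castSucc), (σ s)^2 / σbar s = A := by
    rw [hLbl, ← hLn0, ← hL0, chainCsb 0 n₀ (by omega) (by omega), hAdef,
      Finset.range_eq_Ico]
  have hCint : ∫ s in (lamb l.castSucc)..(1:ℝ), (σ s)^2 = C := by
    rw [hLbl, ← hLn0, ← hL1, chainC n₀ (K+1) (by omega) (le_refl _), hCdef]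
  have hCpos : 0 < C := by
    rw [hCdef]
    refine Finset.sum_pos' (fun n _ => hcNnn n)
      ⟨K, Finset.mem_Ico.mpr ⟨hn0K, by omega⟩, hcNpos K (le_refl K)⟩
  set ν : ℝ := (γ - A)/C with hνdef
  have hνC : γ - A = ν * C := by
    rw [hνdef, div_mul_cancel₀ _ hCpos.ne']
  -- conversion of the upper gamma bound
  set n₁ : ℕ := N (l.val + 1) with hn1def
  have hn01 : n₀ ≤ n₁ := hNmono (by omega) (by omega)
  have hn1K : n₁ ≤ K+1 := hNle _
  have hLn1 : L n₁ = Lb (l.val+1) := hNL _ (by omega)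
  have hlsucc : lamb l.succ = Lb (l.val+1) := hLbval l.succ
  have hJeqlow : ∀ n, n₀ ≤ n → n < n₁ → JN n = l.val := fun n h1 h2 =>
    blockJ l.val hlm n h1 h2
  have hsbl : sbv l = sb l.val := hsbval l
  have hγupS : γ < A + C / sb l.val := by
    have conv : ∫ s in (0:ℝ)..(1:ℝ), (σ s)^2 / σbar (min s (lamb l.succ))
        = A + C / sb l.val := by
      rw [← hL0, ← hL1]
      rw [chain_eq (fun s => (σ s)^2 / σbar (min s (lamb l.succ))) L
        (fun n => if n < n₁ then sv n ^ 2 / sb (JN n) else sv n ^ 2 / sb l.val)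
        hLmono (by omega : 0 ≤ K+1) ?_]
      · rw [← Finset.sum_Ico_consecutive _ (Nat.zero_le n₀) (by omega : n₀ ≤ K+1)]
        congr 1
        · rw [hAdef, Finset.range_eq_Ico]
          refine Finset.sum_congr rfl fun n hn => ?_
          obtain ⟨_, hn2⟩ := Finset.mem_Ico.mp hn
          rw [if_pos (by omega)]
          simp only [hcNdef, haNdef]; ring
        · rw [hCdef, Finset.sum_div]
          refine Finset.sum_congr rfl fun n hn => ?_
          obtain ⟨hna, hnb⟩ := Finset.mem_Ico.mp hn
          by_cases hcase : n < n₁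
          · rw [if_pos hcase, hJeqlow n hna hcase]
            simp only [hcNdef, haNdef]; ring
          · rw [if_neg hcase]
            simp only [hcNdef, haNdef]; ring
      · intro n hn0' hnq s hs
        by_cases hcase : n < n₁
        · have hmin : min s (lamb l.succ) = s := by
            apply min_eq_left
            calc s ≤ L (n+1) := hs.2
              _ ≤ L n₁ := hLmono (by omega)
              _ = Lb (l.val+1) := hLn1
              _ = lamb l.succ := hlsucc.symm
          show (σ s)^2 / σbar (min s (lamb l.succ)) = if n < n₁ then sv n ^ 2 / sb (JN n) else sv n ^ 2 / sb l.val
          rw [hmin, if_pos hcase, hσN n (by omega) s hs, hσbarN n (by omega) s hs]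
        · have hlt : lamb l.succ < s := by
            calc lamb l.succ = Lb (l.val+1) := hlsucc
              _ = L n₁ := hLn1.symm
              _ ≤ L n := hLmono (by omega)
              _ < s := hs.1
          have hmin : min s (lamb l.succ) = lamb l.succ := min_eq_right hlt.le
          have hσb : σbar (lamb l.succ) = sb l.val := by
            rw [← hsbl]
            exact hσbardef l (lamb l.succ) ⟨hlambmono (Fin.castSucc_lt_succ : l.castSucc < l.succ), le_refl _⟩
          show (σ s)^2 / σbar (min s (lamb l.succ)) = if n < n₁ then sv n ^ 2 / sb (JN n) else sv n ^ 2 / sb l.val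
          rw [hmin, if_neg hcase, hσN n (by omega) s hs, hσb]
    rw [conv] at hγup
    exact hγup
  have hl0iff : (l.castSucc = (0 : Fin (m+1))) ↔ l.val = 0 := by
    rw [Fin.ext_iff]; rfl
  have hνlow : 0 < l.val → 1 ≤ ν * sb (l.val - 1) := by
    intro hl0
    have hj1 : l.val - 1 < m := by omega
    have hσb_at : σbar (lamb l.castSucc) = sb (l.val - 1) := by
      have e1 : lamb ((⟨l.val - 1, hj1⟩ : Fin m).castSucc) = Lb (l.val - 1) := hLbval _
      have e2 : lamb ((⟨l.val - 1, hj1⟩ : Fin m).succ) = Lb (l.val - 1 + 1) := hLbval _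
      have e3 : Lb (l.val - 1 + 1) = Lb l.val := by congr 1; omega
      have := hσbardef ⟨l.val - 1, hj1⟩ (lamb l.castSucc)
        ⟨by rw [e1, hLbl]; exact (hLblt (by omega) (by omega)).mpr (by omega),
         by rw [e2, e3, hLbl]⟩
      rw [this, hsbval]
    have conv2 : ∫ s in (0:ℝ)..(1:ℝ), (σ s)^2 / σbar (min s (lamb l.castSucc))
        = A + C / sb (l.val - 1) := by
      rw [← hL0, ← hL1]
      rw [chain_eq (fun s => (σ s)^2 / σbar (min s (lamb l.castSucc))) L
        (fun n => if n < n₀ then sv n ^ 2 / sb (JN n) else sv n ^ 2 / sb (l.val - 1))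
        hLmono (by omega : 0 ≤ K+1) ?_]
      · rw [← Finset.sum_Ico_consecutive _ (Nat.zero_le n₀) (by omega : n₀ ≤ K+1)]
        congr 1
        · rw [hAdef, Finset.range_eq_Ico]
          refine Finset.sum_congr rfl fun n hn => ?_
          obtain ⟨_, hn2⟩ := Finset.mem_Ico.mp hn
          rw [if_pos (by omega)]
          simp only [hcNdef, haNdef]; ring
        · rw [hCdef, Finset.sum_div]
          refine Finset.sum_congr rfl fun n hn => ?_
          obtain ⟨hna, hnb⟩ := Finset.mem_Ico.mp hn
          rw [if_neg (by omega)]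
          simp only [hcNdef, haNdef]; ring
      · intro n hn0' hnq s hs
        by_cases hcase : n < n₀
        · have hmin : min s (lamb l.castSucc) = s := by
            apply min_eq_left
            calc s ≤ L (n+1) := hs.2
              _ ≤ L n₀ := hLmono (by omega)
              _ = Lb l.val := hLn0
              _ = lamb l.castSucc := hLbl.symm
          show (σ s)^2 / σbar (min s (lamb l.castSucc)) = if n < n₀ then sv n ^ 2 / sb (JN n) else sv n ^ 2 / sb (l.val - 1)
          rw [hmin, if_pos hcase, hσN n (by omega) s hs, hσbarN n (by omega) s hs]
        · have hlt : lamb l.castSucc < s := by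
            calc lamb l.castSucc = Lb l.val := hLbl
              _ = L n₀ := hLn0.symm
              _ ≤ L n := hLmono (by omega)
              _ < s := hs.1
          have hmin : min s (lamb l.castSucc) = lamb l.castSucc := min_eq_right hlt.le
          show (σ s)^2 / σbar (min s (lamb l.castSucc)) = if n < n₀ then sv n ^ 2 / sb (JN n) else sv n ^ 2 / sb (l.val - 1)
          rw [hmin, if_neg hcase, hσN n (by omega) s hs, hσb_at]
    rw [if_neg (fun h => absurd (hl0iff.mp h) (by omega)), conv2] at hγlow
    have hsb := hsbpos (l.val - 1)
    have h1 : C / sb (l.val - 1) ≤ γ - A := by linarith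
    have h2 : C ≤ (γ - A) * sb (l.val - 1) := (div_le_iff₀ hsb).mp h1
    rw [hνdef, div_mul_eq_mul_div, le_div_iff₀ hCpos, one_mul]
    linarith
  have hν0 : 0 ≤ ν := by
    by_cases hl0 : l.val = 0
    · have hn00 : n₀ = 0 := by rw [hn0def, hl0, hN0]
      have hA0 : A = 0 := by rw [hAdef, hn00]; simp
      have hγ0 : (0:ℝ) ≤ γ := by rwa [if_pos (hl0iff.mpr hl0)] at hγlow
      rw [hνdef, hA0, sub_zero]
      exact div_nonneg hγ0 hCpos.le
    · have h1 := hνlow (by omega)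
      nlinarith [hsbpos (l.val - 1)]
  have hνup : ν * sb l.val < 1 := by
    have hsb := hsbpos l.val
    have h1 : γ - A < C / sb l.val := by linarith [hγupS]
    rw [hνdef, div_mul_eq_mul_div, div_lt_one hCpos]
    calc (γ - A) * sb l.val < (C / sb l.val) * sb l.val :=
          mul_lt_mul_of_pos_right h1 hsb
      _ = C := div_mul_cancel₀ _ hsb.ne'
  -- the optimal point in ℕ-form
  set XS : ℕ → ℝ := fun n => if n < n₀ then cN n / sb (JN n) else ν * cN n with hXSdef
  have hxstarN : ∀ i : Fin K, xstar i = XS i.val := by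
    intro i
    rw [hxstar i]
    have hvc : lam ((i.castSucc).castSucc) = L i.val := hlamL _
    have hvs : lam ((i.castSucc).succ) = L (i.val+1) := hlamL _
    simp only [hXSdef]
    by_cases hcase : i.val < n₀
    · rw [if_pos ((hlowiff i).mpr hcase), if_pos hcase, hvc, hvs,
        chainCsb i.val (i.val+1) (by omega) (by omega),
        Finset.sum_Ico_succ_top (le_refl _), Finset.Ico_self, Finset.sum_empty, zero_add]
    · rw [if_neg (fun h => hcase ((hlowiff i).mp h)), if_neg hcase, hvc, hvs,
        chainC i.val (i.val+1) (by omega) (by omega), hCint, hAint, hνC,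
        Finset.sum_Ico_succ_top (le_refl _), Finset.Ico_self, Finset.sum_empty, zero_add,
        mul_comm ν C, ← mul_assoc, div_mul_cancel₀ _ hCpos.ne', mul_comm]

  have hXSsq : ∀ n, n ≤ K → XS n ^ 2 / cN n
      = if n < n₀ then cN n / sb (JN n) ^ 2 else ν ^ 2 * cN n := by
    intro n hn
    have hc := (hcNpos n hn).ne'
    have hsb := (hsbpos (JN n)).ne'
    simp only [hXSdef]
    by_cases hcase : n < n₀
    · rw [if_pos hcase, if_pos hcase,
        div_eq_div_iff hc (pow_ne_zero 2 hsb), div_pow,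
        div_mul_cancel₀ _ (pow_ne_zero 2 hsb), sq]
    · rw [if_neg hcase, if_neg hcase, mul_pow, sq (cN n), ← mul_assoc,
        mul_div_cancel_right₀ _ hc]
  have hsplitgen : ∀ p q : ℕ, p ≤ q → ∀ f : ℕ → ℝ, ∑ n ∈ Finset.range q, f n
      = (∑ n ∈ Finset.range p, f n) + ∑ n ∈ Finset.Ico p q, f n := by
    intro p q hpq f
    simp only [Finset.range_eq_Ico]
    rw [← Finset.sum_Ico_consecutive f (Nat.zero_le _) hpq]
  have boundIco : ∀ j q, j < m → N j ≤ q → q ≤ K+1 →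
      ∑ n ∈ Finset.Ico (N j) q, cN n ≤ sb j ^ 2 * (L q - L (N j)) := by
    intro j q hj hNq hq
    have hd := hdomSum q hq
    have hkc := (kink j (by omega)).1
    have s1 : ∑ n ∈ Finset.range q, cN n
        = (∑ n ∈ Finset.range (N j), cN n) + ∑ n ∈ Finset.Ico (N j) q, cN n :=
      hsplitgen (N j) q hNq _
    have s2 : ∑ n ∈ Finset.range q, sb (JN n) ^ 2 * aN n
        = (∑ n ∈ Finset.range (N j), sb (JN n) ^ 2 * aN n)
          + ∑ n ∈ Finset.Ico (N j) q, sb (JN n) ^ 2 * aN n :=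
      hsplitgen (N j) q hNq _
    have h1 : ∑ n ∈ Finset.Ico (N j) q, cN n
        ≤ ∑ n ∈ Finset.Ico (N j) q, sb (JN n) ^ 2 * aN n := by linarith
    have h2 : ∑ n ∈ Finset.Ico (N j) q, sb (JN n) ^ 2 * aN n
        ≤ ∑ n ∈ Finset.Ico (N j) q, sb j ^ 2 * aN n := by
      refine Finset.sum_le_sum fun n hn => ?_
      obtain ⟨ha, hb⟩ := Finset.mem_Ico.mp hn
      have hjle : j ≤ JN n := hJge (by omega)
        (by rw [← hNL j (by omega)]; exact hLmono ha)
      have h3 := hsbanti hjle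
      have h4 := haNnn n
      have h5 : sb (JN n) ^ 2 ≤ sb j ^ 2 := by
        have h6 := mul_le_mul h3 h3 (hsbpos (JN n)).le ((hsbpos (JN n)).le.trans h3)
        rw [sq, sq]; exact h6
      exact mul_le_mul_of_nonneg_right h5 h4
    have h3 : ∑ n ∈ Finset.Ico (N j) q, sb j ^ 2 * aN n
        = sb j ^ 2 * (L q - L (N j)) := by
      rw [← Finset.mul_sum, tele _ _ hNq]
    linarith
  have FEAS : ∀ q, q ≤ K+1 → 0 ≤ ∑ n ∈ Finset.range q, (aN n - XS n ^ 2 / cN n) := by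
    intro q hq
    have hrw : ∑ n ∈ Finset.range q, (aN n - XS n ^ 2 / cN n)
        = ∑ n ∈ Finset.range q, (aN n -
            (if n < n₀ then cN n / sb (JN n) ^ 2 else ν ^ 2 * cN n)) := by
      refine Finset.sum_congr rfl fun n hn => ?_
      rw [hXSsq n (by have := Finset.mem_range.mp hn; omega)]
    rw [hrw]
    by_cases hcase : q ≤ n₀
    · rcases Nat.eq_zero_or_pos q with hq0 | hqpos
      · rw [hq0]; simp
      set j := JN (q-1) with hjdef
      have hjm : j < m := hJlt (q-1)
      have hNjq : N j ≤ q - 1 := by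
        have h1 : L (N j) ≤ L (q-1) := by
          rw [hNL j (by omega)]; exact hJle (q-1)
        exact (hLle (hNle j) (by omega)).mp h1
      have hJconst : ∀ n, N j ≤ n → n < q → JN n = j := by
        intro n h1 h2
        have hle1 : j ≤ JN n := hJge (by have := hJm (q-1); omega)
          (by rw [← hNL j (by omega)]; exact hLmono h1)
        have hle2 : JN n ≤ j := hjdef ▸ hJmono (by omega : n ≤ q-1)
        omega
      have hterm : ∑ n ∈ Finset.range q, (aN n -
            (if n < n₀ then cN n / sb (JN n) ^ 2 else ν ^ 2 * cN n))
          = ∑ n ∈ Finset.range q, (aN n - cN n / sb (JN n) ^ 2) := by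
        refine Finset.sum_congr rfl fun n hn => ?_
        rw [if_pos (by have := Finset.mem_range.mp hn; omega)]
      rw [hterm, Finset.sum_sub_distrib]
      have e1 : ∑ n ∈ Finset.range q, aN n = L q := by
        rw [Finset.range_eq_Ico, tele 0 q (by omega), hL0, sub_zero]
      have e2 : ∑ n ∈ Finset.range q, cN n / sb (JN n) ^ 2
          = Lb j + (∑ n ∈ Finset.Ico (N j) q, cN n) / sb j ^ 2 := by
        rw [hsplitgen (N j) q (by omega) (fun n => cN n / sb (JN n) ^ 2),
          (kink j (by omega)).2]
        congr 1
        rw [Finset.sum_div]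
        refine Finset.sum_congr rfl fun n hn => ?_
        obtain ⟨ha, hb⟩ := Finset.mem_Ico.mp hn
        rw [hJconst n ha hb]
      have hb := boundIco j q hjm (by omega) hq
      have hsb := hsbpos j
      have hLNj : L (N j) = Lb j := hNL j (by omega)
      rw [hLNj] at hb
      have h5 : (∑ n ∈ Finset.Ico (N j) q, cN n) / sb j ^ 2 ≤ L q - Lb j := by
        rw [div_le_iff₀ (by positivity)]
        linarith
      rw [e1, e2]
      linarith
    · push_neg at hcase
      rw [hsplitgen n₀ q (by omega) (fun n => (aN n -
            (if n < n₀ then cN n / sb (JN n) ^ 2 else ν ^ 2 * cN n)))]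
      have epart1 : ∑ n ∈ Finset.range n₀, (aN n -
            (if n < n₀ then cN n / sb (JN n) ^ 2 else ν ^ 2 * cN n)) = 0 := by
        have hterm : ∑ n ∈ Finset.range n₀, (aN n -
              (if n < n₀ then cN n / sb (JN n) ^ 2 else ν ^ 2 * cN n))
            = ∑ n ∈ Finset.range n₀, (aN n - cN n / sb (JN n) ^ 2) := by
          refine Finset.sum_congr rfl fun n hn => ?_
          rw [if_pos (Finset.mem_range.mp hn)]
        rw [hterm, Finset.sum_sub_distrib]
        have e1 : ∑ n ∈ Finset.range n₀, aN n = Lb l.val := by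
          rw [Finset.range_eq_Ico, tele 0 n₀ (by omega), hL0, sub_zero, hLn0]
        have e2 : ∑ n ∈ Finset.range n₀, cN n / sb (JN n) ^ 2 = Lb l.val := by
          have := (kink l.val (by omega)).2
          rw [← hn0def] at this
          exact this
        rw [e1, e2, sub_self]
      have epart2 : 0 ≤ ∑ n ∈ Finset.Ico n₀ q, (aN n -
            (if n < n₀ then cN n / sb (JN n) ^ 2 else ν ^ 2 * cN n)) := by
        have hterm : ∑ n ∈ Finset.Ico n₀ q, (aN n -
              (if n < n₀ then cN n / sb (JN n) ^ 2 else ν ^ 2 * cN n))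
            = ∑ n ∈ Finset.Ico n₀ q, (aN n - ν ^ 2 * cN n) := by
          refine Finset.sum_congr rfl fun n hn => ?_
          rw [if_neg (by have := (Finset.mem_Ico.mp hn).1; omega)]
        rw [hterm, Finset.sum_sub_distrib, ← Finset.mul_sum]
        have hb := boundIco l.val q hlm (by rw [← hn0def]; omega) hq
        rw [← hn0def, hLn0] at hb
        have e1 : ∑ n ∈ Finset.Ico n₀ q, aN n = L q - Lb l.val := by
          rw [tele n₀ q (by omega), hLn0]
        have h3 : ν ^ 2 * (sb l.val) ^ 2 ≤ 1 := by
          have t0 : 0 ≤ ν * sb l.val := mul_nonneg hν0 (hsbpos l.val).le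
          nlinarith [t0, hνup]
        have h4 : Lb l.val ≤ L q := by rw [← hLn0]; exact hLmono (by omega)
        have h5 : 0 ≤ ∑ n ∈ Finset.Ico n₀ q, cN n :=
          Finset.sum_nonneg fun n _ => hcNnn n
        have h6 : ν ^ 2 * ∑ n ∈ Finset.Ico n₀ q, cN n
            ≤ ν ^ 2 * (sb l.val ^ 2 * (L q - Lb l.val)) :=
          mul_le_mul_of_nonneg_left hb (sq_nonneg ν)
        rw [e1]
        nlinarith
      linarith [epart1, epart2]

  -- multipliers
  set Mex : ℕ → ℝ := fun n => if n < n₀ then ν * sb (JN n) - 1 else 0 with hMexdef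
  set μN : ℕ → ℝ := fun n => Mex n - Mex (n+1) with hμNdef
  have hJltl : ∀ n, n ≤ K → (n < n₀ ↔ JN n < l.val) := by
    intro n hn
    constructor
    · intro h
      have h1 : Lb (JN n) ≤ L n := hJle n
      have h2 : L n < L n₀ := (hLlt (by omega) (by omega)).mpr h
      rw [hLn0] at h2
      by_contra hc
      push_neg at hc
      have h3 := hLbmono hc
      linarith
    · intro h
      have h1 : L (n+1) ≤ Lb (JN n + 1) := hJsucc n hn
      have h2 : Lb (JN n + 1) ≤ Lb l.val := hLbmono (by omega)
      have h3 : L (n+1) ≤ L n₀ := by rw [hLn0]; linarith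
      have h4 := (hLle (by omega) (by omega)).mp h3
      omega
  have hμN0 : ∀ k, k < K → 0 ≤ μN k := by
    intro k hk
    simp only [hμNdef, hMexdef]
    by_cases h1 : k + 1 < n₀
    · rw [if_pos (by omega), if_pos h1]
      have h2 := hsbanti (hJmono (Nat.le_succ k))
      nlinarith [hν0]
    · by_cases h0 : k < n₀
      · rw [if_pos h0, if_neg h1]
        have hJk : JN k < l.val := (hJltl k (by omega)).mp h0
        have h2 := hνlow (by omega)
        have h3 : sb (l.val - 1) ≤ sb (JN k) := hsbanti (by omega)
        have h4 : ν * sb (l.val - 1) ≤ ν * sb (JN k) := mul_le_mul_of_nonneg_left h3 hν0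
        linarith
      · rw [if_neg h0, if_neg h1, sub_self]
  have hMexsum : ∀ p, p ≤ K → ∑ n ∈ Finset.Ico p K, μN n = Mex p := by
    intro p hp
    have hMK : Mex K = 0 := by
      simp only [hMexdef]; rw [if_neg (by omega)]
    have hr : ∀ r, ∑ n ∈ Finset.range r, μN n = Mex 0 - Mex r := by
      intro r; simp only [hμNdef]; exact Finset.sum_range_sub' Mex r
    rw [Finset.sum_Ico_eq_sub _ hp, hr, hr, hMK]; ring
  -- Fin-level bridges
  have hcfin : ∀ i : Fin (K+1), σv i ^ 2 * (lam i.succ - lam i.castSucc) = cN i.val := by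
    intro i
    rw [hsvval, hlamL i.succ, hlamL i.castSucc]
    rfl
  have hcpos' : ∀ i : Fin (K+1), 0 < σv i ^ 2 * (lam i.succ - lam i.castSucc) := by
    intro i
    rw [hcfin i]
    exact hcNpos i.val (by omega)
  have hwgen : ∀ (x : Fin K → ℝ) (XN : ℕ → ℝ), (∀ i : Fin K, x i = XN i.val) →
      ∀ i : Fin K, (lam (i.castSucc).succ - lam (i.castSucc).castSucc) -
          (x i) ^ 2 / ((σv i.castSucc) ^ 2 * (lam (i.castSucc).succ - lam (i.castSucc).castSucc))
        = aN i.val - XN i.val ^ 2 / cN i.val := by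
    intro x XN hx i
    rw [hx i, hcfin i.castSucc, hlamL (i.castSucc).succ, hlamL (i.castSucc).castSucc]
    rfl
  have hIicconv : ∀ (x : Fin K → ℝ) (XN : ℕ → ℝ), (∀ i : Fin K, x i = XN i.val) →
      ∀ k : Fin K, ∑ i ∈ Finset.Iic k,
          ((lam (i.castSucc).succ - lam (i.castSucc).castSucc) -
            (x i) ^ 2 / ((σv i.castSucc) ^ 2 * (lam (i.castSucc).succ - lam (i.castSucc).castSucc)))
        = ∑ n ∈ Finset.range (k.val+1), (aN n - XN n ^ 2 / cN n) :=
    fun x XN hx k => fin_sum_Iic _ (fun n => aN n - XN n ^ 2 / cN n) (hwgen x XN hx) k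
  have hUnivconv : ∀ (x : Fin K → ℝ) (XN : ℕ → ℝ), (∀ i : Fin K, x i = XN i.val) →
      ∑ i : Fin K, ((lam (i.castSucc).succ - lam (i.castSucc).castSucc) -
            (x i) ^ 2 / ((σv i.castSucc) ^ 2 * (lam (i.castSucc).succ - lam (i.castSucc).castSucc)))
        = ∑ n ∈ Finset.range K, (aN n - XN n ^ 2 / cN n) := by
    intro x XN hx
    rw [← Fin.sum_univ_eq_sum_range (fun n => aN n - XN n ^ 2 / cN n) K]
    exact Finset.sum_congr rfl fun i _ => hwgen x XN hx i
  -- stationarity in ℕ form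
  have hstatN : ∀ i : Fin K, XS i.val * (1 + Mex i.val) = ν * cN i.val := by
    intro i
    simp only [hXSdef, hMexdef]
    by_cases hcase : i.val < n₀
    · rw [if_pos hcase, if_pos hcase]
      have e0 : (1 + (ν * sb (JN i.val) - 1)) = ν * sb (JN i.val) := by ring
      rw [e0]
      have e : cN i.val / sb (JN i.val) * (ν * sb (JN i.val))
          = ν * (cN i.val / sb (JN i.val) * sb (JN i.val)) := by ring
      rw [e, div_mul_cancel₀ _ (hsbpos (JN i.val)).ne']
    · rw [if_neg hcase, if_neg hcase]; ring
  have hsumXS : ∑ n ∈ Finset.range K, XS n = A + ν * (C - cN K) := by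
    have s1 : ∑ n ∈ Finset.range K, XS n
        = (∑ n ∈ Finset.range n₀, XS n) + ∑ n ∈ Finset.Ico n₀ K, XS n :=
      hsplitgen n₀ K (by omega) XS
    have s2 : ∑ n ∈ Finset.range n₀, XS n = A := by
      rw [hAdef]
      refine Finset.sum_congr rfl fun n hn => ?_
      simp only [hXSdef]; rw [if_pos (Finset.mem_range.mp hn)]
    have s3 : ∑ n ∈ Finset.Ico n₀ K, XS n = ν * (C - cN K) := by
      have e1 : ∑ n ∈ Finset.Ico n₀ K, XS n = ∑ n ∈ Finset.Ico n₀ K, ν * cN n := by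
        refine Finset.sum_congr rfl fun n hn => ?_
        simp only [hXSdef]; rw [if_neg (by have := (Finset.mem_Ico.mp hn).1; omega)]
      have e2 : C = (∑ n ∈ Finset.Ico n₀ K, cN n) + cN K := by
        rw [hCdef, Finset.sum_Ico_succ_top (by omega : n₀ ≤ K)]
      rw [e1, ← Finset.mul_sum, e2]; ring
    rw [s1, s2, s3]
  -- complementary slackness in ℕ form
  have hCS : ∀ k : Fin K, μN k.val ≠ 0 →
      ∑ n ∈ Finset.range (k.val+1), (aN n - XS n ^ 2 / cN n) = 0 := by
    intro k hne
    have hkK : k.val < K := k.isLt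
    have hk0 : k.val < n₀ := by
      by_contra hc
      push_neg at hc
      apply hne
      simp only [hμNdef, hMexdef]
      rw [if_neg (by omega), if_neg (by omega), sub_self]
    have hrw : ∑ n ∈ Finset.range (k.val+1), (aN n - XS n ^ 2 / cN n)
        = ∑ n ∈ Finset.range (k.val+1), (aN n - cN n / sb (JN n) ^ 2) := by
      refine Finset.sum_congr rfl fun n hn => ?_
      have hnk := Finset.mem_range.mp hn
      rw [hXSsq n (by omega), if_pos (by omega)]
    rw [hrw]
    have e1 : ∑ n ∈ Finset.range (k.val+1), aN n = L (k.val+1) := by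
      rw [Finset.range_eq_Ico, tele 0 _ (by omega), hL0, sub_zero]
    by_cases hcase : k.val + 1 < n₀
    · have hJlt2 : JN k.val < JN (k.val+1) := by
        rcases lt_or_eq_of_le (hJmono (Nat.le_succ k.val)) with h | h
        · exact h
        · exfalso; apply hne
          simp only [hμNdef, hMexdef]
          rw [if_pos hk0, if_pos hcase, ← h, sub_self]
      have hK1 : L (k.val+1) = Lb (JN k.val + 1) := by
        have hub : L (k.val+1) ≤ Lb (JN k.val + 1) := hJsucc k.val (by omega)
        have hlb : Lb (JN k.val + 1) ≤ L (k.val+1) := by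
          calc Lb (JN k.val + 1) ≤ Lb (JN (k.val+1)) := hLbmono (by omega)
            _ ≤ L (k.val+1) := hJle _
        linarith
      have hNk : N (JN k.val + 1) = k.val + 1 := by
        apply hLinj (hNle _) (by omega)
        rw [hNL _ (by have := hJlt k.val; omega), hK1]
      have e2 := (kink (JN k.val + 1) (by have := hJlt k.val; omega)).2
      rw [hNk] at e2
      rw [Finset.sum_sub_distrib, e1, e2, hK1, sub_self]
    · have hn0k : n₀ = k.val + 1 := by omega
      have e2 := (kink l.val (by omega)).2
      rw [← hn0def, hn0k] at e2
      rw [Finset.sum_sub_distrib, e1, e2, ← hn0k, hLn0, sub_self]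

  -- KKT data at Fin level
  have hstatF : ∀ i : Fin K, xstar i * (1 + ∑ k ∈ Finset.Ici i, μN k.val)
      = ν * (σv i.castSucc ^ 2 * (lam (i.castSucc).succ - lam (i.castSucc).castSucc)) := by
    intro i
    have e1 : ∑ k ∈ Finset.Ici i, μN k.val = ∑ n ∈ Finset.Ico i.val K, μN n :=
      fin_sum_Ici (fun k => μN k.val) μN (fun _ => rfl) i
    rw [e1, hMexsum i.val (by omega), hxstarN i, hcfin i.castSucc]
    exact hstatN i
  have hlastF : γ - ∑ i : Fin K, xstar i
      = ν * (σv (Fin.last K) ^ 2 * (lam (Fin.last K).succ - lam (Fin.last K).castSucc)) := by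
    have e1 : ∑ i : Fin K, xstar i = ∑ n ∈ Finset.range K, XS n := by
      rw [← Fin.sum_univ_eq_sum_range XS K]
      exact Finset.sum_congr rfl fun i _ => hxstarN i
    rw [e1, hsumXS, hcfin (Fin.last K)]
    show γ - (A + ν * (C - cN K)) = ν * cN K
    linear_combination hνC
  have hcsF : ∀ k : Fin K, (μN k.val) *
      (∑ i ∈ Finset.Iic k, ((lam (i.castSucc).succ - lam (i.castSucc).castSucc) -
        xstar i ^ 2 / (σv i.castSucc ^ 2 * (lam (i.castSucc).succ - lam (i.castSucc).castSucc)))) = 0 := by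
    intro k
    by_cases h : μN k.val = 0
    · rw [h, zero_mul]
    · rw [hIicconv xstar XS hxstarN k, hCS k h, mul_zero]
  refine ⟨?_, ?_, ?_, ?_⟩
  · -- feasibility of xstar
    intro k
    rw [hIicconv xstar XS hxstarN k]
    exact FEAS (k.val+1) (by omega)
  · -- maximality
    intro x hx
    have hk := kkt_core K γ ν (fun i : Fin (K+1) => lam i.succ - lam i.castSucc)
      (fun i : Fin (K+1) => σv i ^ 2 * (lam i.succ - lam i.castSucc)) hcpos' xstar
      (fun k => μN k.val) (fun k => hμN0 k.val k.isLt) hstatF hlastF hcsF x hx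
    have hgap1 : 0 ≤ ∑ i : Fin K, (x i - xstar i) ^ 2 /
        (σv i.castSucc ^ 2 * (lam (i.castSucc).succ - lam (i.castSucc).castSucc)) :=
      Finset.sum_nonneg fun i _ => div_nonneg (sq_nonneg _) (hcpos' i.castSucc).le
    have hgap2 : 0 ≤ (∑ i : Fin K, (x i - xstar i)) ^ 2 /
        (σv (Fin.last K) ^ 2 * (lam (Fin.last K).succ - lam (Fin.last K).castSucc)) :=
      div_nonneg (sq_nonneg _) (hcpos' (Fin.last K)).le
    linarith [hk, hgap1, hgap2]
  · -- uniqueness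
    intro x hx heq
    have hk := kkt_core K γ ν (fun i : Fin (K+1) => lam i.succ - lam i.castSucc)
      (fun i : Fin (K+1) => σv i ^ 2 * (lam i.succ - lam i.castSucc)) hcpos' xstar
      (fun k => μN k.val) (fun k => hμN0 k.val k.isLt) hstatF hlastF hcsF x hx
    have hgap2 : 0 ≤ (∑ i : Fin K, (x i - xstar i)) ^ 2 /
        (σv (Fin.last K) ^ 2 * (lam (Fin.last K).succ - lam (Fin.last K).castSucc)) :=
      div_nonneg (sq_nonneg _) (hcpos' (Fin.last K)).le
    have hall : ∀ i ∈ Finset.univ, (0:ℝ) ≤ (x i - xstar i) ^ 2 /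
        (σv i.castSucc ^ 2 * (lam (i.castSucc).succ - lam (i.castSucc).castSucc)) :=
      fun i _ => div_nonneg (sq_nonneg _) (hcpos' i.castSucc).le
    have hsum0 : ∑ i : Fin K, (x i - xstar i) ^ 2 /
        (σv i.castSucc ^ 2 * (lam (i.castSucc).succ - lam (i.castSucc).castSucc)) ≤ 0 := by
      linarith [hk, heq, hgap2]
    have hz := (Finset.sum_eq_zero_iff_of_nonneg hall).mp
      (le_antisymm hsum0 (Finset.sum_nonneg hall))
    funext i
    have h1 := hz i (Finset.mem_univ i)
    have h2 : (x i - xstar i) ^ 2 = 0 := by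
      rcases div_eq_zero_iff.mp h1 with h | h
      · exact h
      · exact absurd h (hcpos' i.castSucc).ne'
    have h3 : x i - xstar i = 0 := by
      nlinarith [sq_nonneg (x i - xstar i)]
    linarith
  · -- value
    have e1 := hUnivconv xstar XS hxstarN
    have eXSK : XS K = ν * cN K := by
      simp only [hXSdef]; rw [if_neg (by omega)]
    have elast : (lam ((Fin.last K)).succ - lam ((Fin.last K)).castSucc) -
        (γ - ∑ i : Fin K, xstar i) ^ 2 /
          (σv (Fin.last K) ^ 2 * (lam ((Fin.last K)).succ - lam ((Fin.last K)).castSucc))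
        = aN K - XS K ^ 2 / cN K := by
      rw [hlastF, hcfin (Fin.last K), hlamL ((Fin.last K)).succ, hlamL ((Fin.last K)).castSucc,
        eXSK]
      rfl
    have p1 : ∑ n ∈ Finset.range n₀, (aN n - XS n ^ 2 / cN n) = 0 := by
      have hterm : ∑ n ∈ Finset.range n₀, (aN n - XS n ^ 2 / cN n)
          = ∑ n ∈ Finset.range n₀, (aN n - cN n / sb (JN n) ^ 2) := by
        refine Finset.sum_congr rfl fun n hn => ?_
        have := Finset.mem_range.mp hn
        rw [hXSsq n (by omega), if_pos this]
      rw [hterm, Finset.sum_sub_distrib]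
      have ea : ∑ n ∈ Finset.range n₀, aN n = Lb l.val := by
        rw [Finset.range_eq_Ico, tele 0 n₀ (by omega), hL0, sub_zero, hLn0]
      have eb := (kink l.val (by omega)).2
      rw [← hn0def] at eb
      rw [ea, eb, sub_self]
    have p2 : ∑ n ∈ Finset.Ico n₀ (K+1), (aN n - XS n ^ 2 / cN n)
        = (1 - Lb l.val) - ν ^ 2 * C := by
      have hterm : ∑ n ∈ Finset.Ico n₀ (K+1), (aN n - XS n ^ 2 / cN n)
          = ∑ n ∈ Finset.Ico n₀ (K+1), (aN n - ν ^ 2 * cN n) := by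
        refine Finset.sum_congr rfl fun n hn => ?_
        obtain ⟨ha, hb⟩ := Finset.mem_Ico.mp hn
        rw [hXSsq n (by omega), if_neg (by omega)]
      rw [hterm, Finset.sum_sub_distrib, ← Finset.mul_sum, ← hCdef,
        tele n₀ (K+1) (by omega), hL1, hLn0]
    have p3 : ∑ n ∈ Finset.range (K+1), (aN n - XS n ^ 2 / cN n)
        = (1 - Lb l.val) - ν ^ 2 * C := by
      have s : ∑ n ∈ Finset.range (K+1), (aN n - XS n ^ 2 / cN n)
          = (∑ n ∈ Finset.range n₀, (aN n - XS n ^ 2 / cN n))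
            + ∑ n ∈ Finset.Ico n₀ (K+1), (aN n - XS n ^ 2 / cN n) :=
        hsplitgen n₀ (K+1) (by omega) _
      rw [s, p1, p2, zero_add]
    have e2 : (∑ n ∈ Finset.range K, (aN n - XS n ^ 2 / cN n)) + (aN K - XS K ^ 2 / cN K)
        = ∑ n ∈ Finset.range (K+1), (aN n - XS n ^ 2 / cN n) :=
      (Finset.sum_range_succ _ K).symm
    rw [hAint, hCint, hLbl, e1, elast, e2, p3, hνC, mul_pow, sq C, ← mul_assoc,
      mul_div_cancel_right₀ _ hCpos.ne']
end

section
/- Let γ^{l-1} ≤ γ < γ(1+4ε) < γ^l where γ^j are the critical levels. Define the paths L*(s) = ∫₀ˢ σ²/σ̄ dr and L^{γ'}(s) = L*(s) for s ≤ λ^{l-1}, L^{γ'}(s) = L*(λ^{l-1}) + (∫_{λ^{l-1}}^s σ² dr / ∫_{λ^{l-1}}^1 σ² dr)·(γ' − L*(λ^{l-1})) for s > λ^{l-1}, with γ' = γ(1+4ε). Then for all 0 ≤ s₁ ≤ s₂ ≤ 1, L^{γ'}(s₂) − L^{γ'}(s₁) ≤ L*(s₂) − L*(s₁). -/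
open MeasureTheory Set

private lemma grid_mem {n : ℕ} {g : Fin (n + 1) → ℝ} (hg : StrictMono g)
    (h0 : g 0 = 0) (h1 : g (Fin.last n) = 1) {x : ℝ} (hx : x ∈ Set.Ioc (0:ℝ) 1) :
    ∃ i : Fin n, x ∈ Set.Ioc (g i.castSucc) (g i.succ) := by
  classical
  set S : Finset (Fin (n+1)) := Finset.univ.filter (fun i => g i < x) with hS
  have h0S : (0 : Fin (n+1)) ∈ S := by
    simp only [hS, Finset.mem_filter, Finset.mem_univ, true_and, h0]
    exact hx.1
  have hne : S.Nonempty := ⟨0, h0S⟩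
  set i0 := S.max' hne with hi0
  have hi0mem : i0 ∈ S := S.max'_mem hne
  have hgi0 : g i0 < x := by
    simpa [hS, Finset.mem_filter] using hi0mem
  have hlast : i0 ≠ Fin.last n := by
    intro h
    rw [h, h1] at hgi0
    exact absurd hx.2 (not_le.mpr hgi0)
  have hi0lt : (i0 : ℕ) < n := Fin.val_lt_last hlast
  have hcast : (⟨(i0 : ℕ), hi0lt⟩ : Fin n).castSucc = i0 := by
    apply Fin.ext; simp
  refine ⟨⟨(i0 : ℕ), hi0lt⟩, ?_, ?_⟩
  · rw [hcast]; exact hgi0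
  · by_contra h
    push_neg at h
    have hmem : (⟨(i0 : ℕ), hi0lt⟩ : Fin n).succ ∈ S := by
      simp only [hS, Finset.mem_filter, Finset.mem_univ, true_and]
      exact h
    have hle := S.le_max' _ hmem
    rw [← hi0] at hle
    have : (i0 : ℕ) + 1 ≤ (i0 : ℕ) := by
      simpa [Fin.le_def, Fin.val_succ] using hle
    omega

private lemma grid_cover {n : ℕ} {g : Fin (n + 1) → ℝ} (hg : StrictMono g)
    (h0 : g 0 = 0) (h1 : g (Fin.last n) = 1) :
    Set.Ioc (0:ℝ) 1 = ⋃ i : Fin n, Set.Ioc (g i.castSucc) (g i.succ) := by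
  ext x
  simp only [Set.mem_iUnion]
  constructor
  · exact fun hx => grid_mem hg h0 h1 hx
  · rintro ⟨i, h1x, h2x⟩
    have hl : g 0 ≤ g i.castSucc := hg.monotone (Fin.zero_le _)
    have hr : g i.succ ≤ g (Fin.last n) := hg.monotone (Fin.le_last _)
    rw [h0] at hl
    rw [h1] at hr
    exact ⟨lt_of_le_of_lt hl h1x, le_trans h2x hr⟩

private lemma grid_integrable {n : ℕ} {g : Fin (n + 1) → ℝ} (hg : StrictMono g)
    (h0 : g 0 = 0) (h1 : g (Fin.last n) = 1) {f : ℝ → ℝ}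
    (hf : ∀ i : Fin n, ∃ c : ℝ, ∀ x ∈ Set.Ioc (g i.castSucc) (g i.succ), f x = c) :
    MeasureTheory.IntegrableOn f (Set.Ioc (0:ℝ) 1) := by
  rw [grid_cover hg h0 h1]
  refine (MeasureTheory.integrableOn_finite_iUnion).mpr fun i => ?_
  obtain ⟨c, hc⟩ := hf i
  have hconst : MeasureTheory.IntegrableOn (fun _ => c)
      (Set.Ioc (g i.castSucc) (g i.succ)) := by
    refine (MeasureTheory.integrableOn_const_iff).mpr (Or.inr ?_)
    exact measure_Ioc_lt_top
  exact hconst.congr_fun (fun x hx => (hc x hx).symm) measurableSet_Ioc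

private lemma grid_intervalIntegrable {n : ℕ} {g : Fin (n + 1) → ℝ} (hg : StrictMono g)
    (h0 : g 0 = 0) (h1 : g (Fin.last n) = 1) {f : ℝ → ℝ}
    (hf : ∀ i : Fin n, ∃ c : ℝ, ∀ x ∈ Set.Ioc (g i.castSucc) (g i.succ), f x = c)
    {u v : ℝ} (hu : 0 ≤ u) (huv : u ≤ v) (hv : v ≤ 1) :
    IntervalIntegrable f MeasureTheory.volume u v := by
  rw [intervalIntegrable_iff]
  refine (grid_integrable hg h0 h1 hf).mono_set ?_
  rw [Set.uIoc_of_le huv]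
  exact Set.Ioc_subset_Ioc hu hv

/-- Increments of the suboptimal path L^{γ'} (γ' = γ(1+4ε)) are dominated by the increments
of the optimal path L*(s) = ∫₀ˢ σ²/σ̄ dr, whenever γ^{l-1} ≤ γ < γ(1+4ε) < γ^l. -/
theorem stmt_7
    (M m : ℕ) (hM : 0 < M) (hm : 0 < m)
    (lam : Fin (M + 1) → ℝ) (hlam : StrictMono lam) (hlam0 : lam 0 = 0)
    (hlam1 : lam (Fin.last M) = 1)
    (σv : Fin M → ℝ) (hσv : ∀ i, 0 < σv i)
    (σ : ℝ → ℝ) (hσ0 : σ 0 = σv ⟨0, hM⟩)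
    (hσdef : ∀ i : Fin M, ∀ s ∈ Set.Ioc (lam i.castSucc) (lam i.succ), σ s = σv i)
    (lamb : Fin (m + 1) → ℝ) (hlambmono : StrictMono lamb) (hlamb0 : lamb 0 = 0)
    (hlamb1 : lamb (Fin.last m) = 1)
    (sbv : Fin m → ℝ) (hsbv : ∀ j, 0 < sbv j) (hsbvdec : StrictAnti sbv)
    (σbar : ℝ → ℝ) (hσbar0 : σbar 0 = sbv ⟨0, hm⟩)
    (hσbardef : ∀ j : Fin m, ∀ s ∈ Set.Ioc (lamb j.castSucc) (lamb j.succ), σbar s = sbv j)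
    (hsubgrid : ∀ j : Fin (m + 1), ∃ i : Fin (M + 1), lamb j = lam i)
    (hdom : ∀ t ∈ Set.Icc (0:ℝ) 1,
      (∫ r in (0:ℝ)..t, (σ r) ^ 2) ≤ ∫ r in (0:ℝ)..t, (σbar r) ^ 2)
    (hblock : ∀ j : Fin m, (∫ s in (lamb j.castSucc)..(lamb j.succ), (σ s) ^ 2)
      = (sbv j) ^ 2 * (lamb j.succ - lamb j.castSucc))
    (l : Fin m) (γ ε : ℝ) (hε0 : 0 < ε)
    (hγlow : (if l.castSucc = 0 then (0:ℝ)
      else ∫ s in (0:ℝ)..1, (σ s) ^ 2 / σbar (min s (lamb l.castSucc))) ≤ γ)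
    (hγup : γ * (1 + 4 * ε) < ∫ s in (0:ℝ)..1, (σ s) ^ 2 / σbar (min s (lamb l.succ)))
    (Lstar Lg : ℝ → ℝ)
    (hLstar : ∀ s, Lstar s = ∫ r in (0:ℝ)..s, (σ r) ^ 2 / σbar r)
    (hLg1 : ∀ s, s ≤ lamb l.castSucc → Lg s = Lstar s)
    (hLg2 : ∀ s, lamb l.castSucc < s →
      Lg s = Lstar (lamb l.castSucc) +
        (∫ r in (lamb l.castSucc)..s, (σ r) ^ 2) / (∫ r in (lamb l.castSucc)..1, (σ r) ^ 2) *
          (γ * (1 + 4 * ε) - Lstar (lamb l.castSucc))) :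
    ∀ s₁ s₂ : ℝ, 0 ≤ s₁ → s₁ ≤ s₂ → s₂ ≤ 1 →
      Lg s₂ - Lg s₁ ≤ Lstar s₂ - Lstar s₁ := by
  set a := lamb l.castSucc with ha_def
  set b := lamb l.succ with hb_def
  have ha0 : (0:ℝ) ≤ a := by
    rw [ha_def, ← hlamb0]; exact hlambmono.monotone (Fin.zero_le _)
  have hab : a < b := hlambmono (Fin.castSucc_lt_succ : l.castSucc < l.succ)
  have hb1 : b ≤ 1 := by
    rw [hb_def, ← hlamb1]; exact hlambmono.monotone (Fin.le_last _)
  have ha1 : a ≤ 1 := le_of_lt (lt_of_lt_of_le hab hb1)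
  -- block constancy of the three integrands on the fine grid
  have hf1 : ∀ i : Fin M, ∃ c : ℝ,
      ∀ x ∈ Set.Ioc (lam i.castSucc) (lam i.succ), σ x ^ 2 = c :=
    fun i => ⟨σv i ^ 2, fun x hx => by rw [hσdef i x hx]⟩
  have hblockin : ∀ i : Fin M, ∃ j : Fin m,
      Set.Ioc (lam i.castSucc) (lam i.succ) ⊆ Set.Ioc (lamb j.castSucc) (lamb j.succ) := by
    intro i
    have hmem : lam i.succ ∈ Set.Ioc (0:ℝ) 1 := by
      constructor
      · have h1' : lam 0 ≤ lam i.castSucc := hlam.monotone (Fin.zero_le _)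
        have h2' : lam i.castSucc < lam i.succ := hlam (Fin.castSucc_lt_succ : i.castSucc < i.succ)
        rw [hlam0] at h1'; linarith
      · rw [← hlam1]; exact hlam.monotone (Fin.le_last _)
    obtain ⟨j, hj⟩ := grid_mem hlambmono hlamb0 hlamb1 hmem
    refine ⟨j, fun x hx => ⟨?_, le_trans hx.2 hj.2⟩⟩
    obtain ⟨k, hk⟩ := hsubgrid j.castSucc
    have hklt : lamb j.castSucc < lam i.succ := hj.1
    rw [hk] at hklt
    have hkle : k ≤ i.castSucc := Fin.le_castSucc_iff.mpr (hlam.lt_iff_lt.mp hklt)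
    have : lamb j.castSucc ≤ lam i.castSucc := by
      rw [hk]; exact hlam.monotone hkle
    exact lt_of_le_of_lt this hx.1
  have hf2 : ∀ i : Fin M, ∃ c : ℝ,
      ∀ x ∈ Set.Ioc (lam i.castSucc) (lam i.succ), σ x ^ 2 / σbar x = c := by
    intro i
    obtain ⟨j, hsub⟩ := hblockin i
    exact ⟨σv i ^ 2 / sbv j, fun x hx => by
      rw [hσdef i x hx, hσbardef j x (hsub hx)]⟩
  have hf3 : ∀ i : Fin M, ∃ c : ℝ,
      ∀ x ∈ Set.Ioc (lam i.castSucc) (lam i.succ),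
        σ x ^ 2 / σbar (min x b) = c := by
    intro i
    obtain ⟨j, hsub⟩ := hblockin i
    by_cases hcase : lam i.succ ≤ b
    · refine ⟨σv i ^ 2 / sbv j, fun x hx => ?_⟩
      rw [min_eq_left (le_trans hx.2 hcase), hσdef i x hx, hσbardef j x (hsub hx)]
    · push_neg at hcase
      obtain ⟨k, hk⟩ := hsubgrid l.succ
      have hble : b ≤ lam i.castSucc := by
        rw [hb_def, hk] at hcase ⊢
        exact hlam.monotone (Fin.le_castSucc_iff.mpr (hlam.lt_iff_lt.mp hcase))
      refine ⟨σv i ^ 2 / σbar b, fun x hx => ?_⟩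
      rw [min_eq_right (le_trans hble (le_of_lt hx.1)), hσdef i x hx]
  -- interval integrability
  have ii1 : ∀ u v : ℝ, 0 ≤ u → u ≤ v → v ≤ 1 →
      IntervalIntegrable (fun s => σ s ^ 2) MeasureTheory.volume u v :=
    fun u v hu huv hv => grid_intervalIntegrable hlam hlam0 hlam1 hf1 hu huv hv
  have ii2 : ∀ u v : ℝ, 0 ≤ u → u ≤ v → v ≤ 1 →
      IntervalIntegrable (fun s => σ s ^ 2 / σbar s) MeasureTheory.volume u v :=
    fun u v hu huv hv => grid_intervalIntegrable hlam hlam0 hlam1 hf2 hu huv hv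
  have ii3 : ∀ u v : ℝ, 0 ≤ u → u ≤ v → v ≤ 1 →
      IntervalIntegrable (fun s => σ s ^ 2 / σbar (min s b)) MeasureTheory.volume u v :=
    fun u v hu huv hv => grid_intervalIntegrable hlam hlam0 hlam1 hf3 hu huv hv
  -- positivity and bounds on σbar
  have hσbar_pos : ∀ x ∈ Set.Ioc (0:ℝ) 1, 0 < σbar x := by
    intro x hx
    obtain ⟨j, hj⟩ := grid_mem hlambmono hlamb0 hlamb1 hx
    rw [hσbardef j x hj]; exact hsbv j
  have hσbar_le : ∀ x, a < x → x ≤ 1 → σbar x ≤ sbv l := by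
    intro x hax hx1
    have hx0 : 0 < x := lt_of_le_of_lt ha0 hax
    obtain ⟨j, hj⟩ := grid_mem hlambmono hlamb0 hlamb1 ⟨hx0, hx1⟩
    rw [hσbardef j x hj]
    refine hsbvdec.antitone ?_
    have hlt : lamb l.castSucc < lamb j.succ := lt_of_lt_of_le hax hj.2
    exact Fin.castSucc_lt_succ_iff.mp (hlambmono.lt_iff_lt.mp hlt)
  -- denominator
  set D := ∫ r in a..(1:ℝ), σ r ^ 2 with hD_def
  have hDsplit : (∫ r in a..b, σ r ^ 2) + (∫ r in b..(1:ℝ), σ r ^ 2) = D :=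
    intervalIntegral.integral_add_adjacent_intervals
      (ii1 a b ha0 (le_of_lt hab) hb1) (ii1 b 1 (le_trans ha0 (le_of_lt hab)) hb1 le_rfl)
  have hD : 0 < D := by
    have h1' : (∫ r in a..b, σ r ^ 2) = sbv l ^ 2 * (b - a) := hblock l
    have h2' : 0 ≤ ∫ r in b..(1:ℝ), σ r ^ 2 :=
      intervalIntegral.integral_nonneg hb1 (fun u _ => sq_nonneg _)
    have h3' : 0 < sbv l ^ 2 * (b - a) :=
      mul_pos (pow_pos (hsbv l) 2) (sub_pos.mpr hab)
    linarith [hDsplit]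
  -- the critical level γ^l
  have hγl : (∫ s in (0:ℝ)..1, σ s ^ 2 / σbar (min s b)) = Lstar a + D / sbv l := by
    have hadj : (∫ s in (0:ℝ)..a, σ s ^ 2 / σbar (min s b))
        + (∫ s in a..(1:ℝ), σ s ^ 2 / σbar (min s b))
        = ∫ s in (0:ℝ)..1, σ s ^ 2 / σbar (min s b) :=
      intervalIntegral.integral_add_adjacent_intervals
        (ii3 0 a le_rfl ha0 ha1) (ii3 a 1 ha0 ha1 le_rfl)
    rw [← hadj]
    congr 1
    · rw [hLstar a]
      refine intervalIntegral.integral_congr_ae (Filter.Eventually.of_forall fun x hx => ?_)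
      rw [Set.uIoc_of_le ha0] at hx
      rw [min_eq_left (le_trans hx.2 (le_of_lt hab))]
    · have : (∫ s in a..(1:ℝ), σ s ^ 2 / σbar (min s b))
          = ∫ s in a..(1:ℝ), σ s ^ 2 / sbv l := by
        refine intervalIntegral.integral_congr_ae (Filter.Eventually.of_forall fun x hx => ?_)
        rw [Set.uIoc_of_le ha1] at hx
        by_cases hxb : x ≤ b
        · rw [min_eq_left hxb, hσbardef l x ⟨hx.1, hxb⟩]
        · push_neg at hxb
          rw [min_eq_right (le_of_lt hxb), hσbardef l b ⟨hab, le_rfl⟩]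
      rw [this, intervalIntegral.integral_div]
  -- the slope of Lg beyond a
  set cval := (γ * (1 + 4 * ε) - Lstar a) / D with hcval_def
  have hclt : cval ≤ 1 / sbv l := by
    have h1' : γ * (1 + 4 * ε) - Lstar a < D / sbv l := by
      rw [hγl] at hγup; linarith
    rw [hcval_def, div_le_div_iff₀ hD (hsbv l)]
    have : D / sbv l * sbv l = D := div_mul_cancel₀ D (ne_of_gt (hsbv l))
    nlinarith [hsbv l]
  -- key increment inequality
  have key : ∀ u v : ℝ, a ≤ u → u ≤ v → v ≤ 1 →
      (∫ s in u..v, σ s ^ 2) * cval ≤ ∫ s in u..v, σ s ^ 2 / σbar s := by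
    intro u v hau huv hv1
    have h0u : (0:ℝ) ≤ u := le_trans ha0 hau
    have hInn : 0 ≤ ∫ s in u..v, σ s ^ 2 :=
      intervalIntegral.integral_nonneg huv (fun x _ => sq_nonneg _)
    have step1 : (∫ s in u..v, σ s ^ 2) * cval ≤ (∫ s in u..v, σ s ^ 2) * (1 / sbv l) :=
      mul_le_mul_of_nonneg_left hclt hInn
    refine step1.trans ?_
    have hrw : (∫ s in u..v, σ s ^ 2) * (1 / sbv l) = ∫ s in u..v, σ s ^ 2 / sbv l := by
      rw [intervalIntegral.integral_div]; ring
    rw [hrw, intervalIntegral.integral_of_le huv, intervalIntegral.integral_of_le huv]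
    refine MeasureTheory.setIntegral_mono_on ?_ ?_ measurableSet_Ioc ?_
    · exact ((grid_integrable hlam hlam0 hlam1 hf1).mono_set
        (Set.Ioc_subset_Ioc h0u hv1)).div_const _
    · exact (grid_integrable hlam hlam0 hlam1 hf2).mono_set (Set.Ioc_subset_Ioc h0u hv1)
    · intro x hx
      have hxa : a < x := lt_of_le_of_lt hau hx.1
      have hx1 : x ≤ 1 := le_trans hx.2 hv1
      have hpos : 0 < σbar x := hσbar_pos x ⟨lt_of_le_of_lt ha0 hxa, hx1⟩
      have hle : σbar x ≤ sbv l := hσbar_le x hxa hx1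
      exact div_le_div_of_nonneg_left (sq_nonneg _) hpos hle
  -- main argument
  intro s₁ s₂ hs1 hs12 hs2
  by_cases hc2 : s₂ ≤ a
  · rw [hLg1 s₂ hc2, hLg1 s₁ (le_trans hs12 hc2)]
  · push_neg at hc2
    rw [hLg2 s₂ hc2]
    by_cases hc1 : s₁ ≤ a
    · rw [hLg1 s₁ hc1]
      have hsplit : Lstar a + (∫ r in a..s₂, σ r ^ 2 / σbar r) = Lstar s₂ := by
        rw [hLstar a, hLstar s₂]
        exact intervalIntegral.integral_add_adjacent_intervals
          (ii2 0 a le_rfl ha0 ha1) (ii2 a s₂ ha0 (le_of_lt hc2) hs2)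
      have hkey := key a s₂ le_rfl (le_of_lt hc2) hs2
      have hrw : (∫ r in a..s₂, σ r ^ 2) / D * (γ * (1 + 4 * ε) - Lstar a)
          = (∫ r in a..s₂, σ r ^ 2) * cval := by
        rw [hcval_def]; ring
      linarith
    · push_neg at hc1
      rw [hLg2 s₁ hc1]
      have hIsplit : (∫ r in a..s₁, σ r ^ 2) + (∫ r in s₁..s₂, σ r ^ 2)
          = ∫ r in a..s₂, σ r ^ 2 :=
        intervalIntegral.integral_add_adjacent_intervals
          (ii1 a s₁ ha0 (le_of_lt hc1) (le_trans hs12 hs2)) (ii1 s₁ s₂ hs1 hs12 hs2)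
      have hLsplit : Lstar s₁ + (∫ r in s₁..s₂, σ r ^ 2 / σbar r) = Lstar s₂ := by
        rw [hLstar s₁, hLstar s₂]
        exact intervalIntegral.integral_add_adjacent_intervals
          (ii2 0 s₁ le_rfl hs1 (le_trans hs12 hs2)) (ii2 s₁ s₂ hs1 hs12 hs2)
      have hkey := key s₁ s₂ (le_of_lt hc1) hs12 hs2
      have hrw : (∫ r in a..s₂, σ r ^ 2) / D * (γ * (1 + 4 * ε) - Lstar a)
          - (∫ r in a..s₁, σ r ^ 2) / D * (γ * (1 + 4 * ε) - Lstar a)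
          = (∫ r in s₁..s₂, σ r ^ 2) * cval := by
        rw [hcval_def, ← hIsplit]; ring
      linarith
end

section
/- Let p_j ∈ (0,1] for r+1 ≤ j ≤ K, and for a set V of size n let A_v = ∩_{j=r+1}^K A_{v,j} where the events A_{v,j} are independent over j for each fixed v with P(A_{v,j}) = p_j. Suppose for each pair v ≠ v' there is k = k(v,v') ∈ {r+1,…,K} such that A_{v,j} for j ∉ {k−1,k} and A_{v',j} for j ≥ k+1 are jointly independent. Then P(A_v ∩ A_{v'}) ≤ (∏_{j=r+1}^K p_j)² / (p_{k−1}·p_k²·∏_{j=r+1}^{k} p_{v',j}) ≤ P(A_v)P(A_{v'}) / (p_{k-1} p_k² ∏_{j=r+1}^{k} p_j). -/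
open MeasureTheory ProbabilityTheory

/-- Combinatorial core of the truncated second moment method: if `A_v = ∩_j A_{v,j}` and
`A_{v'} = ∩_j A_{v',j}` with `P(A_{v,j}) = P(A_{v',j}) = p_j`, the families are each
independent over `j`, and the events `A_{v,j}` for `j ∉ {k−1,k}` together with the events
`A_{v',j}` for `j ≥ k+1` are jointly independent, then
`P(A_v ∩ A_{v'}) ≤ (∏ p_j)² / (p_{k−1} p_k² ∏_{j≤k} p_j) ≤ P(A_v)P(A_{v'}) / (p_{k−1} p_k² ∏_{j≤k} p_j)`. -/
theorem stmt_17 {Ω : Type*} [MeasurableSpace Ω] (μ : Measure Ω) [IsProbabilityMeasure μ]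
    (r K k : ℕ) (hrK : r + 1 ≤ K) (hk : r + 1 ≤ k ∧ k ≤ K)
    (A B : ℕ → Set Ω)
    (hMA : ∀ j, MeasurableSet (A j)) (hMB : ∀ j, MeasurableSet (B j))
    (p : ℕ → ℝ) (hppos : ∀ j, 0 < p j ∧ p j ≤ 1)
    (hp : ∀ j ∈ Finset.Icc (r + 1) K, (μ (A j)).toReal = p j ∧ (μ (B j)).toReal = p j)
    (hIndepA : iIndepSet A μ) (hIndepB : iIndepSet B μ)
    (hJoint : iIndepSet
      (fun x : {j : ℕ // j ∈ Finset.Icc (r + 1) K ∧ j ≠ k - 1 ∧ j ≠ k} ⊕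
          {j : ℕ // j ∈ Finset.Icc (k + 1) K} =>
        Sum.elim (fun a => A a.1) (fun b => B b.1) x) μ) :
    (μ ((⋂ j ∈ Finset.Icc (r + 1) K, A j) ∩ ⋂ j ∈ Finset.Icc (r + 1) K, B j)).toReal
      ≤ (∏ j ∈ Finset.Icc (r + 1) K, p j) ^ 2 /
          (p (k - 1) * (p k) ^ 2 * ∏ j ∈ Finset.Icc (r + 1) k, p j) ∧
    (∏ j ∈ Finset.Icc (r + 1) K, p j) ^ 2 /
        (p (k - 1) * (p k) ^ 2 * ∏ j ∈ Finset.Icc (r + 1) k, p j)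
      ≤ (μ (⋂ j ∈ Finset.Icc (r + 1) K, A j)).toReal *
          (μ (⋂ j ∈ Finset.Icc (r + 1) K, B j)).toReal /
          (p (k - 1) * (p k) ^ 2 * ∏ j ∈ Finset.Icc (r + 1) k, p j) := by
  obtain ⟨hk1, hk2⟩ := hk
  set s : Finset ℕ := Finset.Icc (r + 1) K with hs
  set P : ℝ := ∏ j ∈ s, p j with hPdef
  set P1 : ℝ := ∏ j ∈ Finset.Icc (r + 1) k, p j with hP1def
  set P2 : ℝ := ∏ j ∈ Finset.Icc (k + 1) K, p j with hP2def
  set D : ℝ := p (k - 1) * (p k) ^ 2 * P1 with hDdef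
  have hPpos : 0 < P := Finset.prod_pos fun j _ => (hppos j).1
  have hP1pos : 0 < P1 := Finset.prod_pos fun j _ => (hppos j).1
  have hP2pos : 0 < P2 := Finset.prod_pos fun j _ => (hppos j).1
  have hDpos : 0 < D := by
    have := (hppos (k - 1)).1
    have := (hppos k).1
    positivity
  have hA : (μ (⋂ j ∈ s, A j)).toReal = P := by
    rw [hIndepA.meas_biInter, ENNReal.toReal_prod]
    exact Finset.prod_congr rfl fun j hj => (hp j hj).1
  have hB : (μ (⋂ j ∈ s, B j)).toReal = P := by
    rw [hIndepB.meas_biInter, ENNReal.toReal_prod]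
    exact Finset.prod_congr rfl fun j hj => (hp j hj).2
  have hP12 : P1 * P2 = P := by
    rw [hPdef, hP1def, hP2def, hs, Finset.Icc_add_one_left_eq_Ioc, Finset.Icc_add_one_left_eq_Ioc,
      Finset.Icc_add_one_left_eq_Ioc]
    exact Finset.prod_Ioc_consecutive p (by omega) hk2
  constructor
  · -- first inequality
    haveI : Fintype {j : ℕ // j ∈ Finset.Icc (r + 1) K ∧ j ≠ k - 1 ∧ j ≠ k} :=
      Fintype.subtype ((Finset.Icc (r + 1) K).filter fun j => j ≠ k - 1 ∧ j ≠ k)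
        (by intro x; simp [Finset.mem_filter])
    set Q : ℝ := ∏ j ∈ (Finset.Icc (r + 1) K).filter (fun j => j ≠ k - 1 ∧ j ≠ k), p j
      with hQdef
    have hQpos : 0 < Q := Finset.prod_pos fun j _ => (hppos j).1
    set g := (fun x : {j : ℕ // j ∈ Finset.Icc (r + 1) K ∧ j ≠ k - 1 ∧ j ≠ k} ⊕
          {j : ℕ // j ∈ Finset.Icc (k + 1) K} =>
        Sum.elim (fun a => A a.1) (fun b => B b.1) x) with hg
    have hmono : μ ((⋂ j ∈ s, A j) ∩ ⋂ j ∈ s, B j) ≤ μ (⋂ x, g x) := by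
      apply measure_mono
      intro ω hω
      rw [Set.mem_iInter]
      rintro (a | b)
      · exact Set.mem_iInter₂.1 hω.1 a.1 a.2.1
      · refine Set.mem_iInter₂.1 hω.2 b.1 ?_
        have hb := Finset.mem_Icc.mp b.2
        exact Finset.mem_Icc.mpr (by omega)
    have hmeas : μ (⋂ x, g x) = ∏ x, μ (g x) := by
      have h := hJoint.meas_biInter Finset.univ
      simpa using h
    have hval : (μ (⋂ x, g x)).toReal = Q * P2 := by
      rw [hmeas, ENNReal.toReal_prod, Fintype.prod_sum_type]
      congr 1
      · rw [hQdef, Finset.prod_subtype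
          (p := fun j => j ∈ Finset.Icc (r + 1) K ∧ j ≠ k - 1 ∧ j ≠ k)
          ((Finset.Icc (r + 1) K).filter fun j => j ≠ k - 1 ∧ j ≠ k)
          (fun x => by simp [Finset.mem_filter]) (fun j => p j)]
        exact Finset.prod_congr rfl fun a _ => (hp a.1 a.2.1).1
      · rw [hP2def, Finset.prod_subtype
          (p := fun j => j ∈ Finset.Icc (k + 1) K)
          (Finset.Icc (k + 1) K) (fun x => Iff.rfl) (fun j => p j)]
        refine Finset.prod_congr rfl fun b _ => (hp b.1 ?_).2
        have hb := Finset.mem_Icc.mp b.2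
        exact Finset.mem_Icc.mpr (by omega)
    have hQT : Q * (∏ j ∈ (Finset.Icc (r + 1) K).filter
        (fun j => ¬(j ≠ k - 1 ∧ j ≠ k)), p j) = P :=
      Finset.prod_filter_mul_prod_filter_not _ _ p
    set pT : ℝ := ∏ j ∈ (Finset.Icc (r + 1) K).filter
        (fun j => ¬(j ≠ k - 1 ∧ j ≠ k)), p j with hpTdef
    have hpT : p (k - 1) * (p k) ^ 2 ≤ pT := by
      by_cases hcase : r + 1 < k
      · have hT : (Finset.Icc (r + 1) K).filter (fun j => ¬(j ≠ k - 1 ∧ j ≠ k))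
            = {k - 1, k} := by
          ext j
          simp only [Finset.mem_filter, Finset.mem_Icc, Finset.mem_insert,
            Finset.mem_singleton, not_and_or, not_not]
          omega
        rw [hpTdef, hT, Finset.prod_pair (by omega)]
        calc p (k - 1) * p k ^ 2 = (p (k - 1) * p k) * p k := by ring
          _ ≤ (p (k - 1) * p k) * 1 := mul_le_mul_of_nonneg_left (hppos k).2
              (le_of_lt (mul_pos (hppos (k - 1)).1 (hppos k).1))
          _ = p (k - 1) * p k := mul_one _
      · have hT : (Finset.Icc (r + 1) K).filter (fun j => ¬(j ≠ k - 1 ∧ j ≠ k))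
            = {k} := by
          ext j
          simp only [Finset.mem_filter, Finset.mem_Icc, Finset.mem_singleton,
            not_and_or, not_not]
          omega
        rw [hpTdef, hT, Finset.prod_singleton]
        have h1 : p (k - 1) * p k ≤ 1 :=
          mul_le_one₀ (hppos (k - 1)).2 (le_of_lt (hppos k).1) (hppos k).2
        calc p (k - 1) * p k ^ 2 = (p (k - 1) * p k) * p k := by ring
          _ ≤ 1 * p k := mul_le_mul_of_nonneg_right h1 (le_of_lt (hppos k).1)
          _ = p k := one_mul _
    have hfinal : Q * P2 ≤ P ^ 2 / D := by
      rw [le_div_iff₀ hDpos]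
      have e1 : Q * P2 * D = (Q * P) * (p (k - 1) * (p k) ^ 2) := by
        rw [hDdef, ← hP12]; ring
      have e2 : P ^ 2 = (Q * P) * pT := by
        rw [sq]; nth_rewrite 1 [← hQT]; ring
      rw [e1, e2]
      exact mul_le_mul_of_nonneg_left hpT (by positivity)
    calc (μ ((⋂ j ∈ s, A j) ∩ ⋂ j ∈ s, B j)).toReal
        ≤ (μ (⋂ x, g x)).toReal :=
          ENNReal.toReal_mono (measure_ne_top μ _) hmono
      _ = Q * P2 := hval
      _ ≤ P ^ 2 / D := hfinal
  · rw [hA, hB, sq]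
end
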